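/- arXiv:2504.17193 — 7 statements merged into one kernel-verified Lean document; each statement's English description precedes it below -/
import Mathlib

section
/- Let f : ℝ^d → ℝ be twice differentiable such that its Hessian (the derivative of the gradient map ∇f) is L-Lipschitz continuous with respect to the operator norm, for some L > 0. Then for any finitely many points x₁,…,xₙ ∈ ℝ^d and nonnegative weights λ₁,…,λₙ with ∑ᵢ λᵢ = 1, one has ‖∇f(∑ᵢ λᵢ xᵢ) − ∑ᵢ λᵢ ∇f(xᵢ)‖ ≤ (L/2) · ∑_{1 ≤ i < j ≤ n} λᵢ λⱼ ‖xᵢ − xⱼ‖². -/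
open RealInnerProductSpace intervalIntegral

section Aux

variable {E : Type*} [NormedAddCommGroup E] [NormedSpace ℝ E] [CompleteSpace E]

theorem taylor_aux (g : E → E) (L : ℝ) (hL : 0 < L)
    (hg : Differentiable ℝ g)
    (hlip : ∀ x y : E, ‖fderiv ℝ g x - fderiv ℝ g y‖ ≤ L * ‖x - y‖)
    (x y : E) :
    ‖g y - g x - fderiv ℝ g x (y - x)‖ ≤ L / 2 * ‖y - x‖ ^ 2 := by
  set v := y - x with hv
  set φ : ℝ → E := fun t => g (x + t • v) - t • (fderiv ℝ g x v) with hφ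
  have hcont : Continuous (fun z => fderiv ℝ g z) := by
    apply LipschitzWith.continuous (K := Real.toNNReal L)
    intro a b
    rw [edist_dist, edist_dist, dist_eq_norm, dist_eq_norm]
    calc _ ≤ ENNReal.ofReal (L * ‖a - b‖) := ENNReal.ofReal_le_ofReal (hlip a b)
    _ ≤ _ := by
        rw [ENNReal.ofReal_mul hL.le]
        gcongr
        simp [ENNReal.coe_nnreal_eq, Real.coe_toNNReal', hL.le]
  have hderiv : ∀ t : ℝ, HasDerivAt φ (fderiv ℝ g (x + t • v) v - fderiv ℝ g x v) t := by
    intro t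
    have h1 : HasDerivAt (fun t : ℝ => x + t • v) v t := by
      simpa using ((hasDerivAt_id t).smul_const v).const_add x
    have h2 : HasDerivAt (fun t : ℝ => g (x + t • v)) (fderiv ℝ g (x + t • v) v) t := by
      exact (hg (x + t • v)).hasFDerivAt.comp_hasDerivAt t h1
    have h3 := h2.sub ((hasDerivAt_id t).smul_const (fderiv ℝ g x v))
    simp only [one_smul] at h3
    exact h3
  have hcont' : Continuous (fun t : ℝ => fderiv ℝ g (x + t • v) v - fderiv ℝ g x v) := by
    fun_prop
  have hint : IntervalIntegrable (fun t : ℝ => fderiv ℝ g (x + t • v) v - fderiv ℝ g x v)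
      MeasureTheory.volume 0 1 := hcont'.intervalIntegrable 0 1
  have hFTC := integral_eq_sub_of_hasDerivAt (fun t _ => hderiv t) hint
  have hval : φ 1 - φ 0 = g y - g x - fderiv ℝ g x v := by
    simp only [hφ, hv]
    simp
    abel
  rw [hval] at hFTC
  rw [← hFTC]
  have hbound : ∀ t ∈ Set.Ioc (0:ℝ) 1,
      ‖fderiv ℝ g (x + t • v) v - fderiv ℝ g x v‖ ≤ (L * ‖v‖ ^ 2) * t := by
    intro t ht
    have : fderiv ℝ g (x + t • v) v - fderiv ℝ g x v
        = (fderiv ℝ g (x + t • v) - fderiv ℝ g x) v := by simp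
    rw [this]
    calc ‖(fderiv ℝ g (x + t • v) - fderiv ℝ g x) v‖
        ≤ ‖fderiv ℝ g (x + t • v) - fderiv ℝ g x‖ * ‖v‖ :=
          ContinuousLinearMap.le_opNorm _ _
      _ ≤ (L * ‖x + t • v - x‖) * ‖v‖ := by gcongr; exact hlip _ _
      _ = (L * ‖v‖ ^ 2) * t := by
          have : x + t • v - x = t • v := by abel
          rw [this, norm_smul, Real.norm_eq_abs, abs_of_pos ht.1]
          ring
  calc ‖∫ t in (0:ℝ)..1, (fderiv ℝ g (x + t • v) v - fderiv ℝ g x v)‖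
      ≤ |∫ t in (0:ℝ)..1, (L * ‖v‖ ^ 2) * t| := by
        refine (norm_integral_le_of_norm_le zero_le_one ?_ ?_).trans (le_abs_self _)
        · exact MeasureTheory.ae_of_all _ fun t ht => hbound t ht
        · exact (continuous_const.mul continuous_id).intervalIntegrable 0 1
    _ = L / 2 * ‖v‖ ^ 2 := by
        rw [integral_const_mul, integral_id, abs_of_nonneg (by positivity)]
        ring

end Aux

section Aux2

variable {E : Type*} [NormedAddCommGroup E] [InnerProductSpace ℝ E]

theorem var_aux (n : ℕ) (x : Fin n → E) (lam : Fin n → ℝ) (hsum : ∑ i, lam i = 1) :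
    ∑ i, lam i * ‖x i - (∑ j, lam j • x j)‖ ^ 2 =
      ∑ i, ∑ j, if i < j then lam i * lam j * ‖x i - x j‖ ^ 2 else 0 := by
  set m : E := ∑ j, lam j • x j with hm
  have hinner_m : ∀ i, ⟪x i, m⟫ = ∑ j, lam j * ⟪x i, x j⟫ := by
    intro i
    rw [hm, inner_sum]
    exact Finset.sum_congr rfl fun j _ => real_inner_smul_right _ _ _
  have hmm : ‖m‖ ^ 2 = ∑ i, lam i * ⟪x i, m⟫ := by
    rw [← real_inner_self_eq_norm_sq, hm, sum_inner]
    exact Finset.sum_congr rfl fun i _ => real_inner_smul_left _ _ _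
  have hLHS : ∑ i, lam i * ‖x i - m‖ ^ 2 = (∑ i, lam i * ‖x i‖ ^ 2) - ‖m‖ ^ 2 := by
    have : ∀ i, lam i * ‖x i - m‖ ^ 2
        = lam i * ‖x i‖ ^ 2 - 2 * (lam i * ⟪x i, m⟫) + lam i * ‖m‖ ^ 2 := by
      intro i
      rw [norm_sub_sq_real]
      ring
    rw [Finset.sum_congr rfl fun i _ => this i, Finset.sum_add_distrib,
      Finset.sum_sub_distrib, ← Finset.mul_sum, ← Finset.sum_mul, hsum, ← hmm]
    ring
  -- symmetric full sum
  set T : Fin n → Fin n → ℝ := fun i j => lam i * lam j * ‖x i - x j‖ ^ 2 with hT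
  have hTsymm : ∀ i j, T i j = T j i := by
    intro i j; simp only [hT]; rw [norm_sub_rev]; ring
  have hS : ∑ i, ∑ j, T i j = 2 * ((∑ i, lam i * ‖x i‖ ^ 2) - ‖m‖ ^ 2) := by
    have hexp : ∀ i j, T i j = lam i * lam j * ‖x i‖ ^ 2 + lam i * lam j * ‖x j‖ ^ 2
        - 2 * (lam i * (lam j * ⟪x i, x j⟫)) := by
      intro i j
      simp only [hT]
      rw [norm_sub_sq_real]
      ring
    have h1 : ∀ i, ∑ j, lam i * lam j * ‖x i‖ ^ 2 = lam i * ‖x i‖ ^ 2 := by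
      intro i
      rw [show (∑ j, lam i * lam j * ‖x i‖ ^ 2) = (lam i * ‖x i‖ ^ 2) * ∑ j, lam j from by
        rw [Finset.mul_sum]; exact Finset.sum_congr rfl fun j _ => by ring, hsum, mul_one]
    have h2 : ∀ i, ∑ j, lam i * lam j * ‖x j‖ ^ 2 = lam i * ∑ j, lam j * ‖x j‖ ^ 2 := by
      intro i
      rw [Finset.mul_sum]; exact Finset.sum_congr rfl fun j _ => by ring
    have h3 : ∀ i, ∑ j, 2 * (lam i * (lam j * ⟪x i, x j⟫)) = 2 * (lam i * ⟪x i, m⟫) := by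
      intro i
      rw [hinner_m, Finset.mul_sum, Finset.mul_sum]
    calc ∑ i, ∑ j, T i j
        = ∑ i, ((lam i * ‖x i‖ ^ 2) + lam i * (∑ j, lam j * ‖x j‖ ^ 2)
            - 2 * (lam i * ⟪x i, m⟫)) := by
          refine Finset.sum_congr rfl fun i _ => ?_
          rw [Finset.sum_congr rfl fun j _ => hexp i j, Finset.sum_sub_distrib,
            Finset.sum_add_distrib, h1, h2, h3]
      _ = 2 * ((∑ i, lam i * ‖x i‖ ^ 2) - ‖m‖ ^ 2) := by
          rw [Finset.sum_sub_distrib, Finset.sum_add_distrib, ← Finset.sum_mul, hsum,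
            ← Finset.mul_sum, hmm]
          ring
  have hhalf : ∑ i, ∑ j, T i j = 2 * ∑ i, ∑ j, if i < j then T i j else 0 := by
    have key : ∀ i j : Fin n, T i j
        = (if i < j then T i j else 0) + (if j < i then T i j else 0) := by
      intro i j
      rcases lt_trichotomy i j with h | h | h
      · simp [h, not_lt_of_gt h]
      · subst h; simp [hT, lt_irrefl]
      · simp [h, not_lt_of_gt h]
    calc ∑ i, ∑ j, T i j
        = (∑ i, ∑ j, if i < j then T i j else 0)
          + ∑ i, ∑ j, if j < i then T i j else 0 := by
          simp_rw [← Finset.sum_add_distrib]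
          exact Finset.sum_congr rfl fun i _ => Finset.sum_congr rfl fun j _ => key i j
      _ = 2 * ∑ i, ∑ j, if i < j then T i j else 0 := by
          have : (∑ i, ∑ j, if j < i then T i j else 0)
              = ∑ i, ∑ j, if i < j then T i j else 0 := by
            rw [Finset.sum_comm]
            exact Finset.sum_congr rfl fun i _ => Finset.sum_congr rfl fun j _ => by
              rw [hTsymm]
          rw [this]; ring
  rw [hLHS]
  simp only [hT] at hhalf hS
  linarith

end Aux2

/-- **Hessian-free inequality.** If `f : ℝ^d → ℝ` is twice differentiable with
`L`-Lipschitz Hessian (the Fréchet derivative of the gradient map, in operator norm),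
then the gradients satisfy the Jensen-type inequality. -/
theorem hessian_free_inequality (d : ℕ) (f : EuclideanSpace ℝ (Fin d) → ℝ) (L : ℝ) (hL : 0 < L)
    (hf : Differentiable ℝ f)
    (hf' : Differentiable ℝ (gradient f))
    (hlip : ∀ x y : EuclideanSpace ℝ (Fin d),
      ‖fderiv ℝ (gradient f) x - fderiv ℝ (gradient f) y‖ ≤ L * ‖x - y‖)
    (n : ℕ) (x : Fin n → EuclideanSpace ℝ (Fin d)) (lam : Fin n → ℝ)
    (hlam : ∀ i, 0 ≤ lam i) (hsum : ∑ i, lam i = 1) :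
    ‖gradient f (∑ i, lam i • x i) - ∑ i, lam i • gradient f (x i)‖ ≤
      L / 2 * ∑ i, ∑ j, if i < j then lam i * lam j * ‖x i - x j‖ ^ 2 else 0 := by
  set g := gradient f with hg
  set m : EuclideanSpace ℝ (Fin d) := ∑ i, lam i • x i with hm
  set H := fderiv ℝ g m with hH
  have hzero : ∑ i, lam i • (x i - m) = 0 := by
    simp_rw [smul_sub]
    rw [Finset.sum_sub_distrib, ← Finset.sum_smul, hsum, one_smul, ← hm, sub_self]
  have hz2 : ∑ i, lam i • H (x i - m) = 0 := by
    have h1 : ∀ i ∈ Finset.univ, lam i • H (x i - m) = H (lam i • (x i - m)) :=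
      fun i _ => (map_smul H _ _).symm
    rw [Finset.sum_congr rfl h1, ← map_sum, hzero, map_zero]
  have key : g m - ∑ i, lam i • g (x i)
      = -∑ i, lam i • (g (x i) - g m - H (x i - m)) := by
    simp_rw [smul_sub]
    rw [Finset.sum_sub_distrib, Finset.sum_sub_distrib, ← Finset.sum_smul, hsum, one_smul]
    rw [hz2]
    abel
  calc ‖g m - ∑ i, lam i • g (x i)‖
      = ‖∑ i, lam i • (g (x i) - g m - H (x i - m))‖ := by rw [key, norm_neg]
    _ ≤ ∑ i, ‖lam i • (g (x i) - g m - H (x i - m))‖ := norm_sum_le _ _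
    _ ≤ ∑ i, lam i * (L / 2 * ‖x i - m‖ ^ 2) := by
        refine Finset.sum_le_sum fun i _ => ?_
        rw [norm_smul, Real.norm_eq_abs, abs_of_nonneg (hlam i)]
        have := taylor_aux g L hL hf' hlip m (x i)
        exact mul_le_mul_of_nonneg_left this (hlam i)
    _ = L / 2 * ∑ i, lam i * ‖x i - m‖ ^ 2 := by
        rw [Finset.mul_sum]
        exact Finset.sum_congr rfl fun i _ => by ring
    _ = L / 2 * ∑ i, ∑ j, if i < j then lam i * lam j * ‖x i - x j‖ ^ 2 else 0 := by
        rw [var_aux n x lam hsum]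
end

section
/- Let X be a real Hilbert space and Y a real Banach space that is reflexive (the canonical embedding of Y into its double dual Y** is surjective). Let F : X → Y be continuous and let L > 0. Then the following are equivalent: (i) F is Fréchet differentiable on X and its derivative F′ : X → B(X,Y) is L-Lipschitz continuous in the operator norm; (ii) for any finitely many points x₁,…,xₙ ∈ X and nonnegative weights λ₁,…,λₙ with ∑ᵢ λᵢ = 1, one has ‖F(∑ᵢ λᵢ xᵢ) − ∑ᵢ λᵢ F(xᵢ)‖ ≤ (L/2) · ∑_{1 ≤ i < j ≤ n} λᵢ λⱼ ‖xᵢ − xⱼ‖². -/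
open Filter Topology Finset Set
open scoped RealInnerProductSpace

set_option maxHeartbeats 1000000



/-- Co-coercivity based sharp Lipschitz bound for "gradients" of a function whose
two-sided quadratic Taylor error is bounded by `K/2 ‖z-x‖²`. -/
lemma aux_grad_lipschitz {X : Type*} [NormedAddCommGroup X] [InnerProductSpace ℝ X]
    (g : X → ℝ) (a : X → X) (K : ℝ) (hK : 0 < K)
    (hub : ∀ x z : X, |g z - g x - ⟪a x, z - x⟫| ≤ K / 2 * ‖z - x‖ ^ 2) :
    ∀ x y : X, ‖a x - a y‖ ≤ K * ‖x - y‖ := by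
  -- first-order inequalities for the "convexified" functions
  have expand : ∀ x w : X, ‖x + w‖ ^ 2 = ‖x‖ ^ 2 + 2 * ⟪x, w⟫ + ‖w‖ ^ 2 := by
    intro x w
    have := @norm_add_sq_real X _ _ x w
    linarith
  -- `key φ b` : for `φ z = g z + K/2 ‖z‖²`-type function with gradient `b`,
  -- we have the strengthened first-order inequality.
  have main : ∀ (g' : X → ℝ) (a' : X → X),
      (∀ x z : X, |g' z - g' x - ⟪a' x, z - x⟫| ≤ K / 2 * ‖z - x‖ ^ 2) →
      ∀ x z : X, (1 / (2 * K)) * ‖(a' z + K • z) - (a' x + K • x)‖ ^ 2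
        ≤ ⟪(a' z + K • z) - (a' x + K • x), z - x⟫ := by
    intro g' a' hub'
    set φ : X → ℝ := fun z => g' z + K / 2 * ‖z‖ ^ 2 with hφ
    set b : X → X := fun x => a' x + K • x with hb
    have inner_b : ∀ x w : X, ⟪b x, w⟫ = ⟪a' x, w⟫ + K * ⟪x, w⟫ := by
      intro x w
      simp [hb, inner_add_left, real_inner_smul_left]
    have normsq : ∀ x z : X, ‖z‖ ^ 2 = ‖x‖ ^ 2 + 2 * ⟪x, z - x⟫ + ‖z - x‖ ^ 2 := by
      intro x z
      have := expand x (z - x)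
      simpa using this
    have claim1 : ∀ x z : X, φ x + ⟪b x, z - x⟫ ≤ φ z := by
      intro x z
      have h1 := abs_le.1 (hub' x z)
      have h2 := normsq x z
      have h3 := inner_b x (z - x)
      simp only [hφ]
      nlinarith [h1.1]
    have claim2 : ∀ x z : X, φ z ≤ φ x + ⟪b x, z - x⟫ + K * ‖z - x‖ ^ 2 := by
      intro x z
      have h1 := abs_le.1 (hub' x z)
      have h2 := normsq x z
      have h3 := inner_b x (z - x)
      simp only [hφ]
      nlinarith [h1.2]
    -- key inequality
    have key : ∀ x z : X, φ x + ⟪b x, z - x⟫ + (1 / (4 * K)) * ‖b z - b x‖ ^ 2 ≤ φ z := by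
      intro x z
      set u : X := b z - b x with hu
      set w : X := z + (-(1 / (2 * K))) • u with hw
      have hwz : w - z = (-(1 / (2 * K))) • u := by simp [hw]
      have h2 := claim2 z w
      have h1 := claim1 x w
      rw [hwz] at h2
      have e1 : ⟪b z, (-(1 / (2 * K))) • u⟫ = -(1 / (2 * K)) * ⟪b z, u⟫ :=
        real_inner_smul_right _ _ _
      have e2 : ‖(-(1 / (2 * K))) • u‖ ^ 2 = (1 / (2 * K)) ^ 2 * ‖u‖ ^ 2 := by
        rw [norm_smul, Real.norm_eq_abs, abs_neg, abs_of_pos (by positivity : (0:ℝ) < 1/(2*K)),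
          mul_pow]
      have e3 : ⟪b x, w - x⟫ = ⟪b x, z - x⟫ - (1 / (2 * K)) * ⟪b x, u⟫ := by
        have : w - x = (z - x) + (-(1 / (2 * K))) • u := by
          simp [hw]; abel
        rw [this, inner_add_right, real_inner_smul_right]; ring
      have e4 : ⟪b z, u⟫ - ⟪b x, u⟫ = ‖u‖ ^ 2 := by
        rw [← inner_sub_left, ← hu, real_inner_self_eq_norm_sq]
      rw [e1, e2] at h2
      rw [e3] at h1
      have hK4 : (0:ℝ) < 4 * K := by linarith
      have hfield : (1 / (2 * K)) * ‖u‖ ^ 2 - K * (1 / (2 * K)) ^ 2 * ‖u‖ ^ 2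
          = (1 / (4 * K)) * ‖u‖ ^ 2 := by
        field_simp
        ring
      have e4' : (1 / (2 * K)) * ⟪b z, u⟫ - (1 / (2 * K)) * ⟪b x, u⟫
          = (1 / (2 * K)) * ‖u‖ ^ 2 := by
        rw [← mul_sub, e4]
      linarith [h1, h2, e4', hfield]
    intro x z
    have k1 := key x z
    have k2 := key z x
    have e5 : ⟪b z - b x, z - x⟫ = ⟪b z, z - x⟫ - ⟪b x, z - x⟫ := inner_sub_left _ _ _
    have e6 : ⟪b z, x - z⟫ = -⟪b z, z - x⟫ := by
      rw [← inner_neg_right]; congr 1; abel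
    have e7 : ‖b x - b z‖ = ‖b z - b x‖ := norm_sub_rev _ _
    rw [e6] at k2
    rw [e7] at k2
    rw [e5]
    have hK4 : (0:ℝ) < 4 * K := by linarith
    have : (1 / (2 * K)) = (1 / (4 * K)) + (1 / (4 * K)) := by field_simp; ring
    nlinarith [k1, k2]
  intro x y
  have coco1 := main g a hub y x
  have hub2 : ∀ x z : X, |(fun z => -g z) z - (fun z => -g z) x - ⟪(fun w => -a w) x, z - x⟫|
      ≤ K / 2 * ‖z - x‖ ^ 2 := by
    intro x z
    have := hub x z
    rw [inner_neg_left]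
    rw [← abs_neg]
    convert this using 2
    ring
  have coco2 := main (fun z => -g z) (fun w => -a w) hub2 y x
  -- unpack
  set d : X := x - y with hd
  set u : X := a x - a y with hu
  have r1 : (a x + K • x) - (a y + K • y) = u + K • d := by
    simp [hu, hd, smul_sub]; abel
  have r2 : (-a x + K • x) - (-a y + K • y) = K • d - u := by
    simp [hu, hd, smul_sub]; abel
  rw [r1] at coco1
  rw [r2] at coco2
  have i1 : ⟪u + K • d, d⟫ = ⟪u, d⟫ + K * ⟪d, d⟫ := by
    rw [inner_add_left, real_inner_smul_left]
  have i2 : ⟪K • d - u, d⟫ = K * ⟪d, d⟫ - ⟪u, d⟫ := by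
    rw [inner_sub_left, real_inner_smul_left]
  have n1 : ‖u + K • d‖ ^ 2 = ‖u‖ ^ 2 + 2 * (K * ⟪u, d⟫) + K ^ 2 * ‖d‖ ^ 2 := by
    rw [expand u (K • d), real_inner_smul_right, norm_smul, Real.norm_eq_abs, abs_of_pos hK]
    ring
  have n2 : ‖K • d - u‖ ^ 2 = K ^ 2 * ‖d‖ ^ 2 - 2 * (K * ⟪u, d⟫) + ‖u‖ ^ 2 := by
    have : K • d - u = K • d + (-u) := by abel
    rw [this, expand (K • d) (-u), real_inner_smul_left, inner_neg_right, norm_smul,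
      Real.norm_eq_abs, norm_neg, abs_of_pos hK]
    have : ⟪d, u⟫ = ⟪u, d⟫ := real_inner_comm u d
    rw [this]
    ring
  have idd : ⟪d, d⟫ = ‖d‖ ^ 2 := real_inner_self_eq_norm_sq d
  rw [i1, idd, n1] at coco1
  rw [i2, idd, n2] at coco2
  have husq : ‖u‖ ^ 2 ≤ K ^ 2 * ‖d‖ ^ 2 := by
    have h2K : (0:ℝ) < 2 * K := by linarith
    have hmul := mul_le_mul_of_nonneg_left (add_le_add coco1 coco2) h2K.le
    have hid : (2 * K) * (1 / (2 * K) * (‖u‖ ^ 2 + 2 * (K * ⟪u, d⟫) + K ^ 2 * ‖d‖ ^ 2)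
        + 1 / (2 * K) * (K ^ 2 * ‖d‖ ^ 2 - 2 * (K * ⟪u, d⟫) + ‖u‖ ^ 2))
        = 2 * ‖u‖ ^ 2 + 2 * (K ^ 2 * ‖d‖ ^ 2) := by
      field_simp
      ring
    nlinarith [hmul, hid]
  have hfin : ‖u‖ ≤ K * ‖d‖ := by
    rw [← pow_le_pow_iff_left₀ (norm_nonneg u) (by positivity : (0:ℝ) ≤ K * ‖d‖) (by norm_num : 2 ≠ 0)]
    calc ‖u‖ ^ 2 ≤ K ^ 2 * ‖d‖ ^ 2 := husq
    _ = (K * ‖d‖) ^ 2 := by ring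
  simpa [hu, hd] using hfin



lemma aux_half_sum {n : ℕ} (a : Fin n → Fin n → ℝ) (hsymm : ∀ i j, a i j = a j i)
    (hdiag : ∀ i, a i i = 0) :
    ∑ i, ∑ j, (if i < j then a i j else 0) = (∑ i, ∑ j, a i j) / 2 := by
  have tri : ∀ i j : Fin n, a i j = (if i < j then a i j else 0)
      + (if j < i then a i j else 0) := by
    intro i j
    rcases lt_trichotomy i j with h | h | h
    · simp [h, not_lt_of_gt h]
    · simp [h, hdiag, lt_irrefl]
    · simp [h, not_lt_of_gt h]
  have swap : ∑ i, ∑ j, (if j < i then a i j else 0)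
      = ∑ i, ∑ j, (if i < j then a i j else 0) := by
    rw [Finset.sum_comm]
    refine Finset.sum_congr rfl fun j _ => Finset.sum_congr rfl fun i _ => ?_
    rw [hsymm]
  have : ∑ i, ∑ j, a i j = ∑ i, ∑ j, ((if i < j then a i j else 0)
      + (if j < i then a i j else 0)) := by
    refine Finset.sum_congr rfl fun i _ => Finset.sum_congr rfl fun j _ => tri i j
  rw [this]
  simp only [Finset.sum_add_distrib]
  rw [swap]
  ring

lemma aux_variance {X : Type*} [NormedAddCommGroup X] [InnerProductSpace ℝ X]
    {n : ℕ} (x : Fin n → X) (lam : Fin n → ℝ) (hsum : ∑ i, lam i = 1) :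
    ∑ i, ∑ j, (if i < j then lam i * lam j * ‖x i - x j‖ ^ 2 else 0)
      = ∑ i, lam i * ‖x i - ∑ j, lam j • x j‖ ^ 2 := by
  set z : X := ∑ j, lam j • x j with hz
  set d : Fin n → X := fun i => x i - z with hd
  have hdsum : ∑ i, lam i • d i = 0 := by
    simp only [hd, smul_sub, Finset.sum_sub_distrib, ← Finset.sum_smul, hsum, one_smul]
    simp [hz]
  have hdiff : ∀ i j, x i - x j = d i - d j := by intro i j; simp [hd]
  have key : ∀ i j : Fin n, lam i * lam j * ‖x i - x j‖ ^ 2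
      = lam i * lam j * ‖d i‖ ^ 2 + lam i * lam j * ‖d j‖ ^ 2
        - 2 * ⟪lam i • d i, lam j • d j⟫ := by
    intro i j
    rw [hdiff i j, real_inner_smul_left, real_inner_smul_right]
    have : ‖d i - d j‖ ^ 2 = ‖d i‖ ^ 2 - 2 * ⟪d i, d j⟫ + ‖d j‖ ^ 2 := by
      have := @norm_sub_sq_real X _ _ (d i) (d j)
      linarith
    rw [this]
    ring
  have expand : ∑ i, ∑ j, lam i * lam j * ‖x i - x j‖ ^ 2
      = 2 * ∑ i, lam i * ‖d i‖ ^ 2 := by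
    have h1 : ∑ i, ∑ j, (lam i * lam j * ‖d i‖ ^ 2 + lam i * lam j * ‖d j‖ ^ 2
        - 2 * ⟪lam i • d i, lam j • d j⟫)
        = (∑ i, ∑ j, lam i * lam j * ‖d i‖ ^ 2) + (∑ i, ∑ j, lam i * lam j * ‖d j‖ ^ 2)
          - 2 * ∑ i, ∑ j, ⟪lam i • d i, lam j • d j⟫ := by
      simp only [Finset.sum_sub_distrib, Finset.sum_add_distrib, Finset.mul_sum]
    have h2 : ∑ i, ∑ j, lam i * lam j * ‖d i‖ ^ 2 = ∑ i, lam i * ‖d i‖ ^ 2 := by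
      refine Finset.sum_congr rfl fun i _ => ?_
      have : ∑ j, lam i * lam j = lam i := by rw [← Finset.mul_sum, hsum, mul_one]
      calc ∑ j, lam i * lam j * ‖d i‖ ^ 2 = (∑ j, lam i * lam j) * ‖d i‖ ^ 2 := by
            rw [Finset.sum_mul]
        _ = lam i * ‖d i‖ ^ 2 := by rw [this]
    have h3 : ∑ i, ∑ j, lam i * lam j * ‖d j‖ ^ 2 = ∑ j, lam j * ‖d j‖ ^ 2 := by
      rw [Finset.sum_comm]
      refine Finset.sum_congr rfl fun j _ => ?_
      calc ∑ i, lam i * lam j * ‖d j‖ ^ 2 = (∑ i, lam i) * (lam j * ‖d j‖ ^ 2) := by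
            rw [Finset.sum_mul]; refine Finset.sum_congr rfl fun i _ => by ring
        _ = lam j * ‖d j‖ ^ 2 := by rw [hsum, one_mul]
    have h4 : ∑ i, ∑ j, ⟪lam i • d i, lam j • d j⟫ = (0:ℝ) := by
      have : ∀ i, ∑ j, ⟪lam i • d i, lam j • d j⟫ = ⟪lam i • d i, ∑ j, lam j • d j⟫ := by
        intro i
        rw [inner_sum]
      rw [Finset.sum_congr rfl fun i _ => this i]
      simp only [hdsum, inner_zero_right, Finset.sum_const_zero]
    calc ∑ i, ∑ j, lam i * lam j * ‖x i - x j‖ ^ 2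
        = ∑ i, ∑ j, (lam i * lam j * ‖d i‖ ^ 2 + lam i * lam j * ‖d j‖ ^ 2
          - 2 * ⟪lam i • d i, lam j • d j⟫) := by
          refine Finset.sum_congr rfl fun i _ => Finset.sum_congr rfl fun j _ => key i j
      _ = 2 * ∑ i, lam i * ‖d i‖ ^ 2 := by rw [h1, h2, h3, h4]; ring
  rw [aux_half_sum (fun i j => lam i * lam j * ‖x i - x j‖ ^ 2)
      (fun i j => by rw [norm_sub_rev]; ring) (fun i => by simp), expand]
  ring



/-- Quadratic Taylor estimate for a function with `L`-Lipschitz Fréchet derivative. -/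
lemma aux_taylor {X : Type*} [NormedAddCommGroup X] [NormedSpace ℝ X]
    {Y : Type*} [NormedAddCommGroup Y] [NormedSpace ℝ Y]
    {F : X → Y} (hdiff : Differentiable ℝ F) {L : ℝ} (hL : 0 ≤ L)
    (hLip : ∀ x y : X, ‖fderiv ℝ F x - fderiv ℝ F y‖ ≤ L * ‖x - y‖)
    (x y : X) : ‖F y - F x - fderiv ℝ F x (y - x)‖ ≤ L / 2 * ‖y - x‖ ^ 2 := by
  set c : X := y - x with hc
  set f : ℝ → Y := fun t => F (x + t • c) - F x - t • (fderiv ℝ F x c) with hf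
  set f' : ℝ → Y := fun t => fderiv ℝ F (x + t • c) c - fderiv ℝ F x c with hf'
  have hderiv : ∀ t : ℝ, HasDerivAt f (f' t) t := by
    intro t
    have hg : HasDerivAt (fun t : ℝ => x + t • c) c t := by
      simpa using ((hasDerivAt_id t).smul_const c).const_add x
    have h1 : HasDerivAt (fun t : ℝ => F (x + t • c)) (fderiv ℝ F (x + t • c) c) t :=
      (hdiff (x + t • c)).hasFDerivAt.comp_hasDerivAt t hg
    have h2 : HasDerivAt (fun t : ℝ => t • (fderiv ℝ F x c)) (fderiv ℝ F x c) t := by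
      simpa using (hasDerivAt_id t).smul_const (fderiv ℝ F x c)
    exact (h1.sub_const (F x)).sub h2
  set B : ℝ → ℝ := fun t => L / 2 * ‖c‖ ^ 2 * t ^ 2 with hB
  set B' : ℝ → ℝ := fun t => L * ‖c‖ ^ 2 * t with hB'
  have hBderiv : ∀ t : ℝ, HasDerivAt B (B' t) t := by
    intro t
    have := (hasDerivAt_pow 2 t).const_mul (L / 2 * ‖c‖ ^ 2)
    simpa [hB, hB'] using this.congr_deriv (by push_cast; ring)
  have bound : ∀ t ∈ Ico (0:ℝ) 1, ‖f' t‖ ≤ B' t := by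
    intro t ht
    have h1 : ‖f' t‖ ≤ ‖fderiv ℝ F (x + t • c) - fderiv ℝ F x‖ * ‖c‖ := by
      have : f' t = (fderiv ℝ F (x + t • c) - fderiv ℝ F x) c := by
        simp [hf']
      rw [this]
      exact ContinuousLinearMap.le_opNorm _ _
    have h2 : ‖fderiv ℝ F (x + t • c) - fderiv ℝ F x‖ ≤ L * (t * ‖c‖) := by
      have := hLip (x + t • c) x
      simpa [norm_smul, abs_of_nonneg ht.1] using this
    calc ‖f' t‖ ≤ L * (t * ‖c‖) * ‖c‖ :=
          h1.trans (mul_le_mul_of_nonneg_right h2 (norm_nonneg c))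
      _ = B' t := by simp [hB']; ring
  have h01 : (1:ℝ) ∈ Icc (0:ℝ) 1 := by norm_num
  have := image_norm_le_of_norm_deriv_right_le_deriv_boundary
    (f := f) (f' := f') (a := 0) (b := 1)
    (fun t _ => (hderiv t).continuousAt.continuousWithinAt)
    (fun t _ => (hderiv t).hasDerivWithinAt)
    (by simp [hf, hB]) hBderiv bound h01
  have hf1 : f 1 = F y - F x - fderiv ℝ F x (y - x) := by
    simp [hf, hc]
  have hB1 : B 1 = L / 2 * ‖y - x‖ ^ 2 := by simp [hB, hc]
  rw [hf1, hB1] at this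
  exact this


lemma aux_forward {X : Type*} [NormedAddCommGroup X] [InnerProductSpace ℝ X]
    {Y : Type*} [NormedAddCommGroup Y] [NormedSpace ℝ Y]
    {F : X → Y} (hdiff : Differentiable ℝ F) {L : ℝ} (hL : 0 ≤ L)
    (hLip : ∀ x y : X, ‖fderiv ℝ F x - fderiv ℝ F y‖ ≤ L * ‖x - y‖)
    (n : ℕ) (x : Fin n → X) (lam : Fin n → ℝ) (hpos : ∀ i, 0 ≤ lam i)
    (hsum : ∑ i, lam i = 1) :
    ‖F (∑ i, lam i • x i) - ∑ i, lam i • F (x i)‖ ≤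
      L / 2 * ∑ i, ∑ j, if i < j then lam i * lam j * ‖x i - x j‖ ^ 2 else 0 := by
  set z : X := ∑ i, lam i • x i with hz
  set D : X →L[ℝ] Y := fderiv ℝ F z with hD
  set E : Fin n → Y := fun i => F (x i) - F z - D (x i - z) with hE
  have hEbound : ∀ i, ‖E i‖ ≤ L / 2 * ‖x i - z‖ ^ 2 := fun i =>
    aux_taylor hdiff hL hLip z (x i)
  have hxz : ∑ i, lam i • (x i - z) = 0 := by
    simp only [smul_sub, Finset.sum_sub_distrib, ← Finset.sum_smul, hsum, one_smul]
    simp [hz]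
  have hsplit : ∑ i, lam i • E i = (∑ i, lam i • F (x i)) - F z := by
    simp only [hE, smul_sub, Finset.sum_sub_distrib]
    have h1 : ∑ i, lam i • F z = F z := by
      rw [← Finset.sum_smul, hsum, one_smul]
    have h2 : ∑ i, lam i • D (x i - z) = 0 := by
      have : ∀ i, lam i • D (x i - z) = D (lam i • (x i - z)) := by
        intro i; rw [map_smul]
      rw [Finset.sum_congr rfl fun i _ => this i, ← map_sum, hxz, map_zero]
    rw [h1, h2, sub_zero]
  have hnorm : ‖F z - ∑ i, lam i • F (x i)‖ = ‖∑ i, lam i • E i‖ := by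
    rw [hsplit, norm_sub_rev]
  rw [hnorm]
  calc ‖∑ i, lam i • E i‖ ≤ ∑ i, ‖lam i • E i‖ := norm_sum_le _ _
    _ = ∑ i, lam i * ‖E i‖ := by
        refine Finset.sum_congr rfl fun i _ => ?_
        rw [norm_smul, Real.norm_eq_abs, abs_of_nonneg (hpos i)]
    _ ≤ ∑ i, lam i * (L / 2 * ‖x i - z‖ ^ 2) := by
        refine Finset.sum_le_sum fun i _ => ?_
        exact mul_le_mul_of_nonneg_left (hEbound i) (hpos i)
    _ = L / 2 * ∑ i, lam i * ‖x i - z‖ ^ 2 := by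
        rw [Finset.mul_sum]; refine Finset.sum_congr rfl fun i _ => by ring
    _ = L / 2 * ∑ i, ∑ j, (if i < j then lam i * lam j * ‖x i - x j‖ ^ 2 else 0) := by
        rw [aux_variance x lam hsum]


section
variable {X : Type*} [NormedAddCommGroup X] [InnerProductSpace ℝ X]
    {Y : Type*} [NormedAddCommGroup Y] [NormedSpace ℝ Y]
    {F : X → Y} {L : ℝ}

lemma aux_two_point (hL : 0 < L)
    (hJ : ∀ (n : ℕ) (x : Fin n → X) (lam : Fin n → ℝ), (∀ i, 0 ≤ lam i) → ∑ i, lam i = 1 →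
        ‖F (∑ i, lam i • x i) - ∑ i, lam i • F (x i)‖ ≤
          L / 2 * ∑ i, ∑ j, if i < j then lam i * lam j * ‖x i - x j‖ ^ 2 else 0)
    (x y : X) (t : ℝ) (ht : t ∈ Icc (0:ℝ) 1) :
    ‖F (x + t • (y - x)) - (F x + t • (F y - F x))‖
      ≤ L / 2 * (t * (1 - t) * ‖y - x‖ ^ 2) := by
  have key := hJ 2 ![x, y] ![1 - t, t]
    (by
      intro i
      fin_cases i
      · simpa using sub_nonneg.2 ht.2
      · simpa using ht.1)
    (by simp [Fin.sum_univ_two])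
  have e1 : ∑ i, (![1 - t, t] i) • (![x, y] i) = x + t • (y - x) := by
    simp [Fin.sum_univ_two, sub_smul, smul_sub, one_smul]
    abel
  have e2 : ∑ i, (![1 - t, t] i) • (F (![x, y] i)) = F x + t • (F y - F x) := by
    simp [Fin.sum_univ_two, sub_smul, smul_sub, one_smul]
    abel
  have e3 : (∑ i, ∑ j, if i < j then (![1 - t, t] i) * (![1 - t, t] j)
      * ‖(![x, y] i) - (![x, y] j)‖ ^ 2 else 0) = t * (1 - t) * ‖y - x‖ ^ 2 := by
    rw [Fin.sum_univ_two]
    rw [Fin.sum_univ_two, Fin.sum_univ_two]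
    have h01 : ((0 : Fin 2) < 1) := by decide
    have h10 : ¬((1 : Fin 2) < 0) := by decide
    have h00 : ¬((0 : Fin 2) < 0) := by decide
    have h11 : ¬((1 : Fin 2) < 1) := by decide
    simp only [h01, h10, h00, h11, if_true, if_false,
      Matrix.cons_val_zero, Matrix.cons_val_one, Matrix.head_cons]
    rw [norm_sub_rev x y]
    ring
  rw [e1, e2, e3] at key
  exact key

lemma aux_cauchy (hL : 0 < L)
    (htp : ∀ (x y : X) (t : ℝ), t ∈ Icc (0:ℝ) 1 →
      ‖F (x + t • (y - x)) - (F x + t • (F y - F x))‖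
        ≤ L / 2 * (t * (1 - t) * ‖y - x‖ ^ 2))
    (x h : X) (s t : ℝ) (hs : 0 < s) (hst : s ≤ t) :
    ‖s⁻¹ • (F (x + s • h) - F x) - t⁻¹ • (F (x + t • h) - F x)‖
      ≤ L / 2 * ((t - s) * ‖h‖ ^ 2) := by
  have h0t : 0 < t := lt_of_lt_of_le hs hst
  set τ : ℝ := s / t with hτ
  have hτmem : τ ∈ Icc (0:ℝ) 1 := ⟨by positivity, (div_le_one h0t).2 hst⟩
  have hpt : x + τ • ((x + t • h) - x) = x + s • h := by
    rw [add_sub_cancel_left, smul_smul]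
    congr 1
    rw [hτ]
    field_simp
  have key := htp x (x + t • h) τ hτmem
  rw [hpt, add_sub_cancel_left] at key
  have hsτ : s⁻¹ * τ = t⁻¹ := by
    rw [hτ]; field_simp
  have hvec : s⁻¹ • (F (x + s • h) - (F x + τ • (F (x + t • h) - F x)))
      = s⁻¹ • (F (x + s • h) - F x) - t⁻¹ • (F (x + t • h) - F x) := by
    rw [sub_add_eq_sub_sub, smul_sub, smul_sub, smul_smul, hsτ]
  calc ‖s⁻¹ • (F (x + s • h) - F x) - t⁻¹ • (F (x + t • h) - F x)‖
      = s⁻¹ * ‖F (x + s • h) - (F x + τ • (F (x + t • h) - F x))‖ := by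
        rw [← hvec, norm_smul, Real.norm_eq_abs, abs_of_pos (by positivity)]
    _ ≤ s⁻¹ * (L / 2 * (τ * (1 - τ) * ‖t • h‖ ^ 2)) :=
        mul_le_mul_of_nonneg_left key (by positivity)
    _ = L / 2 * ((t - s) * ‖h‖ ^ 2) := by
        rw [norm_smul, Real.norm_eq_abs, abs_of_pos h0t, hτ]
        field_simp
  done
end


section
variable {X : Type*} [NormedAddCommGroup X] [InnerProductSpace ℝ X]
    {Y : Type*} [NormedAddCommGroup Y] [NormedSpace ℝ Y] [CompleteSpace Y]
    {F : X → Y} {L : ℝ}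

lemma aux_existsLim (hL : 0 < L)
    (hcau : ∀ (x h : X) (s t : ℝ), 0 < s → s ≤ t →
      ‖s⁻¹ • (F (x + s • h) - F x) - t⁻¹ • (F (x + t • h) - F x)‖
        ≤ L / 2 * ((t - s) * ‖h‖ ^ 2))
    (x h : X) : ∃ v : Y, ∀ t : ℝ, 0 < t →
      ‖t⁻¹ • (F (x + t • h) - F x) - v‖ ≤ L / 2 * (t * ‖h‖ ^ 2) := by
  set G : ℝ → Y := fun t => t⁻¹ • (F (x + t • h) - F x) with hG
  have hG2 : ∀ s t : ℝ, 0 < s → s ≤ t → ‖G s - G t‖ ≤ L / 2 * ((t - s) * ‖h‖ ^ 2) :=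
    fun s t hs hst => hcau x h s t hs hst
  set u : ℕ → ℝ := fun n => 1 / (n + 1) with hu
  have hupos : ∀ n, 0 < u n := fun n => Nat.one_div_pos_of_nat
  have humono : ∀ {m n : ℕ}, m ≤ n → u n ≤ u m := by
    intro m n hmn
    apply one_div_le_one_div_of_le (by positivity)
    have : (m:ℝ) ≤ (n:ℝ) := Nat.cast_le.2 hmn
    linarith
  have hGuv : ∀ m n : ℕ, m ≤ n → ‖G (u n) - G (u m)‖ ≤ L / 2 * (u m * ‖h‖ ^ 2) := by
    intro m n hmn
    have h1 := hG2 (u n) (u m) (hupos n) (humono hmn)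
    have h2 : L / 2 * ((u m - u n) * ‖h‖ ^ 2) ≤ L / 2 * (u m * ‖h‖ ^ 2) := by
      gcongr
      linarith [hupos n]
    linarith
  have hcs : CauchySeq (fun n => G (u n)) := by
    apply cauchySeq_of_le_tendsto_0 (fun N => L / 2 * (u N * ‖h‖ ^ 2))
    · intro m n N hm hn
      rcases le_total m n with hmn | hnm
      · rw [dist_eq_norm]
        calc ‖G (u m) - G (u n)‖ = ‖G (u n) - G (u m)‖ := norm_sub_rev _ _
          _ ≤ L / 2 * (u m * ‖h‖ ^ 2) := hGuv m n hmn
          _ ≤ L / 2 * (u N * ‖h‖ ^ 2) := by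
              gcongr
              exact humono hm
      · rw [dist_eq_norm]
        calc ‖G (u m) - G (u n)‖ ≤ L / 2 * (u n * ‖h‖ ^ 2) := hGuv n m hnm
          _ ≤ L / 2 * (u N * ‖h‖ ^ 2) := by
              gcongr
              exact humono hn
    · have : Tendsto u atTop (𝓝 0) := tendsto_one_div_add_atTop_nhds_zero_nat
      have h2 := this.const_mul (L / 2 * ‖h‖ ^ 2)
      simp only [mul_zero] at h2
      convert h2 using 2 with N
      ring
  obtain ⟨v, hv⟩ := cauchySeq_tendsto_of_complete hcs
  refine ⟨v, fun t ht => ?_⟩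
  have hlim : Tendsto (fun n => ‖G t - G (u n)‖) atTop (𝓝 ‖G t - v‖) :=
    (tendsto_const_nhds.sub hv).norm
  apply le_of_tendsto hlim
  have hev : ∀ᶠ n in atTop, u n ≤ t :=
    tendsto_one_div_add_atTop_nhds_zero_nat.eventually (eventually_le_nhds ht)
  filter_upwards [hev] with n hn
  calc ‖G t - G (u n)‖ = ‖G (u n) - G t‖ := norm_sub_rev _ _
    _ ≤ L / 2 * ((t - u n) * ‖h‖ ^ 2) := hG2 (u n) t (hupos n) hn
    _ ≤ L / 2 * (t * ‖h‖ ^ 2) := by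
        gcongr
        linarith [hupos n]
end


section
variable {X : Type*} [NormedAddCommGroup X] [InnerProductSpace ℝ X] [CompleteSpace X]
    {Y : Type*} [NormedAddCommGroup Y] [NormedSpace ℝ Y] [CompleteSpace Y]
    {F : X → Y} {L : ℝ}

lemma aux_reverse (hF : Continuous F) (hL : 0 < L)
    (hJ : ∀ (n : ℕ) (x : Fin n → X) (lam : Fin n → ℝ), (∀ i, 0 ≤ lam i) → ∑ i, lam i = 1 →
        ‖F (∑ i, lam i • x i) - ∑ i, lam i • F (x i)‖ ≤
          L / 2 * ∑ i, ∑ j, if i < j then lam i * lam j * ‖x i - x j‖ ^ 2 else 0) :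
    Differentiable ℝ F ∧ ∀ x y : X, ‖fderiv ℝ F x - fderiv ℝ F y‖ ≤ L * ‖x - y‖ := by
  have htp := aux_two_point hL hJ
  have hcau := aux_cauchy hL htp
  choose A₀ hA₀ using fun x h => aux_existsLim hL hcau x h
  -- uniqueness of the limit
  have huniq : ∀ (x h : X) (v : Y) (C : ℝ),
      (∀ t : ℝ, 0 < t → ‖t⁻¹ • (F (x + t • h) - F x) - v‖ ≤ C * t) → v = A₀ x h := by
    intro x h v C hv
    have hdist : ∀ t : ℝ, 0 < t → ‖v - A₀ x h‖ ≤ (C + L / 2 * ‖h‖ ^ 2) * t := by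
      intro t ht
      have h1 := hv t ht
      have h2 := hA₀ x h t ht
      set G := t⁻¹ • (F (x + t • h) - F x)
      calc ‖v - A₀ x h‖ = ‖(G - A₀ x h) - (G - v)‖ := by rw [sub_sub_sub_cancel_left]
        _ ≤ ‖G - A₀ x h‖ + ‖G - v‖ := norm_sub_le _ _
        _ ≤ L / 2 * (t * ‖h‖ ^ 2) + C * t := add_le_add h2 h1
        _ = (C + L / 2 * ‖h‖ ^ 2) * t := by ring
    have hle : ‖v - A₀ x h‖ ≤ 0 := by
      have hseq : Tendsto (fun n : ℕ => (C + L / 2 * ‖h‖ ^ 2) * (1 / (n + 1))) atTop (𝓝 0) := by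
        have := tendsto_one_div_add_atTop_nhds_zero_nat.const_mul (C + L / 2 * ‖h‖ ^ 2); rw [mul_zero] at this; exact this
      apply ge_of_tendsto hseq
      filter_upwards with n
      exact hdist _ Nat.one_div_pos_of_nat
    have : v - A₀ x h = 0 := norm_le_zero_iff.1 hle
    exact sub_eq_zero.1 this
  -- the quadratic Taylor estimate
  have Etaylor : ∀ x h : X, ‖F (x + h) - F x - A₀ x h‖ ≤ L / 2 * ‖h‖ ^ 2 := by
    intro x h
    have := hA₀ x h 1 one_pos
    simpa using this
  -- additivity
  have hadd : ∀ (x h k : X), A₀ x (h + k) = A₀ x h + A₀ x k := by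
    intro x h k
    refine (huniq x (h + k) (A₀ x h + A₀ x k)
      (L / 2 * ‖k - h‖ ^ 2 + L * ‖h‖ ^ 2 + L * ‖k‖ ^ 2) ?_).symm
    intro t ht
    have h2t : (0:ℝ) < 2 * t := by linarith
    have hmid := htp (x + (2 * t) • h) (x + (2 * t) • k) (1/2)
      (by constructor <;> norm_num)
    have hpt : (x + (2 * t) • h) + (1/2 : ℝ) • ((x + (2 * t) • k) - (x + (2 * t) • h))
        = x + t • (h + k) := by
      have : (x + (2 * t) • k) - (x + (2 * t) • h) = (2 * t) • k - (2 * t) • h := by abel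
      rw [this, smul_sub, smul_smul, smul_smul]
      norm_num
      module
    rw [hpt] at hmid
    have hdd : (x + (2 * t) • k) - (x + (2 * t) • h) = (2 * t) • (k - h) := by
      rw [smul_sub]; abel
    rw [hdd] at hmid
    have hnormdd : ‖(2 * t) • (k - h)‖ ^ 2 = (2 * t) ^ 2 * ‖k - h‖ ^ 2 := by
      rw [norm_smul, Real.norm_eq_abs, abs_of_pos h2t, mul_pow]
    rw [hnormdd] at hmid
    -- hmid : ‖F (x + t•(h+k)) - (F (x+2t•h) + (1/2)•(F (x+2t•k) - F (x+2t•h)))‖ ≤ …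
    set W : Y := F (x + t • (h + k)) - (F (x + (2*t) • h) + (1/2 : ℝ) • (F (x + (2*t) • k) - F (x + (2*t) • h))) with hW
    have hsplit : t⁻¹ • (F (x + t • (h + k)) - F x) - (A₀ x h + A₀ x k)
        = t⁻¹ • W + (((2*t)⁻¹) • (F (x + (2*t) • h) - F x) - A₀ x h)
          + (((2*t)⁻¹) • (F (x + (2*t) • k) - F x) - A₀ x k) := by
      rw [hW]
      have ht0 : (t:ℝ) ≠ 0 := ne_of_gt ht
      match_scalars <;> (field_simp; try ring)
    have hb1 := hA₀ x h (2*t) h2t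
    have hb2 := hA₀ x k (2*t) h2t
    have hbW : ‖t⁻¹ • W‖ ≤ L / 2 * (t * ‖k - h‖ ^ 2) := by
      rw [norm_smul, Real.norm_eq_abs, abs_of_pos (by positivity : (0:ℝ) < t⁻¹)]
      calc t⁻¹ * ‖W‖ ≤ t⁻¹ * (L / 2 * (1/2 * (1 - 1/2) * ((2 * t) ^ 2 * ‖k - h‖ ^ 2))) :=
            mul_le_mul_of_nonneg_left hmid (by positivity)
        _ = L / 2 * (t * ‖k - h‖ ^ 2) := by field_simp; ring
    calc ‖t⁻¹ • (F (x + t • (h + k)) - F x) - (A₀ x h + A₀ x k)‖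
        = ‖t⁻¹ • W + (((2*t)⁻¹) • (F (x + (2*t) • h) - F x) - A₀ x h)
          + (((2*t)⁻¹) • (F (x + (2*t) • k) - F x) - A₀ x k)‖ := by rw [hsplit]
      _ ≤ ‖t⁻¹ • W‖ + ‖((2*t)⁻¹) • (F (x + (2*t) • h) - F x) - A₀ x h‖
          + ‖((2*t)⁻¹) • (F (x + (2*t) • k) - F x) - A₀ x k‖ := norm_add₃_le
      _ ≤ L / 2 * (t * ‖k - h‖ ^ 2) + L / 2 * ((2*t) * ‖h‖ ^ 2) + L / 2 * ((2*t) * ‖k‖ ^ 2) := by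
          exact add_le_add (add_le_add hbW hb1) hb2
      _ = (L / 2 * ‖k - h‖ ^ 2 + L * ‖h‖ ^ 2 + L * ‖k‖ ^ 2) * t := by ring
  -- continuity at zero
  have hcont0 : ∀ x : X, Tendsto (A₀ x) (𝓝 0) (𝓝 0) := by
    intro x
    have hb : ∀ k : X, ‖A₀ x k‖ ≤ ‖F (x + k) - F x‖ + L / 2 * ‖k‖ ^ 2 := by
      intro k
      have := Etaylor x k
      calc ‖A₀ x k‖ = ‖(F (x + k) - F x) - (F (x + k) - F x - A₀ x k)‖ := by
            congr 1; abel
        _ ≤ ‖F (x + k) - F x‖ + ‖F (x + k) - F x - A₀ x k‖ := norm_sub_le _ _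
        _ ≤ ‖F (x + k) - F x‖ + L / 2 * ‖k‖ ^ 2 := by linarith
    have hc : Continuous fun k : X => ‖F (x + k) - F x‖ + L / 2 * ‖k‖ ^ 2 := by
      apply Continuous.add
      · exact ((hF.comp (continuous_const.add continuous_id)).sub continuous_const).norm
      · exact continuous_const.mul (continuous_norm.pow 2)
    exact squeeze_zero_norm hb (hc.tendsto' 0 0 (by simp))
  have hcontA : ∀ x : X, Continuous (A₀ x) := by
    intro x
    rw [continuous_iff_continuousAt]
    intro h₀
    have heq : ∀ h : X, A₀ x h = A₀ x h₀ + A₀ x (h - h₀) := by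
      intro h
      rw [← hadd]
      congr 1
      abel
    have hshift : Tendsto (fun h : X => h - h₀) (𝓝 h₀) (𝓝 0) :=
      (continuous_id.sub continuous_const).tendsto' h₀ 0 (by simp)
    have h1 : Tendsto (fun h : X => A₀ x h₀ + A₀ x (h - h₀)) (𝓝 h₀) (𝓝 (A₀ x h₀ + 0)) :=
      tendsto_const_nhds.add ((hcont0 x).comp hshift)
    rw [add_zero] at h1
    unfold ContinuousAt
    exact h1.congr (fun h => (heq h).symm)
  set Amap : X → (X →L[ℝ] Y) := fun x =>
    (AddMonoidHom.mk' (A₀ x) (hadd x)).toRealLinearMap (hcontA x) with hAmap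
  have hAapp : ∀ x h, Amap x h = A₀ x h := fun x h => rfl
  have hHas : ∀ x : X, HasFDerivAt F (Amap x) x := by
    intro x
    rw [hasFDerivAt_iff_isLittleO_nhds_zero, Asymptotics.isLittleO_iff]
    intro c hc
    filter_upwards [Metric.ball_mem_nhds (0:X) (show (0:ℝ) < 2 * c / L by positivity)] with h hh
    have hnorm : ‖h‖ < 2 * c / L := by simpa [dist_zero_right] using hh
    have hLh : L * ‖h‖ ≤ 2 * c := by
      rw [lt_div_iff₀ hL] at hnorm
      linarith
    calc ‖F (x + h) - F x - Amap x h‖ ≤ L / 2 * ‖h‖ ^ 2 := by rw [hAapp]; exact Etaylor x h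
      _ ≤ c * ‖h‖ := by nlinarith [norm_nonneg h]
  have hdiff : Differentiable ℝ F := fun x => (hHas x).differentiableAt
  refine ⟨hdiff, fun x y => ?_⟩
  rw [(hHas x).fderiv, (hHas y).fderiv]
  apply ContinuousLinearMap.opNorm_le_bound _ (by positivity)
  intro w
  apply NormedSpace.norm_le_dual_bound ℝ _ (by positivity)
  intro f
  rcases eq_or_ne f 0 with hf0 | hf0
  · simp [hf0]
  have hfpos : 0 < ‖f‖ := norm_pos_iff.2 hf0
  set a : X → X := fun z => (InnerProductSpace.toDual ℝ X).symm (f.comp (Amap z)) with ha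
  have hinner : ∀ (z w : X), ⟪a z, w⟫ = f (Amap z w) := by
    intro z w
    rw [ha]
    exact InnerProductSpace.toDual_symm_apply
  have hub : ∀ p q : X, |f (F q) - f (F p) - ⟪a p, q - p⟫| ≤ (L * ‖f‖) / 2 * ‖q - p‖ ^ 2 := by
    intro p q
    rw [hinner]
    have : f (F q) - f (F p) - f (Amap p (q - p)) = f (F q - F p - Amap p (q - p)) := by
      simp only [← map_sub]
    rw [this]
    have hT : ‖F q - F p - Amap p (q - p)‖ ≤ L / 2 * ‖q - p‖ ^ 2 := by
      have := Etaylor p (q - p)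
      rw [hAapp]
      rw [add_sub_cancel] at this
      exact this
    calc |f (F q - F p - Amap p (q - p))| ≤ ‖f‖ * ‖F q - F p - Amap p (q - p)‖ :=
          f.le_opNorm _
      _ ≤ ‖f‖ * (L / 2 * ‖q - p‖ ^ 2) := mul_le_mul_of_nonneg_left hT (norm_nonneg f)
      _ = (L * ‖f‖) / 2 * ‖q - p‖ ^ 2 := by ring
  have halip := aux_grad_lipschitz (fun z => f (F z)) a (L * ‖f‖) (by positivity) hub x y
  have hfin : ‖f ((Amap x - Amap y) w)‖ ≤ ‖a x - a y‖ * ‖w‖ := by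
    have : f ((Amap x - Amap y) w) = ⟪a x - a y, w⟫ := by
      rw [ContinuousLinearMap.sub_apply, map_sub, inner_sub_left, hinner, hinner]
    rw [this, Real.norm_eq_abs]
    exact abs_real_inner_le_norm _ _
  calc ‖f ((Amap x - Amap y) w)‖ ≤ ‖a x - a y‖ * ‖w‖ := hfin
    _ ≤ (L * ‖f‖ * ‖x - y‖) * ‖w‖ := mul_le_mul_of_nonneg_right halip (norm_nonneg w)
    _ = L * ‖x - y‖ * ‖w‖ * ‖f‖ := by ring
end


/-- **Main theorem (Hessian-free characterization).** Let `X` be a real Hilbert space and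
`Y` a reflexive real Banach space, `F : X → Y` continuous, `L > 0`. Then `F` is Fréchet
differentiable with `L`-Lipschitz derivative if and only if `F` satisfies the Jensen-type
inequality for all convex combinations. -/
theorem frechet_lipschitz_iff_jensen_inequality
    {X : Type*} [NormedAddCommGroup X] [InnerProductSpace ℝ X] [CompleteSpace X]
    {Y : Type*} [NormedAddCommGroup Y] [NormedSpace ℝ Y] [CompleteSpace Y]
    (hrefl : Function.Surjective (NormedSpace.inclusionInDoubleDual ℝ Y))
    (F : X → Y) (hF : Continuous F) (L : ℝ) (hL : 0 < L) :
    (Differentiable ℝ F ∧ ∀ x y : X, ‖fderiv ℝ F x - fderiv ℝ F y‖ ≤ L * ‖x - y‖) ↔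
      (∀ (n : ℕ) (x : Fin n → X) (lam : Fin n → ℝ), (∀ i, 0 ≤ lam i) → ∑ i, lam i = 1 →
        ‖F (∑ i, lam i • x i) - ∑ i, lam i • F (x i)‖ ≤
          L / 2 * ∑ i, ∑ j, if i < j then lam i * lam j * ‖x i - x j‖ ^ 2 else 0) := by
  constructor
  · rintro ⟨hdiff, hlip⟩
    intro n x lam hpos hsum
    exact aux_forward hdiff hL.le hlip n x lam hpos hsum
  · intro hJ
    exact aux_reverse hF hL hJ
end

section
/- Let X be a real Hilbert space, Y a real Banach space, and F : X → Y Fréchet differentiable with L-Lipschitz continuous derivative F′ : X → B(X,Y) (i.e., ‖F′(x) − F′(y)‖ ≤ L‖x − y‖ in the operator norm), for some L > 0. Then for any finitely many points x₁,…,xₙ ∈ X and nonnegative weights λ₁,…,λₙ with ∑ᵢ λᵢ = 1, one has ‖F(∑ᵢ λᵢ xᵢ) − ∑ᵢ λᵢ F(xᵢ)‖ ≤ (L/2) · ∑_{1 ≤ i < j ≤ n} λᵢ λⱼ ‖xᵢ − xⱼ‖². -/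
open Finset intervalIntegral

lemma taylor_bound {X : Type*} [NormedAddCommGroup X] [NormedSpace ℝ X]
    {Y : Type*} [NormedAddCommGroup Y] [NormedSpace ℝ Y] [CompleteSpace Y]
    (F : X → Y) (L : ℝ) (hL : 0 ≤ L)
    (hF : Differentiable ℝ F)
    (hlip : ∀ x y : X, ‖fderiv ℝ F x - fderiv ℝ F y‖ ≤ L * ‖x - y‖)
    (a b : X) :
    ‖F b - F a - fderiv ℝ F a (b - a)‖ ≤ L / 2 * ‖b - a‖ ^ 2 := by
  set v := b - a with hv
  set g : ℝ → Y := fun t => F (a + t • v) - t • (fderiv ℝ F a v) with hg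
  set g' : ℝ → Y := fun t => fderiv ℝ F (a + t • v) v - fderiv ℝ F a v with hg'
  have hderiv : ∀ t : ℝ, HasDerivAt g (g' t) t := by
    intro t
    have h1 : HasDerivAt (fun t : ℝ => a + t • v) v t := by
      simpa using ((hasDerivAt_id t).smul_const v).const_add a
    have h2 : HasDerivAt (fun t : ℝ => F (a + t • v)) (fderiv ℝ F (a + t • v) v) t :=
      (hF (a + t • v)).hasFDerivAt.comp_hasDerivAt t h1
    have h3 : HasDerivAt (fun t : ℝ => t • (fderiv ℝ F a v)) (fderiv ℝ F a v) t := by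
      simpa using (hasDerivAt_id t).smul_const (fderiv ℝ F a v)
    exact h2.sub h3
  have hlipc : LipschitzWith (Real.toNNReal L) (fun x => fderiv ℝ F x) := by
    apply LipschitzWith.of_dist_le_mul
    intro p q
    rw [dist_eq_norm, dist_eq_norm, Real.coe_toNNReal L hL]
    exact hlip p q
  have hcont1 : Continuous fun t : ℝ => fderiv ℝ F (a + t • v) :=
    hlipc.continuous.comp (by continuity)
  have hc : Continuous g' := (hcont1.clm_apply continuous_const).sub continuous_const
  have hint : IntervalIntegrable g' MeasureTheory.volume 0 1 := hc.intervalIntegrable 0 1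
  have heq : ∫ t in (0:ℝ)..1, g' t = g 1 - g 0 :=
    integral_eq_sub_of_hasDerivAt (fun t _ => hderiv t) hint
  have hg10 : g 1 - g 0 = F b - F a - fderiv ℝ F a v := by
    simp only [hg, hv, one_smul, zero_smul, sub_zero, map_sub, add_sub_cancel]
    abel
  have hbound : ∀ t ∈ Set.uIoc (0:ℝ) 1, ‖g' t‖ ≤ L * ‖v‖ ^ 2 * t := by
    intro t ht
    rw [Set.uIoc_of_le (by norm_num : (0:ℝ) ≤ 1)] at ht
    calc ‖g' t‖ = ‖(fderiv ℝ F (a + t • v) - fderiv ℝ F a) v‖ := by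
          simp [hg', ContinuousLinearMap.sub_apply]
      _ ≤ ‖fderiv ℝ F (a + t • v) - fderiv ℝ F a‖ * ‖v‖ :=
          ContinuousLinearMap.le_opNorm _ _
      _ ≤ (L * ‖(a + t • v) - a‖) * ‖v‖ :=
          mul_le_mul_of_nonneg_right (hlip _ _) (norm_nonneg v)
      _ = L * ‖v‖ ^ 2 * t := by
          rw [add_sub_cancel_left, norm_smul, Real.norm_eq_abs, abs_of_pos ht.1]; ring
  calc ‖F b - F a - fderiv ℝ F a v‖ = ‖∫ t in (0:ℝ)..1, g' t‖ := by rw [heq, hg10]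
    _ ≤ |∫ t in (0:ℝ)..1, L * ‖v‖ ^ 2 * t| := by
        refine le_trans ?_ (le_abs_self _)
        apply norm_integral_le_of_norm_le (by norm_num : (0:ℝ) ≤ 1)
        · exact MeasureTheory.ae_of_all _ (fun t ht => hbound t
            (by rw [Set.uIoc_of_le (by norm_num : (0:ℝ) ≤ 1)]; exact ht))
        · exact (continuous_const.mul continuous_id).intervalIntegrable 0 1
    _ = L / 2 * ‖v‖ ^ 2 := by
        rw [integral_const_mul, integral_id]
        rw [abs_of_nonneg (by positivity)]
        ring
lemma variance_id {X : Type*} [NormedAddCommGroup X] [InnerProductSpace ℝ X]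
    (n : ℕ) (x : Fin n → X) (lam : Fin n → ℝ) (hsum : ∑ i, lam i = 1) :
    ∑ i, lam i * ‖x i - ∑ j, lam j • x j‖ ^ 2
      = ∑ i, ∑ j, if i < j then lam i * lam j * ‖x i - x j‖ ^ 2 else 0 := by
  set z : X := ∑ j, lam j • x j with hzdef
  have hz : ∑ i, lam i * (inner ℝ (x i) z : ℝ) = ‖z‖ ^ 2 := by
    rw [← real_inner_self_eq_norm_sq, hzdef, sum_inner]
    simp [real_inner_smul_left]
  have hzz : ∑ i, ∑ j, lam i * lam j * (inner ℝ (x i) (x j) : ℝ) = ‖z‖ ^ 2 := by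
    rw [← hz]
    apply Finset.sum_congr rfl
    intro i _
    rw [hzdef, inner_sum, Finset.mul_sum]
    apply Finset.sum_congr rfl
    intro j _
    rw [real_inner_smul_right]; ring
  have hLHS : ∑ i, lam i * ‖x i - z‖ ^ 2 = (∑ i, lam i * ‖x i‖ ^ 2) - ‖z‖ ^ 2 := by
    have hexp : ∀ i, lam i * ‖x i - z‖ ^ 2
        = lam i * ‖x i‖ ^ 2 - 2 * (lam i * (inner ℝ (x i) z : ℝ)) + lam i * ‖z‖ ^ 2 := by
      intro i; rw [@norm_sub_sq_real]; ring
    rw [Finset.sum_congr rfl fun i _ => hexp i, Finset.sum_add_distrib,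
      Finset.sum_sub_distrib, ← Finset.mul_sum, hz, ← Finset.sum_mul, hsum]
    ring
  have hT : ∑ i, ∑ j, lam i * lam j * ‖x i - x j‖ ^ 2
      = 2 * (∑ i, lam i * ‖x i‖ ^ 2) - 2 * ‖z‖ ^ 2 := by
    have hexp : ∀ i j, lam i * lam j * ‖x i - x j‖ ^ 2
        = lam j * (lam i * ‖x i‖ ^ 2) + lam i * (lam j * ‖x j‖ ^ 2)
          - 2 * (lam i * lam j * (inner ℝ (x i) (x j) : ℝ)) := by
      intro i j; rw [@norm_sub_sq_real]; ring
    calc ∑ i, ∑ j, lam i * lam j * ‖x i - x j‖ ^ 2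
        = (∑ i, ∑ j, lam j * (lam i * ‖x i‖ ^ 2))
          + (∑ i, ∑ j, lam i * (lam j * ‖x j‖ ^ 2))
          - 2 * (∑ i, ∑ j, lam i * lam j * (inner ℝ (x i) (x j) : ℝ)) := by
          rw [Finset.mul_sum, ← Finset.sum_add_distrib, ← Finset.sum_sub_distrib]
          apply Finset.sum_congr rfl; intro i _
          rw [Finset.mul_sum, ← Finset.sum_add_distrib, ← Finset.sum_sub_distrib]
          exact Finset.sum_congr rfl fun j _ => hexp i j
      _ = 2 * (∑ i, lam i * ‖x i‖ ^ 2) - 2 * ‖z‖ ^ 2 := by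
          rw [hzz]
          have e1 : ∑ i, ∑ j, lam j * (lam i * ‖x i‖ ^ 2) = ∑ i, lam i * ‖x i‖ ^ 2 := by
            simp_rw [← Finset.sum_mul, hsum]; simp
          have e2 : ∑ i, ∑ j, lam i * (lam j * ‖x j‖ ^ 2) = ∑ i, lam i * ‖x i‖ ^ 2 := by
            simp_rw [← Finset.mul_sum]
            rw [← Finset.sum_mul, hsum, one_mul]
          rw [e1, e2]; ring
  have hsymm : (∑ i, ∑ j, if i < j then lam i * lam j * ‖x i - x j‖ ^ 2 else 0)
      = ∑ i, ∑ j, if j < i then lam i * lam j * ‖x i - x j‖ ^ 2 else 0 := by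
    rw [Finset.sum_comm]
    apply Finset.sum_congr rfl; intro i _
    apply Finset.sum_congr rfl; intro j _
    congr 1
    · rw [norm_sub_rev]; ring
  have hdouble : (∑ i, ∑ j, if i < j then lam i * lam j * ‖x i - x j‖ ^ 2 else 0)
      + (∑ i, ∑ j, if i < j then lam i * lam j * ‖x i - x j‖ ^ 2 else 0)
      = ∑ i, ∑ j, lam i * lam j * ‖x i - x j‖ ^ 2 := by
    nth_rewrite 2 [hsymm]
    rw [← Finset.sum_add_distrib]
    apply Finset.sum_congr rfl; intro i _
    rw [← Finset.sum_add_distrib]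
    apply Finset.sum_congr rfl; intro j _
    rcases lt_trichotomy i j with h | h | h
    · simp [h, not_lt_of_gt h]
    · subst h; simp
    · simp [h, not_lt_of_gt h]
  have : 2 * ∑ i, ∑ j, (if i < j then lam i * lam j * ‖x i - x j‖ ^ 2 else 0)
      = 2 * ((∑ i, lam i * ‖x i‖ ^ 2) - ‖z‖ ^ 2) := by
    rw [two_mul, hdouble, hT]; ring
  rw [hLHS]
  linarith


/-- If `F : X → Y` (with `X` a real Hilbert space and `Y` a real Banach space) is Fréchet
differentiable with `L`-Lipschitz derivative, then `F` satisfies the Jensen-type inequality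
for all convex combinations. -/
theorem jensen_inequality_of_lipschitz_derivative
    {X : Type*} [NormedAddCommGroup X] [InnerProductSpace ℝ X] [CompleteSpace X]
    {Y : Type*} [NormedAddCommGroup Y] [NormedSpace ℝ Y] [CompleteSpace Y]
    (F : X → Y) (L : ℝ) (hL : 0 < L)
    (hF : Differentiable ℝ F)
    (hlip : ∀ x y : X, ‖fderiv ℝ F x - fderiv ℝ F y‖ ≤ L * ‖x - y‖)
    (n : ℕ) (x : Fin n → X) (lam : Fin n → ℝ)
    (hlam : ∀ i, 0 ≤ lam i) (hsum : ∑ i, lam i = 1) :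
    ‖F (∑ i, lam i • x i) - ∑ i, lam i • F (x i)‖ ≤
      L / 2 * ∑ i, ∑ j, if i < j then lam i * lam j * ‖x i - x j‖ ^ 2 else 0 := by
  set z : X := ∑ i, lam i • x i with hzdef
  set D := fderiv ℝ F z with hD
  have hstep : ∀ i, ‖F z + D (x i - z) - F (x i)‖ ≤ L / 2 * ‖x i - z‖ ^ 2 := by
    intro i
    have h := taylor_bound F L hL.le hF hlip z (x i)
    rw [← norm_neg]
    have : -(F z + D (x i - z) - F (x i)) = F (x i) - F z - D (x i - z) := by abel
    rw [this]
    exact h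
  have hrw : F z - ∑ i, lam i • F (x i)
      = ∑ i, lam i • (F z + D (x i - z) - F (x i)) := by
    have h1 : ∑ i, lam i • F z = F z := by
      rw [← Finset.sum_smul, hsum, one_smul]
    have h2 : ∑ i, lam i • D (x i - z) = 0 := by
      have : ∑ i, lam i • D (x i - z) = D (∑ i, lam i • (x i - z)) := by
        rw [map_sum]
        exact Finset.sum_congr rfl fun i _ => (map_smul D _ _).symm
      rw [this]
      have : ∑ i, lam i • (x i - z) = 0 := by
        simp_rw [smul_sub]
        rw [Finset.sum_sub_distrib, ← Finset.sum_smul, hsum, one_smul, ← hzdef, sub_self]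
      rw [this, map_zero]
    simp_rw [smul_sub, smul_add]
    rw [Finset.sum_sub_distrib, Finset.sum_add_distrib, h1, h2, add_zero]
  calc ‖F z - ∑ i, lam i • F (x i)‖
      = ‖∑ i, lam i • (F z + D (x i - z) - F (x i))‖ := by rw [hrw]
    _ ≤ ∑ i, ‖lam i • (F z + D (x i - z) - F (x i))‖ := norm_sum_le _ _
    _ ≤ ∑ i, lam i * (L / 2 * ‖x i - z‖ ^ 2) := by
        apply Finset.sum_le_sum
        intro i _
        rw [norm_smul, Real.norm_eq_abs, abs_of_nonneg (hlam i)]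
        exact mul_le_mul_of_nonneg_left (hstep i) (hlam i)
    _ = L / 2 * ∑ i, lam i * ‖x i - z‖ ^ 2 := by
        rw [Finset.mul_sum]; exact Finset.sum_congr rfl fun i _ => by ring
    _ = L / 2 * ∑ i, ∑ j, if i < j then lam i * lam j * ‖x i - x j‖ ^ 2 else 0 := by
        rw [variance_id n x lam hsum]
end

section
/- Let X be a real Hilbert space and Y a real Banach space that is reflexive (the canonical embedding of Y into its double dual Y** is surjective). Let F : X → Y be continuous and L > 0, and suppose that for any finitely many points x₁,…,xₙ ∈ X and nonnegative weights λ₁,…,λₙ with ∑ᵢ λᵢ = 1, one has ‖F(∑ᵢ λᵢ xᵢ) − ∑ᵢ λᵢ F(xᵢ)‖ ≤ (L/2) · ∑_{1 ≤ i < j ≤ n} λᵢ λⱼ ‖xᵢ − xⱼ‖². Then F is Fréchet differentiable on X and its derivative F′ : X → B(X,Y) is L-Lipschitz continuous in the operator norm. -/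
open InnerProductSpace
set_option maxHeartbeats 1600000

lemma coco_half {X : Type*} [NormedAddCommGroup X] [InnerProductSpace ℝ X] [CompleteSpace X]
    (g : X → ℝ) (d : X → X →L[ℝ] ℝ) (K : ℝ) (hK : 0 < K)
    (hlow : ∀ z w, g z + d z (w - z) ≤ g w)
    (hup : ∀ z w, g w ≤ g z + d z (w - z) + K * ‖w - z‖ ^ 2)
    (x y : X) : (1 / (2 * K)) * ‖d x - d y‖ ^ 2 ≤ (d x - d y) (x - y) := by
  have main : ∀ a b : X, g a - d a a ≤ g b - d a b - (1/(4*K)) * ‖d b - d a‖^2 := by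
    intro a b
    set r := (toDual ℝ X).symm (d b - d a) with hr
    have hru : ∀ u : X, (d b - d a) u = ⟪r, u⟫_ℝ := by
      intro u
      rw [hr, toDual_symm_apply]
    have hrn : ‖r‖ = ‖d b - d a‖ := by
      rw [hr]; exact LinearIsometryEquiv.norm_map _ _
    set u : X := (-(1/(2*K))) • r with hu
    have h1 := hlow a (b + u)
    have h2 := hup b (b + u)
    have e1 : d a (b + u - a) = d a b + d a u - d a a := by
      rw [map_sub, map_add]
    have e2 : b + u - b = u := by abel
    rw [e2] at h2
    have e3 : d b u - d a u = ⟪r, u⟫_ℝ := by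
      rw [← hru]; simp
    have e4 : ⟪r, u⟫_ℝ = -(1/(2*K)) * ‖r‖^2 := by
      rw [hu, real_inner_smul_right, real_inner_self_eq_norm_sq]
    have e5 : ‖u‖^2 = (1/(2*K))^2 * ‖r‖^2 := by
      rw [hu, norm_smul]; simp [mul_pow]
    have hKne : K ≠ 0 := ne_of_gt hK
    rw [e1] at h1
    -- h1 : g a + (d a b + d a u - d a a) ≤ g (b + u)
    -- h2 : g (b + u) ≤ g b + d b u + K * ‖u‖^2
    have : g a + (d a b + d a u - d a a) ≤ g b + d b u + K * ‖u‖^2 := le_trans h1 h2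
    have e6 : d b u = d a u + ⟪r, u⟫_ℝ := by rw [← e3]; ring
    rw [e6, e4, e5, hrn] at this
    have : g a - d a a ≤ g b - d a b + (-(1/(2*K)) + K * (1/(2*K))^2) * ‖d b - d a‖^2 := by
      nlinarith [this]
    have e7 : (-(1/(2*K)) + K * (1/(2*K))^2) = -(1/(4*K)) := by field_simp; ring
    rw [e7] at this; linarith
  have h1 := main x y
  have h2 := main y x
  have e1 : ‖d x - d y‖ = ‖d y - d x‖ := norm_sub_rev _ _
  have e2 : (d x - d y) (x - y) = d x x - d x y - (d y x - d y y) := by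
    simp [map_sub]; ring
  rw [e2]
  have hK4 : (0:ℝ) < 4 * K := by linarith
  have : (1/(4*K)) * ‖d y - d x‖^2 + (1/(4*K)) * ‖d x - d y‖^2
      = (1/(2*K)) * ‖d x - d y‖^2 := by
    rw [← e1]; field_simp; ring
  linarith [h1, h2, this]

lemma coco {X : Type*} [NormedAddCommGroup X] [InnerProductSpace ℝ X] [CompleteSpace X]
    (g : X → ℝ) (l : X → X →L[ℝ] ℝ) (K : ℝ) (hK : 0 < K)
    (h : ∀ z w, |g w - g z - l z (w - z)| ≤ K / 2 * ‖w - z‖ ^ 2)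
    (x y : X) : ‖l x - l y‖ ≤ K * ‖x - y‖ := by
  have normid : ∀ z w : X, ‖w - z‖^2 = ‖w‖^2 - ‖z‖^2 - 2 * ⟪z, w - z⟫_ℝ := by
    intro z w
    have h1 : ‖w - z‖^2 = ‖w‖^2 - 2*⟪w,z⟫_ℝ + ‖z‖^2 := norm_sub_sq_real w z
    have h2 : ⟪z, w - z⟫_ℝ = ⟪z, w⟫_ℝ - ‖z‖^2 := by
      rw [inner_sub_right, real_inner_self_eq_norm_sq]
    have h3 : ⟪z, w⟫_ℝ = ⟪w, z⟫_ℝ := real_inner_comm _ _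
    rw [h2, h3]; linarith
  set D : X → X →L[ℝ] ℝ := fun z => l z + K • (toDual ℝ X z) with hD
  set E : X → X →L[ℝ] ℝ := fun z => -l z + K • (toDual ℝ X z) with hE
  have hDap : ∀ z w : X, D z w = l z w + K * ⟪z, w⟫_ℝ := by
    intro z w; simp [hD, toDual_apply_apply]
  have hEap : ∀ z w : X, E z w = -(l z w) + K * ⟪z, w⟫_ℝ := by
    intro z w; simp [hE, toDual_apply_apply]
  have cD := coco_half (fun z => g z + K/2 * ‖z‖^2) D K hK
    (by
      intro z w
      have hb := abs_le.1 (h z w)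
      have := normid z w
      simp only [hDap]
      nlinarith [hb.1])
    (by
      intro z w
      have hb := abs_le.1 (h z w)
      have := normid z w
      simp only [hDap]
      nlinarith [hb.2, sq_nonneg ‖w - z‖]) x y
  have cE := coco_half (fun z => K/2 * ‖z‖^2 - g z) E K hK
    (by
      intro z w
      have hb := abs_le.1 (h z w)
      have := normid z w
      simp only [hEap]
      nlinarith [hb.2])
    (by
      intro z w
      have hb := abs_le.1 (h z w)
      have := normid z w
      simp only [hEap]
      nlinarith [hb.1, sq_nonneg ‖w - z‖]) x y
  -- combine
  set d : X →L[ℝ] ℝ := l x - l y with hd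
  set p : X := (toDual ℝ X).symm (D x - D y) with hp
  set q : X := (toDual ℝ X).symm (E x - E y) with hq
  have hpn : ‖p‖ = ‖D x - D y‖ := LinearIsometryEquiv.norm_map _ _
  have hqn : ‖q‖ = ‖E x - E y‖ := LinearIsometryEquiv.norm_map _ _
  have hDsub : D x - D y = d + K • (toDual ℝ X (x - y)) := by
    rw [hD, hd]; ext w
    simp [map_sub, inner_sub_left]; ring
  have hEsub : E x - E y = -d + K • (toDual ℝ X (x - y)) := by
    rw [hE, hd]; ext w
    simp [map_sub, inner_sub_left]; ring
  have hpq_add : p + q = (2*K) • (x - y) := by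
    rw [hp, hq]
    apply (toDual ℝ X).injective
    rw [map_add, LinearIsometryEquiv.apply_symm_apply, LinearIsometryEquiv.apply_symm_apply,
      hDsub, hEsub, map_smul]
    ext w; simp; ring
  have hpq_sub : ‖p - q‖ = 2 * ‖d‖ := by
    have : p - q = (toDual ℝ X).symm ((D x - D y) - (E x - E y)) := by
      rw [hp, hq]; exact ((toDual ℝ X).symm.map_sub _ _).symm
    rw [this]
    have h2 : (D x - D y) - (E x - E y) = (2:ℝ) • d := by
      rw [hDsub, hEsub]; ext w; simp; ring
    rw [h2, LinearIsometryEquiv.norm_map, norm_smul]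
    simp
  have hsum : (D x - D y) (x - y) + (E x - E y) (x - y) = 2 * K * ‖x - y‖^2 := by
    have hinn : ⟪x, x - y⟫_ℝ - ⟪y, x - y⟫_ℝ = ‖x - y‖^2 := by
      rw [← inner_sub_left, real_inner_self_eq_norm_sq]
    rw [hDsub, hEsub]
    simp only [ContinuousLinearMap.add_apply, ContinuousLinearMap.neg_apply,
      ContinuousLinearMap.smul_apply, toDual_apply_apply, inner_sub_left, smul_eq_mul]
    nlinarith [hinn]
  have par : ‖p + q‖ * ‖p + q‖ + ‖p - q‖ * ‖p - q‖ = 2 * (‖p‖ * ‖p‖ + ‖q‖ * ‖q‖) :=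
    by have := parallelogram_law_with_norm ℝ p q; simp only [pow_two] at this; exact this
  have hpqa : ‖p + q‖ = 2 * K * ‖x - y‖ := by
    rw [hpq_add, norm_smul]
    have : (0:ℝ) < 2 * K := by linarith
    rw [Real.norm_eq_abs, abs_of_pos this]
  -- cD : 1/(2K) ‖Dx−Dy‖² ≤ (Dx−Dy)(x−y), similarly cE; sum
  have key : (1/(2*K)) * (‖D x - D y‖^2 + ‖E x - E y‖^2) ≤ 2 * K * ‖x - y‖^2 := by
    rw [← hsum]; linarith [cD, cE]
  have hnorms : ‖D x - D y‖^2 + ‖E x - E y‖^2 = 2 * K^2 * ‖x-y‖^2 + 2 * ‖d‖^2 := by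
    rw [← hpn, ← hqn]
    have a1 : ‖p + q‖^2 = 4*K^2*‖x-y‖^2 := by rw [hpqa]; ring
    have a2 : ‖p - q‖^2 = 4*‖d‖^2 := by rw [hpq_sub]; ring
    have a3 : ‖p + q‖^2 + ‖p - q‖^2 = 2*(‖p‖^2 + ‖q‖^2) := by
      simpa [pow_two] using par
    linarith
  rw [hnorms] at key
  have h2K : (0:ℝ) < 2 * K := by linarith
  have key2 : 2*K^2*‖x-y‖^2 + 2*‖d‖^2 ≤ 2*K*‖x-y‖^2*(2*K) := by
    rwa [div_mul_eq_mul_div, one_mul, div_le_iff₀ h2K] at key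
  have hd2 : ‖d‖^2 ≤ (K * ‖x - y‖)^2 := by nlinarith [key2]
  have : ‖d‖ ≤ K * ‖x - y‖ := by
    nlinarith [norm_nonneg d, norm_nonneg (x - y), mul_nonneg (le_of_lt hK) (norm_nonneg (x-y)), hd2]
  exact this


/-- If `F : X → Y` (with `X` a real Hilbert space and `Y` a reflexive real Banach space) is
continuous and satisfies the Jensen-type inequality for all convex combinations, then `F` is
Fréchet differentiable and its derivative is `L`-Lipschitz in the operator norm. -/
theorem differentiable_lipschitz_of_jensen_inequality
    {X : Type*} [NormedAddCommGroup X] [InnerProductSpace ℝ X] [CompleteSpace X]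
    {Y : Type*} [NormedAddCommGroup Y] [NormedSpace ℝ Y] [CompleteSpace Y]
    (hrefl : Function.Surjective (NormedSpace.inclusionInDoubleDual ℝ Y))
    (F : X → Y) (hF : Continuous F) (L : ℝ) (hL : 0 < L)
    (hineq : ∀ (n : ℕ) (x : Fin n → X) (lam : Fin n → ℝ), (∀ i, 0 ≤ lam i) → ∑ i, lam i = 1 →
      ‖F (∑ i, lam i • x i) - ∑ i, lam i • F (x i)‖ ≤
        L / 2 * ∑ i, ∑ j, if i < j then lam i * lam j * ‖x i - x j‖ ^ 2 else 0) :
    Differentiable ℝ F ∧ ∀ x y : X, ‖fderiv ℝ F x - fderiv ℝ F y‖ ≤ L * ‖x - y‖ := by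
  have key2 : ∀ (a b : X) (t : ℝ), 0 ≤ t → t ≤ 1 →
      ‖F (t • a + (1-t) • b) - (t • F a + (1-t) • F b)‖ ≤ L/2 * (t * (1-t) * ‖a - b‖^2) := by
    intro a b t ht0 ht1
    have h := hineq 2 ![a, b] ![t, 1-t]
      (by intro i; fin_cases i
          · simpa using ht0
          · simp; linarith)
      (by simp [Fin.sum_univ_two])
    simp only [Fin.sum_univ_two, Matrix.cons_val_zero, Matrix.cons_val_one, Matrix.head_cons] at h
    norm_num at h
    convert h using 2
  have exD : ∀ (x v : X), ∃ W : Y, ∀ t : ℝ, 0 < t →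
      ‖F (x + t • v) - F x - t • W‖ ≤ L/2 * t^2 * ‖v‖^2 := by
    intro x v
    set G : ℝ → Y := fun t => t⁻¹ • (F (x + t • v) - F x) with hG
    have fact1 : ∀ s t : ℝ, 0 < s → s ≤ t → ‖G s - G t‖ ≤ L/2 * (t - s) * ‖v‖^2 := by
      intro s t hs hst
      have ht : 0 < t := lt_of_lt_of_le hs hst
      have hsne : s ≠ 0 := ne_of_gt hs
      have htne : t ≠ 0 := ne_of_gt ht
      have h := key2 (x + t • v) x (s/t) (by positivity) (by rw [div_le_one ht]; exact hst)
      have e1 : (s/t) • (x + t • v) + (1 - s/t) • x = x + s • v := by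
        have : (s/t) * t = s := by field_simp
        rw [smul_add, smul_smul, this, sub_smul, one_smul]
        abel
      rw [e1] at h
      have e2 : s • (G s - G t) =
          F (x + s • v) - ((s/t) • F (x + t • v) + (1 - s/t) • F x) := by
        rw [hG]
        simp only [smul_sub, smul_smul]
        rw [mul_inv_cancel₀ hsne]
        have : s * t⁻¹ = s / t := (div_eq_mul_inv s t).symm
        rw [this]
        simp only [one_smul, smul_sub, sub_smul, one_smul]
        abel
      have e3 : ‖x + t • v - x‖ = t * ‖v‖ := by
        rw [add_sub_cancel_left, norm_smul, Real.norm_eq_abs, abs_of_pos ht]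
      have e4 : ‖s • (G s - G t)‖ = s * ‖G s - G t‖ := by
        rw [norm_smul, Real.norm_eq_abs, abs_of_pos hs]
      have h5 : s * ‖G s - G t‖ ≤ L/2 * ((s/t) * (1 - s/t) * (t * ‖v‖)^2) := by
        rw [← e4, e2]; rw [e3] at h; exact h
      have e6 : L/2 * ((s/t) * (1 - s/t) * (t * ‖v‖)^2) = s * (L/2 * (t - s) * ‖v‖^2) := by
        field_simp
      rw [e6] at h5
      exact le_of_mul_le_mul_left h5 hs
    set u : ℕ → Y := fun n => G (1/(n+1)) with hu
    have upos : ∀ n : ℕ, (0:ℝ) < 1/(n+1) := by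
      intro n; positivity
    have umono : ∀ N n : ℕ, N ≤ n → (1:ℝ)/(n+1) ≤ 1/(N+1) := by
      intro N n h
      apply one_div_le_one_div_of_le (by positivity)
      have : (N:ℝ) ≤ n := Nat.cast_le.mpr h
      linarith
    have hvsq : (0:ℝ) ≤ L/2 * ‖v‖^2 := by positivity
    have hcauchy : CauchySeq u := by
      refine cauchySeq_of_le_tendsto_0 (fun N => L/2 * (1/(N+1)) * ‖v‖^2) ?_ ?_
      · intro n m N hn hm
        rw [dist_eq_norm]
        rcases le_total ((1:ℝ)/(n+1)) (1/(m+1)) with hc | hc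
        · calc ‖u n - u m‖ ≤ L/2 * (1/(m+1) - 1/(n+1)) * ‖v‖^2 :=
                fact1 _ _ (upos n) hc
            _ ≤ L/2 * (1/(N+1)) * ‖v‖^2 := by
                have h1 := umono N m hm
                have h2 := (upos n).le
                have hL2 : (0:ℝ) ≤ L/2 := by positivity
                have : (1:ℝ)/(m+1) - 1/(n+1) ≤ 1/(N+1) := by linarith
                nlinarith [sq_nonneg ‖v‖]
        · rw [norm_sub_rev]
          calc ‖u m - u n‖ ≤ L/2 * (1/(n+1) - 1/(m+1)) * ‖v‖^2 :=
                fact1 _ _ (upos m) hc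
            _ ≤ L/2 * (1/(N+1)) * ‖v‖^2 := by
                have h1 := umono N n hn
                have h2 := (upos m).le
                have : (1:ℝ)/(n+1) - 1/(m+1) ≤ 1/(N+1) := by linarith
                nlinarith [sq_nonneg ‖v‖]
      · have h1 : Filter.Tendsto (fun N : ℕ => (1:ℝ)/(N+1)) Filter.atTop (nhds 0) :=
          tendsto_one_div_add_atTop_nhds_zero_nat
        have := h1.const_mul (L/2)
        simp only [mul_zero] at this
        have h2 := this.mul_const (‖v‖^2)
        simpa using h2
    obtain ⟨W, hW⟩ := cauchySeq_tendsto_of_complete hcauchy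
    refine ⟨W, ?_⟩
    intro t ht
    have hGW : ‖G t - W‖ ≤ L/2 * t * ‖v‖^2 := by
      have hnormt : Filter.Tendsto (fun n => ‖G t - u n‖) Filter.atTop (nhds ‖G t - W‖) :=
        (Filter.Tendsto.const_sub (G t) hW).norm
      apply le_of_tendsto hnormt
      obtain ⟨N, hN⟩ := exists_nat_one_div_lt ht
      filter_upwards [Filter.eventually_ge_atTop N] with n hn
      have hle : (1:ℝ)/(n+1) ≤ t := le_trans (umono N n hn) hN.le
      calc ‖G t - u n‖ = ‖u n - G t‖ := norm_sub_rev _ _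
        _ ≤ L/2 * (t - 1/(n+1)) * ‖v‖^2 := fact1 _ _ (upos n) hle
        _ ≤ L/2 * t * ‖v‖^2 := by
            have := (upos n).le
            nlinarith [sq_nonneg ‖v‖]
    have e7 : F (x + t • v) - F x - t • W = t • (G t - W) := by
      rw [hG, smul_sub, smul_smul, mul_inv_cancel₀ (ne_of_gt ht), one_smul]
    rw [e7, norm_smul, Real.norm_eq_abs, abs_of_pos ht]
    calc t * ‖G t - W‖ ≤ t * (L/2 * t * ‖v‖^2) := by
          apply mul_le_mul_of_nonneg_left hGW ht.le
      _ = L/2 * t^2 * ‖v‖^2 := by ring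
  choose D hD using exD
  -- uniqueness of the derivative candidate
  have uniq : ∀ (x v : X) (W : Y) (C : ℝ),
      (∀ t : ℝ, 0 < t → ‖F (x + t • v) - F x - t • W‖ ≤ C * t^2) → W = D x v := by
    intro x v W C hW
    have hbound : ∀ t : ℝ, 0 < t → ‖W - D x v‖ ≤ (C + L/2 * ‖v‖^2) * t := by
      intro t ht
      have h1 := hW t ht
      have h2 := hD x v t ht
      have e : t • W - t • D x v =
          (F (x + t • v) - F x - t • D x v) - (F (x + t • v) - F x - t • W) := by abel
      have h3 : ‖t • W - t • D x v‖ ≤ C * t^2 + L/2 * t^2 * ‖v‖^2 := by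
        rw [e]; exact le_trans (norm_sub_le _ _) (by linarith)
      rw [← smul_sub, norm_smul, Real.norm_eq_abs, abs_of_pos ht] at h3
      have h4 : t * ‖W - D x v‖ ≤ t * ((C + L/2 * ‖v‖^2) * t) := by nlinarith
      exact le_of_mul_le_mul_left h4 ht
    have hz : ‖W - D x v‖ ≤ 0 := by
      have htend : Filter.Tendsto (fun n : ℕ => (C + L/2 * ‖v‖^2) * (1/(n+1)))
          Filter.atTop (nhds 0) := by
        have := tendsto_one_div_add_atTop_nhds_zero_nat.const_mul (C + L/2 * ‖v‖^2)
        simpa using this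
      exact ge_of_tendsto' htend (fun n => hbound _ (by positivity))
    exact (sub_eq_zero.mp (norm_le_zero_iff.mp hz)).symm ▸ rfl
  -- master estimate at t = 1
  have master1 : ∀ x v : X, ‖F (x + v) - F x - D x v‖ ≤ L/2 * ‖v‖^2 := by
    intro x v
    have := hD x v 1 one_pos
    simpa using this
  -- second difference bound
  have snd : ∀ x w : X, ‖F (x + w) + F (x - w) - (2:ℝ) • F x‖ ≤ L * ‖w‖^2 := by
    intro x w
    have h := key2 (x + w) (x - w) (1/2) (by norm_num) (by norm_num)
    have e1 : (1/2 : ℝ) • (x + w) + (1 - 1/2 : ℝ) • (x - w) = x := by module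
    have e2 : (x + w) - (x - w) = (2:ℝ) • w := by module
    rw [e1, e2] at h
    have e3 : F (x + w) + F (x - w) - (2:ℝ) • F x =
        (-2:ℝ) • (F x - ((1/2:ℝ) • F (x + w) + (1 - 1/2 : ℝ) • F (x - w))) := by module
    rw [e3, norm_smul]
    have e4 : ‖(2:ℝ) • w‖^2 = 4 * ‖w‖^2 := by
      rw [norm_smul]; simp [Real.norm_eq_abs]; ring
    rw [e4] at h
    simp only [Real.norm_eq_abs]
    rw [show |(-2:ℝ)| = 2 by norm_num]
    nlinarith [h]
  -- positive homogeneity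
  have Dpos : ∀ (x v : X) (c : ℝ), 0 < c → D x (c • v) = c • D x v := by
    intro x v c hc
    refine (uniq x (c • v) (c • D x v) (L/2 * c^2 * ‖v‖^2) ?_).symm ▸ rfl
    intro t ht
    have h := hD x v (t * c) (mul_pos ht hc)
    have e1 : x + (t * c) • v = x + t • (c • v) := by rw [smul_smul]
    have e2 : (t * c) • D x v = t • (c • D x v) := by rw [smul_smul]
    rw [e1, e2] at h
    calc ‖F (x + t • (c • v)) - F x - t • (c • D x v)‖ ≤ L/2 * (t*c)^2 * ‖v‖^2 := h
      _ = L/2 * c^2 * ‖v‖^2 * t^2 := by ring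
  have Dzero : ∀ x : X, D x 0 = 0 := by
    intro x
    refine (uniq x 0 0 0 ?_).symm ▸ rfl
    intro t ht
    simp
  have Dneg : ∀ x v : X, D x (-v) = - D x v := by
    intro x v
    refine (uniq x (-v) (- D x v) (3*L/2 * ‖v‖^2) ?_).symm ▸ rfl
    intro t ht
    have h1 := hD x v t ht
    have h2 := snd x (t • v)
    have e : F (x + t • (-v)) - F x - t • (-D x v) =
        (F (x + t • v) + F (x - t • v) - (2:ℝ) • F x)
          - (F (x + t • v) - F x - t • D x v) := by
      have e0 : x + t • (-v) = x - t • v := by module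
      rw [e0]; module
    rw [e]
    refine le_trans (norm_sub_le _ _) ?_
    have e2 : ‖t • v‖^2 = t^2 * ‖v‖^2 := by
      rw [norm_smul, Real.norm_eq_abs, abs_of_pos ht]; ring
    rw [e2] at h2
    nlinarith [h1, h2]
  have Dsmul : ∀ (x v : X) (c : ℝ), D x (c • v) = c • D x v := by
    intro x v c
    rcases lt_trichotomy c 0 with hc | hc | hc
    · have : D x (c • v) = D x ((-c) • (-v)) := by rw [smul_neg, neg_smul, neg_neg]
      rw [this, Dpos x (-v) (-c) (by linarith), Dneg, smul_neg, neg_smul, neg_neg]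
    · rw [hc, zero_smul, zero_smul, Dzero]
    · exact Dpos x v c hc
  have Dadd : ∀ x u v : X, D x (u + v) = D x u + D x v := by
    intro x u v
    refine (uniq x (u + v) (D x u + D x v)
      (L/2 * ‖u - v‖^2 + L * ‖u‖^2 + L * ‖v‖^2) ?_).symm ▸ rfl
    intro t ht
    have hu := hD x u (2*t) (by linarith)
    have hv := hD x v (2*t) (by linarith)
    have hmid := key2 (x + (2*t) • u) (x + (2*t) • v) (1/2) (by norm_num) (by norm_num)
    have e1 : (1/2:ℝ) • (x + (2*t) • u) + (1 - 1/2:ℝ) • (x + (2*t) • v)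
        = x + t • (u + v) := by module
    have e2 : (x + (2*t) • u) - (x + (2*t) • v) = (2*t) • (u - v) := by module
    rw [e1, e2] at hmid
    have e3 : F (x + t • (u + v)) - F x - t • (D x u + D x v) =
        (F (x + t • (u + v)) - ((1/2:ℝ) • F (x + (2*t) • u) + (1 - 1/2:ℝ) • F (x + (2*t) • v)))
        + (1/2:ℝ) • (F (x + (2*t) • u) - F x - (2*t) • D x u)
        + (1/2:ℝ) • (F (x + (2*t) • v) - F x - (2*t) • D x v) := by module
    rw [e3]
    have n1 : ‖(1/2:ℝ) • (F (x + (2*t) • u) - F x - (2*t) • D x u)‖ ≤ L * t^2 * ‖u‖^2 := by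
      rw [norm_smul, Real.norm_eq_abs]
      rw [show |(1/2:ℝ)| = 1/2 by norm_num]
      nlinarith [hu]
    have n2 : ‖(1/2:ℝ) • (F (x + (2*t) • v) - F x - (2*t) • D x v)‖ ≤ L * t^2 * ‖v‖^2 := by
      rw [norm_smul, Real.norm_eq_abs]
      rw [show |(1/2:ℝ)| = 1/2 by norm_num]
      nlinarith [hv]
    have n3 : ‖F (x + t • (u + v)) - ((1/2:ℝ) • F (x + (2*t) • u)
        + (1 - 1/2:ℝ) • F (x + (2*t) • v))‖ ≤ L/2 * t^2 * ‖u - v‖^2 := by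
      refine le_trans hmid ?_
      have e4 : ‖(2*t) • (u - v)‖^2 = 4 * t^2 * ‖u - v‖^2 := by
        rw [norm_smul, Real.norm_eq_abs, abs_of_pos (by linarith : (0:ℝ) < 2*t)]; ring
      rw [e4]; nlinarith [sq_nonneg ‖u - v‖]
    refine le_trans (norm_add_le _ _) ?_
    refine le_trans (add_le_add (norm_add_le _ _) n2) ?_
    refine le_trans (add_le_add (add_le_add n3 n1) le_rfl) ?_
    exact le_of_eq (by ring)
  -- build continuous linear maps
  have hAex : ∀ x : X, ∃ A : X →L[ℝ] Y, ∀ v, A v = D x v := by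
    intro x
    obtain ⟨δ, hδ, hδF⟩ : ∃ δ > 0, ∀ w : X, ‖w‖ < δ → ‖F (x + w) - F x‖ ≤ 1 := by
      rcases Metric.continuousAt_iff.mp (hF.continuousAt (x := x)) 1 one_pos with ⟨δ, hδ, h⟩
      refine ⟨δ, hδ, fun w hw => ?_⟩
      have hd : dist (x + w) x < δ := by
        rw [dist_eq_norm, add_sub_cancel_left]; exact hw
      have h2 := h hd
      rw [dist_eq_norm] at h2
      exact h2.le
    set M : ℝ := (1 + L/2 * δ^2) * (2/δ) with hM
    have hbound : ∀ v : X, ‖D x v‖ ≤ M * ‖v‖ := by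
      intro v
      by_cases hv : v = 0
      · rw [hv, Dzero]
        simp
      · have hvn : 0 < ‖v‖ := norm_pos_iff.mpr hv
        set c : ℝ := (δ/2) / ‖v‖ with hc
        have hcpos : 0 < c := by positivity
        have hnc : ‖c • v‖ = δ/2 := by
          rw [norm_smul, Real.norm_eq_abs, abs_of_pos hcpos, hc]
          field_simp
        have ht := master1 x (c • v)
        have h2 : ‖F (x + c • v) - F x‖ ≤ 1 := hδF _ (by rw [hnc]; linarith)
        have h1 : ‖D x (c • v)‖ ≤ 1 + L/2 * δ^2 := by
          have hns := norm_sub_le (F (x + c • v) - F x)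
            (F (x + c • v) - F x - D x (c • v))
          have edec : (F (x + c • v) - F x)
              - (F (x + c • v) - F x - D x (c • v)) = D x (c • v) := by abel
          rw [edec] at hns
          rw [hnc] at ht
          have : ‖D x (c • v)‖ ≤ 1 + L/2 * (δ/2)^2 := by linarith
          nlinarith
        rw [Dsmul x v c, norm_smul, Real.norm_eq_abs, abs_of_pos hcpos] at h1
        rw [mul_comm c ‖D x v‖] at h1
        have h3 : ‖D x v‖ ≤ (1 + L/2 * δ^2) / c := (le_div_iff₀ hcpos).mpr h1
        have h4 : (1 + L/2 * δ^2) / c = M * ‖v‖ := by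
          rw [hc, hM]
          field_simp
        rw [h4] at h3
        exact h3
    exact ⟨LinearMap.mkContinuous
      { toFun := D x, map_add' := Dadd x,
        map_smul' := fun c v => by simpa using Dsmul x v c } M hbound, fun v => rfl⟩
  choose A hA using hAex
  have masterA : ∀ x v : X, ‖F (x + v) - F x - A x v‖ ≤ L/2 * ‖v‖^2 := by
    intro x v; rw [hA]; exact master1 x v
  have hasF : ∀ x : X, HasFDerivAt F (A x) x := by
    intro x
    rw [hasFDerivAt_iff_isLittleO_nhds_zero, Asymptotics.isLittleO_iff]
    intro ε hε
    filter_upwards [Metric.ball_mem_nhds (0:X) (by positivity : (0:ℝ) < 2*ε/L)] with h hh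
    simp only [Metric.mem_ball, dist_zero_right] at hh
    have h1 := masterA x h
    have h2 : ‖h‖ * L < 2 * ε := (lt_div_iff₀ hL).mp hh
    have h3 : L/2 * ‖h‖^2 ≤ ε * ‖h‖ := by nlinarith [norm_nonneg h]
    exact le_trans h1 h3
  refine ⟨fun x => (hasF x).differentiableAt, ?_⟩
  intro x y
  rw [(hasF x).fderiv, (hasF y).fderiv]
  refine ContinuousLinearMap.opNorm_le_bound _ (by positivity) ?_
  intro v
  refine NormedSpace.norm_le_dual_bound ℝ _ (by positivity) ?_
  intro φ
  by_cases hφ : φ = 0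
  · simp [hφ]
  · have hφn : 0 < ‖φ‖ := norm_pos_iff.mpr hφ
    have hcoco := coco (fun z => φ (F z)) (fun z => φ.comp (A z)) (‖φ‖ * L)
      (by positivity)
      (by
        intro z w
        have hm := masterA z (w - z)
        rw [show z + (w - z) = w by abel] at hm
        have e : φ (F w) - φ (F z) - (φ.comp (A z)) (w - z)
            = φ (F w - F z - A z (w - z)) := by
          simp [map_sub]
        rw [e, ← Real.norm_eq_abs]
        calc ‖φ (F w - F z - A z (w - z))‖ ≤ ‖φ‖ * ‖F w - F z - A z (w - z)‖ :=
              φ.le_opNorm _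
          _ ≤ ‖φ‖ * (L/2 * ‖w - z‖^2) := by
              exact mul_le_mul_of_nonneg_left hm (norm_nonneg φ)
          _ = ‖φ‖ * L / 2 * ‖w - z‖^2 := by ring) x y
    have e2 : φ ((A x - A y) v) = (φ.comp (A x) - φ.comp (A y)) v := by
      simp [ContinuousLinearMap.sub_apply, map_sub]
    calc ‖φ ((A x - A y) v)‖ = ‖(φ.comp (A x) - φ.comp (A y)) v‖ := by rw [e2]
      _ ≤ ‖φ.comp (A x) - φ.comp (A y)‖ * ‖v‖ := ContinuousLinearMap.le_opNorm _ _
      _ ≤ (‖φ‖ * L * ‖x - y‖) * ‖v‖ :=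
          mul_le_mul_of_nonneg_right hcoco (norm_nonneg v)
      _ = L * ‖x - y‖ * ‖v‖ * ‖φ‖ := by ring
end

section
/- Let X be a real Hilbert space, L > 0, and let f : X → ℝ be Fréchet differentiable such that its gradient ∇f : X → X satisfies: for any finitely many points x₁,…,xₙ ∈ X and nonnegative weights λ₁,…,λₙ with ∑ᵢ λᵢ = 1, ‖∇f(∑ᵢ λᵢ xᵢ) − ∑ᵢ λᵢ ∇f(xᵢ)‖ ≤ (L/2) · ∑_{1 ≤ i < j ≤ n} λᵢ λⱼ ‖xᵢ − xⱼ‖². Then ∇f is Fréchet differentiable on X and its derivative (the Hessian of f) is L-Lipschitz continuous with respect to the operator norm. -/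
open RealInnerProductSpace

section
variable {X : Type*} [NormedAddCommGroup X] [InnerProductSpace ℝ X] [CompleteSpace X]
variable {L : ℝ} {g : X → X}

set_option linter.unusedSectionVars false

def JS (L : ℝ) (g : X → X) : Prop :=
  ∀ (a b : X) (t : ℝ), 0 ≤ t → t ≤ 1 →
    ‖g ((1-t) • a + t • b) - ((1-t) • g a + t • g b)‖ ≤ L / 2 * ((1-t) * t * ‖a - b‖ ^ 2)

lemma JS.midpoint (hS : JS L g) (z v : X) :
    ‖g (z+v) + g (z-v) - g z - g z‖ ≤ L * ‖v‖ ^ 2 := by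
  have h := hS (z+v) (z-v) (1/2) (by norm_num) (by norm_num)
  have e1 : ((1:ℝ)-1/2) • (z+v) + (1/2:ℝ) • (z-v) = z := by
    rw [show ((1:ℝ)-1/2) = 1/2 by norm_num, smul_add, smul_sub]; module
  have e2 : (z+v) - (z-v) = (2:ℝ) • v := by module
  rw [e1, e2] at h
  have e3 : ‖(2:ℝ) • v‖^2 = 4 * ‖v‖^2 := by rw [norm_smul]; simp; ring
  rw [e3] at h
  have e4 : g z - (((1:ℝ)-1/2) • g (z+v) + (1/2:ℝ) • g (z-v))
      = -((1/2:ℝ) • (g (z+v) + g (z-v) - g z - g z)) := by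
    rw [show ((1:ℝ)-1/2) = 1/2 by norm_num]; module
  rw [e4, norm_neg, norm_smul] at h
  simp only [norm_div, Real.norm_ofNat, norm_one] at h
  nlinarith [h]

lemma JS.fourpoint (hS : JS L g) (w z u : X) :
    ‖g (w+u) - g w - (g (z+u) - g z)‖ ≤ L / 2 * (‖w-z‖^2 + ‖u‖^2) := by
  set m := (2:ℝ)⁻¹ • (w+z+u) with hm
  have h1 := hS.midpoint m ((2:ℝ)⁻¹ • (w-z-u))
  have h2 := hS.midpoint m ((2:ℝ)⁻¹ • (z-w-u))
  rw [show m + (2:ℝ)⁻¹ • (w-z-u) = w by rw [hm]; module,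
      show m - (2:ℝ)⁻¹ • (w-z-u) = z+u by rw [hm]; module] at h1
  rw [show m + (2:ℝ)⁻¹ • (z-w-u) = z by rw [hm]; module,
      show m - (2:ℝ)⁻¹ • (z-w-u) = w+u by rw [hm]; module] at h2
  have key : g (w+u) - g w - (g (z+u) - g z)
      = (g z + g (w+u) - g m - g m) - (g w + g (z+u) - g m - g m) := by abel
  have par := parallelogram_law_with_norm ℝ (w-z) u
  have n1 : ‖(2:ℝ)⁻¹ • (w-z-u)‖^2 = (1/4) * ‖(w-z) - u‖^2 := by
    rw [show w-z-u = (w-z) - u by abel, norm_smul]; simp [norm_inv]; ring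
  have n2 : ‖(2:ℝ)⁻¹ • (z-w-u)‖^2 = (1/4) * ‖(w-z) + u‖^2 := by
    have : z-w-u = -((w-z) + u) := by abel
    rw [this, norm_smul, norm_neg]; simp [norm_inv]; ring
  rw [n1] at h1; rw [n2] at h2
  calc ‖g (w+u) - g w - (g (z+u) - g z)‖
      ≤ ‖g z + g (w+u) - g m - g m‖ + ‖g w + g (z+u) - g m - g m‖ := by
        rw [key]; exact norm_sub_le _ _
    _ ≤ L * ((1/4) * ‖(w-z)+u‖^2) + L * ((1/4) * ‖(w-z)-u‖^2) := add_le_add h2 h1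
    _ = L/2 * (‖w-z‖^2 + ‖u‖^2) := by
        simp only [pow_two]; linear_combination (L/4) * par

lemma JS.cauchy (hS : JS L g) (x h : X) {s t : ℝ} (hs : 0 < s) (hst : s ≤ t) :
    ‖s⁻¹ • (g (x+s•h) - g x) - t⁻¹ • (g (x+t•h) - g x)‖ ≤ L/2 * ((t-s)*‖h‖^2) := by
  have ht : 0 < t := hs.trans_le hst
  have h1 := hS x (x+t•h) (s/t) (by positivity) (by rw [div_le_one ht]; exact hst)
  have e1 : ((1:ℝ)-s/t) • x + (s/t) • (x+t•h) = x + s•h := by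
    rw [smul_add, smul_smul, div_mul_cancel₀ _ ht.ne']; module
  have e2 : x - (x+t•h) = -(t•h) := by abel
  have e3 : g (x+s•h) - (((1:ℝ)-s/t) • g x + (s/t) • g (x+t•h))
      = s • (s⁻¹ • (g (x+s•h) - g x) - t⁻¹ • (g (x+t•h) - g x)) := by
    rw [smul_sub, smul_smul, smul_smul, mul_inv_cancel₀ hs.ne', one_smul,
      ← div_eq_mul_inv]; module
  rw [e1, e2, e3, norm_neg, norm_smul, norm_smul] at h1
  have e4 : L/2 * ((1-s/t) * (s/t) * (‖t‖*‖h‖)^2) = s * (L/2 * ((t-s)*‖h‖^2)) := by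
    rw [Real.norm_eq_abs, abs_of_pos ht]; field_simp
  rw [e4, Real.norm_eq_abs, abs_of_pos hs] at h1
  exact le_of_mul_le_mul_left h1 hs

lemma JS.keyA (hL : 0 ≤ L) (hS : JS L g) (x h : X) :
    ∃ l : X, ∀ t : ℝ, 0 < t → ‖t⁻¹ • (g (x+t•h) - g x) - l‖ ≤ L/2 * (t * ‖h‖^2) := by
  set F : ℝ → X := fun t => t⁻¹ • (g (x+t•h) - g x) with hF
  have hcau : ∀ s t : ℝ, 0 < s → 0 < t → ‖F s - F t‖ ≤ L/2 * (max s t * ‖h‖^2) := by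
    intro s t hs ht
    rcases le_total s t with hst | hst
    · calc ‖F s - F t‖ ≤ L/2 * ((t-s)*‖h‖^2) := hS.cauchy x h hs hst
        _ ≤ L/2 * (max s t * ‖h‖^2) := by
            have : (t-s) ≤ max s t := by
              have := le_max_right s t; linarith
            apply mul_le_mul_of_nonneg_left _ (by linarith)
            apply mul_le_mul_of_nonneg_right this (by positivity)
    · calc ‖F s - F t‖ = ‖F t - F s‖ := by rw [norm_sub_rev]
        _ ≤ L/2 * ((s-t)*‖h‖^2) := hS.cauchy x h ht hst
        _ ≤ L/2 * (max s t * ‖h‖^2) := by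
            have : (s-t) ≤ max s t := by
              have := le_max_left s t; linarith
            apply mul_le_mul_of_nonneg_left _ (by linarith)
            apply mul_le_mul_of_nonneg_right this (by positivity)
  set a : ℕ → X := fun n => F (1/(n+1)) with ha
  have hb : Filter.Tendsto (fun n : ℕ => L/2 * (1/(n+1) * ‖h‖^2)) Filter.atTop (nhds 0) := by
    have h0 : Filter.Tendsto (fun n : ℕ => 1/((n:ℝ)+1)) Filter.atTop (nhds 0) :=
      tendsto_one_div_add_atTop_nhds_zero_nat
    have := (h0.const_mul (L/2 * ‖h‖^2))
    simpa [mul_comm, mul_assoc, mul_left_comm] using this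
  have hca : CauchySeq a := by
    apply cauchySeq_of_le_tendsto_0 (fun n : ℕ => L/2 * (1/(n+1) * ‖h‖^2)) _ hb
    intro n m N hn hm
    rw [dist_eq_norm]
    have hpn : (0:ℝ) < 1/((n:ℝ)+1) := by positivity
    have hpm : (0:ℝ) < 1/((m:ℝ)+1) := by positivity
    have hmax : max (1/((n:ℝ)+1)) (1/((m:ℝ)+1)) ≤ 1/((N:ℝ)+1) := by
      refine max_le ?_ ?_
      · apply div_le_div_of_nonneg_left (by norm_num) (by positivity)
        have : (N:ℝ) ≤ (n:ℝ) := Nat.cast_le.2 hn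
        linarith
      · apply div_le_div_of_nonneg_left (by norm_num) (by positivity)
        have : (N:ℝ) ≤ (m:ℝ) := Nat.cast_le.2 hm
        linarith
    calc ‖a n - a m‖ ≤ L/2 * (max (1/((n:ℝ)+1)) (1/((m:ℝ)+1)) * ‖h‖^2) := hcau _ _ hpn hpm
      _ ≤ L/2 * (1/((N:ℝ)+1) * ‖h‖^2) := by
          apply mul_le_mul_of_nonneg_left _ (by linarith)
          exact mul_le_mul_of_nonneg_right hmax (by positivity)
  obtain ⟨l, hl⟩ := cauchySeq_tendsto_of_complete hca
  refine ⟨l, fun t ht => ?_⟩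
  have htd : Filter.Tendsto (fun n : ℕ => ‖F t - a n‖) Filter.atTop (nhds ‖F t - l‖) :=
    (Filter.Tendsto.sub tendsto_const_nhds hl).norm
  refine le_of_tendsto htd ?_
  obtain ⟨N, hN⟩ := exists_nat_one_div_lt ht
  rw [Filter.eventually_atTop]
  refine ⟨N, fun n hn => ?_⟩
  have hsmall : 1/((n:ℝ)+1) ≤ t := by
    have h1 : 1/((n:ℝ)+1) ≤ 1/((N:ℝ)+1) := by
      apply div_le_div_of_nonneg_left (by norm_num) (by positivity)
      have : (N:ℝ) ≤ (n:ℝ) := Nat.cast_le.2 hn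
      linarith
    linarith [hN]
  have hpn : (0:ℝ) < 1/((n:ℝ)+1) := by positivity
  calc ‖F t - a n‖ ≤ L/2 * (max (1/((n:ℝ)+1)) t * ‖h‖^2) := by
        have := hcau (1/((n:ℝ)+1)) t hpn ht
        rw [norm_sub_rev] at this; exact this
    _ = L/2 * (t * ‖h‖^2) := by rw [max_eq_right hsmall]

-- helper: a vector whose norm is ≤ C*t for all t>0 is zero
lemma norm_zero_helper (d : X) (C : ℝ) (h : ∀ t : ℝ, 0 < t → ‖d‖ ≤ C * t) : d = 0 := by
  rw [← norm_le_zero_iff]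
  refine le_of_forall_pos_le_add (fun ε hε => ?_)
  have hC : 0 ≤ C := by
    have h1 := h 1 one_pos
    nlinarith [norm_nonneg d]
  have := h (ε / (C+1)) (by positivity)
  have hc1 : C * (ε / (C+1)) ≤ ε := by
    rw [div_eq_inv_mul, ← mul_assoc]
    have : C * (C+1)⁻¹ ≤ 1 := by
      rw [mul_inv_le_iff₀ (by linarith)]; linarith
    nlinarith [hε.le]
  linarith

section Aprops
variable {A : X → X → X}
variable (hL : 0 < L) (hS : JS L g)
variable (hA : ∀ x h : X, ∀ t : ℝ, 0 < t →
  ‖t⁻¹ • (g (x + t • h) - g x) - A x h‖ ≤ L/2 * (t * ‖h‖^2))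
include hL hS hA

lemma A_uniq (x h l : X) (C : ℝ)
    (hl : ∀ t : ℝ, 0 < t → ‖t⁻¹ • (g (x + t • h) - g x) - l‖ ≤ C * t) : l = A x h := by
  have : ∀ t : ℝ, 0 < t → ‖l - A x h‖ ≤ (C + L/2 * ‖h‖^2) * t := by
    intro t ht
    have h1 := hl t ht
    have h2 := hA x h t ht
    have h3 : l - A x h = -(t⁻¹ • (g (x + t • h) - g x) - l)
        + (t⁻¹ • (g (x + t • h) - g x) - A x h) := by abel
    calc ‖l - A x h‖ ≤ ‖t⁻¹ • (g (x + t • h) - g x) - l‖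
          + ‖t⁻¹ • (g (x + t • h) - g x) - A x h‖ := by
          rw [h3]; refine (norm_add_le _ _).trans ?_; rw [norm_neg]
      _ ≤ C * t + L/2 * (t * ‖h‖^2) := add_le_add h1 h2
      _ = (C + L/2 * ‖h‖^2) * t := by ring
  have := norm_zero_helper (l - A x h) _ this
  rw [sub_eq_zero] at this; exact this

lemma A_taylor (x v : X) : ‖g (x + v) - g x - A x v‖ ≤ L/2 * ‖v‖^2 := by
  have := hA x v 1 one_pos
  simpa using this

lemma A_zero (x : X) : A x 0 = 0 := by
  refine (A_uniq hL hS hA x 0 0 0 (fun t ht => ?_)).symm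
  simp

lemma A_neg (x h : X) : A x (-h) = - A x h := by
  refine (A_uniq hL hS hA x (-h) (-A x h) (3*L/2 * ‖h‖^2) (fun t ht => ?_)).symm
  have hmid := hS.midpoint x (t • h)
  have h2 := hA x h t ht
  have key : t⁻¹ • (g (x + t • (-h)) - g x) - (- A x h)
      = t⁻¹ • (g (x + t • h) + g (x + t • (-h)) - g x - g x)
        - (t⁻¹ • (g (x + t • h) - g x) - A x h) := by
    module
  rw [key]
  have emid : ‖g (x + t • h) + g (x + t • (-h)) - g x - g x‖ ≤ L * ‖t • h‖^2 := by
    have : x + t • (-h) = x - t • h := by module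
    rw [this]; exact hmid
  calc ‖_ - _‖ ≤ ‖t⁻¹ • (g (x + t • h) + g (x + t • (-h)) - g x - g x)‖
        + ‖t⁻¹ • (g (x + t • h) - g x) - A x h‖ := norm_sub_le _ _
    _ ≤ t⁻¹ * (L * ‖t • h‖^2) + L/2 * (t * ‖h‖^2) := by
        refine add_le_add ?_ h2
        rw [norm_smul, Real.norm_eq_abs, abs_of_pos (inv_pos.2 ht)]
        exact mul_le_mul_of_nonneg_left emid (by positivity)
    _ ≤ 3*L/2 * ‖h‖^2 * t := by
        rw [norm_smul, Real.norm_eq_abs, abs_of_pos ht, mul_pow]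
        have : t⁻¹ * (L * (t^2 * ‖h‖^2)) = L * t * ‖h‖^2 := by
          field_simp
        rw [this]; nlinarith [norm_nonneg h, sq_nonneg (‖h‖), ht.le]

lemma A_add (x h k : X) : A x (h + k) = A x h + A x k := by
  refine (A_uniq hL hS hA x (h+k) (A x h + A x k) (L * (‖h‖^2 + ‖k‖^2)) (fun t ht => ?_)).symm
  have h4 := hS.fourpoint (x + t • k) x (t • h)
  have hh := hA x h t ht
  have hk := hA x k t ht
  have e1 : x + t • k + t • h = x + t • (h + k) := by module
  rw [e1] at h4
  have key : t⁻¹ • (g (x + t • (h+k)) - g x) - (A x h + A x k)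
      = t⁻¹ • (g (x + t • (h+k)) - g (x + t • k) - (g (x + t • h) - g x))
        + (t⁻¹ • (g (x + t • h) - g x) - A x h)
        + (t⁻¹ • (g (x + t • k) - g x) - A x k) := by
    simp only [smul_sub]; abel
  rw [key]
  have hn4 : ‖t⁻¹ • (g (x + t • (h+k)) - g (x + t • k) - (g (x + t • h) - g x))‖
      ≤ t⁻¹ * (L/2 * (‖t • k‖^2 + ‖t • h‖^2)) := by
    rw [norm_smul, Real.norm_eq_abs, abs_of_pos (inv_pos.2 ht)]
    refine mul_le_mul_of_nonneg_left ?_ (by positivity)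
    have e2 : x + t • k - x = t • k := by abel
    calc ‖_‖ ≤ L/2 * (‖x + t • k - x‖^2 + ‖t • h‖^2) := h4
      _ = L/2 * (‖t • k‖^2 + ‖t • h‖^2) := by rw [e2]
  calc ‖_‖ ≤ ‖t⁻¹ • (g (x + t • (h+k)) - g (x + t • k) - (g (x + t • h) - g x))‖
        + ‖t⁻¹ • (g (x + t • h) - g x) - A x h‖
        + ‖t⁻¹ • (g (x + t • k) - g x) - A x k‖ := norm_add₃_le
    _ ≤ t⁻¹ * (L/2 * (‖t • k‖^2 + ‖t • h‖^2)) + L/2 * (t * ‖h‖^2) + L/2 * (t * ‖k‖^2) :=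
        add_le_add (add_le_add hn4 hh) hk
    _ = L * (‖h‖^2 + ‖k‖^2) * t := by
        rw [norm_smul, norm_smul, Real.norm_eq_abs, abs_of_pos ht, mul_pow, mul_pow]
        field_simp; ring

lemma A_smul_pos (x h : X) (c : ℝ) (hc : 0 < c) : A x (c • h) = c • A x h := by
  refine (A_uniq hL hS hA x (c • h) (c • A x h) (L/2 * c^2 * ‖h‖^2) (fun t ht => ?_)).symm
  have h2 := hA x h (c * t) (by positivity)
  have e0 : x + t • (c • h) = x + (c*t) • h := by module
  have e1 : t⁻¹ • (g (x + (c*t) • h) - g x) - c • A x h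
      = c • ((c*t)⁻¹ • (g (x + (c*t) • h) - g x) - A x h) := by
    match_scalars <;> field_simp
  rw [e0, e1, norm_smul, Real.norm_eq_abs, abs_of_pos hc]
  calc c * ‖_‖ ≤ c * (L/2 * ((c*t) * ‖h‖^2)) :=
        mul_le_mul_of_nonneg_left h2 hc.le
    _ = L/2 * c^2 * ‖h‖^2 * t := by ring

lemma A_smul (x h : X) (c : ℝ) : A x (c • h) = c • A x h := by
  rcases lt_trichotomy c 0 with hc | hc | hc
  · have : c • h = (-c) • (-h) := by module
    rw [this, A_smul_pos hL hS hA x (-h) (-c) (by linarith), A_neg hL hS hA]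
    module
  · subst hc; simp [A_zero hL hS hA]
  · exact A_smul_pos hL hS hA x h c hc

lemma A_vecLip (w z u : X) (τ : ℝ) (hτ : 0 < τ) :
    ‖A w u - A z u‖ ≤ 3*L/2 * (τ * ‖u‖^2) + L/2 * ‖w - z‖^2 / τ := by
  have hw := hA w u τ hτ
  have hz := hA z u τ hτ
  have h4 := hS.fourpoint w z (τ • u)
  have key : A w u - A z u
      = -(τ⁻¹ • (g (w + τ • u) - g w) - A w u)
        + τ⁻¹ • (g (w + τ • u) - g w - (g (z + τ • u) - g z))
        + (τ⁻¹ • (g (z + τ • u) - g z) - A z u) := by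
    module
  rw [key]
  have hmid : ‖τ⁻¹ • (g (w + τ • u) - g w - (g (z + τ • u) - g z))‖
      ≤ τ⁻¹ * (L/2 * (‖w - z‖^2 + ‖τ • u‖^2)) := by
    rw [norm_smul, Real.norm_eq_abs, abs_of_pos (inv_pos.2 hτ)]
    exact mul_le_mul_of_nonneg_left h4 (by positivity)
  calc ‖_‖ ≤ ‖-(τ⁻¹ • (g (w + τ • u) - g w) - A w u)‖
        + ‖τ⁻¹ • (g (w + τ • u) - g w - (g (z + τ • u) - g z))‖
        + ‖τ⁻¹ • (g (z + τ • u) - g z) - A z u‖ := norm_add₃_le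
    _ ≤ L/2 * (τ * ‖u‖^2) + τ⁻¹ * (L/2 * (‖w - z‖^2 + ‖τ • u‖^2)) + L/2 * (τ * ‖u‖^2) := by
        rw [norm_neg]; exact add_le_add (add_le_add hw hmid) hz
    _ = 3*L/2 * (τ * ‖u‖^2) + L/2 * ‖w - z‖^2 / τ := by
        rw [norm_smul, Real.norm_eq_abs, abs_of_pos hτ, mul_pow]
        field_simp; ring

end Aprops

-- scalar helpers
lemma abs_zero_helper (r C : ℝ) (h : ∀ t : ℝ, 0 < t → |r| ≤ C * t) : r = 0 :=
  norm_zero_helper (X := ℝ) r C (by simpa [Real.norm_eq_abs] using h)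

lemma le_add_helper {a b C : ℝ} (hC : 0 ≤ C) (h : ∀ t : ℝ, 0 < t → a ≤ b + C * t) : a ≤ b := by
  refine le_of_forall_pos_le_add (fun ε hε => ?_)
  have := h (ε / (C+1)) (by positivity)
  have hc1 : C * (ε / (C+1)) ≤ ε := by
    rw [div_eq_inv_mul, ← mul_assoc]
    have : C * (C+1)⁻¹ ≤ 1 := by
      rw [mul_inv_le_iff₀ (by linarith)]; linarith
    nlinarith [hε.le]
  linarith

lemma lineHasDerivAt {f : X → ℝ} {g : X → X} (hg : ∀ w, HasGradientAt f (g w) w)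
    (z u : X) (t : ℝ) : HasDerivAt (fun s : ℝ => f (z + s • u)) ⟪g (z + t • u), u⟫ t := by
  have hc : HasDerivAt (fun s : ℝ => z + s • u) u t := by
    simpa using ((hasDerivAt_id t).smul_const u).const_add z
  have := ((hg (z + t • u)).hasFDerivAt.comp_hasDerivAt t hc)
  simpa [InnerProductSpace.toDual_apply_apply, Function.comp_def] using this

section Flayer
variable {A : X → X → X} {f : X → ℝ}
variable (hL : 0 < L) (hS : JS L g)
variable (hA : ∀ x h : X, ∀ t : ℝ, 0 < t →
  ‖t⁻¹ • (g (x + t • h) - g x) - A x h‖ ≤ L/2 * (t * ‖h‖^2))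
variable (hg : ∀ w, HasGradientAt f (g w) w)
include hL hS hA hg

lemma taylor2 (z u : X) :
    |f (z + u) - f z - ⟪g z, u⟫ - 1/2 * ⟪A z u, u⟫| ≤ L/2 * ‖u‖^3 := by
  set c1 := ⟪g z, u⟫ with hc1
  set c2 := ⟪A z u, u⟫ with hc2
  set φ : ℝ → ℝ := fun t => f (z + t • u) - t * c1 - t^2/2 * c2 with hφ
  have hder : ∀ t : ℝ, HasDerivAt φ (⟪g (z + t • u), u⟫ - c1 - t * c2) t := by
    intro t
    have h1 := lineHasDerivAt hg z u t
    have h2 : HasDerivAt (fun t : ℝ => t * c1) c1 t := by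
      simpa using (hasDerivAt_id t).mul_const c1
    have h3 : HasDerivAt (fun t : ℝ => t^2/2 * c2) (t * c2) t := by
      have h3' := ((hasDerivAt_pow 2 t).div_const 2).mul_const c2
      have e : ((2:ℕ) * t ^ (2-1) / 2 * c2) = t * c2 := by push_cast; ring
      rw [e] at h3'
      exact h3'
    exact (h1.sub h2).sub h3
  have hbnd : ∀ t ∈ Set.Ico (0:ℝ) 1, ‖⟪g (z + t • u), u⟫ - c1 - t * c2‖ ≤ L/2 * ‖u‖^3 := by
    intro t ht
    have heq : ⟪g (z + t • u), u⟫ - c1 - t * c2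
        = ⟪g (z + t • u) - g z - A z (t • u), u⟫ := by
      rw [hc1, hc2, inner_sub_left, inner_sub_left,
        A_smul hL hS hA z u t, real_inner_smul_left]
    have hnorm : ‖g (z + t • u) - g z - A z (t • u)‖ ≤ L/2 * ‖u‖^2 := by
      calc ‖g (z + t • u) - g z - A z (t • u)‖ ≤ L/2 * ‖t • u‖^2 := A_taylor hL hS hA z (t • u)
        _ ≤ L/2 * ‖u‖^2 := by
            rw [norm_smul, Real.norm_eq_abs, abs_of_nonneg ht.1, mul_pow]
            have ht2 : t^2 ≤ 1 := by nlinarith [ht.1, ht.2]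
            have h9 : t^2 * ‖u‖^2 ≤ ‖u‖^2 := by nlinarith [sq_nonneg ‖u‖]
            exact mul_le_mul_of_nonneg_left h9 (by positivity)
    rw [heq, Real.norm_eq_abs]
    calc |⟪g (z + t • u) - g z - A z (t • u), u⟫|
        ≤ ‖g (z + t • u) - g z - A z (t • u)‖ * ‖u‖ := abs_real_inner_le_norm _ _
      _ ≤ L/2 * ‖u‖^2 * ‖u‖ := mul_le_mul_of_nonneg_right hnorm (norm_nonneg u)
      _ = L/2 * ‖u‖^3 := by ring
  have hmvt := norm_image_sub_le_of_norm_deriv_le_segment'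
    (f := φ) (a := 0) (b := 1)
    (fun t _ => (hder t).hasDerivWithinAt) hbnd 1 (by constructor <;> norm_num)
  have e0 : φ 0 = f z := by simp [hφ]
  have e1 : φ 1 = f (z + u) - c1 - 1/2 * c2 := by
    norm_num [hφ]
  rw [e0, e1, Real.norm_eq_abs] at hmvt
  calc |f (z + u) - f z - c1 - 1/2 * c2| = |f (z + u) - c1 - 1/2 * c2 - f z| := by ring_nf
    _ ≤ L/2 * ‖u‖^3 * (1 - 0) := hmvt
    _ = L/2 * ‖u‖^3 := by ring

lemma qbound (x : X) : ∃ K : ℝ, 0 ≤ K ∧ ∀ u : X, |⟪A x u, u⟫| ≤ K * ‖u‖^2 := by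
  have hcont : ContinuousAt f x := (hg x).hasFDerivAt.differentiableAt.continuousAt
  obtain ⟨δ, hδ, hδf⟩ := Metric.continuousAt_iff.1 hcont 1 one_pos
  set d := δ/2 with hd
  have hd0 : 0 < d := by positivity
  set C0 : ℝ := 2 * (1 + ‖g x‖ * d + L/2 * d^3) with hC0
  have hC00 : 0 < C0 := by positivity
  have hsmall : ∀ u : X, ‖u‖ ≤ d → |⟪A x u, u⟫| ≤ C0 := by
    intro u hu
    have hT := taylor2 hL hS hA hg x u
    have hfd : |f (x + u) - f x| ≤ 1 := by
      rcases eq_or_ne u 0 with rfl | hu0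
      · simp
      have : dist (x + u) x < δ := by
        rw [dist_eq_norm]
        simp only [add_sub_cancel_left]
        calc ‖u‖ ≤ d := hu
          _ < δ := by rw [hd]; linarith
      have := hδf this
      rw [Real.dist_eq] at this
      exact this.le
    have hinner : |⟪g x, u⟫| ≤ ‖g x‖ * d := by
      calc |⟪g x, u⟫| ≤ ‖g x‖ * ‖u‖ := abs_real_inner_le_norm _ _
        _ ≤ ‖g x‖ * d := mul_le_mul_of_nonneg_left hu (norm_nonneg _)
    have hu3 : ‖u‖^3 ≤ d^3 := by
      have h0 := norm_nonneg u
      nlinarith [hu, h0, hd0.le, sq_nonneg (‖u‖ + d), sq_nonneg (‖u‖ - d)]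
    have h1 : |1/2 * ⟪A x u, u⟫| ≤ |f (x + u) - f x| + |⟪g x, u⟫| + L/2 * ‖u‖^3 := by
      have := abs_sub_abs_le_abs_sub (1/2 * ⟪A x u, u⟫) (f (x + u) - f x - ⟪g x, u⟫)
      have htri : |1/2 * ⟪A x u, u⟫| ≤ |f (x + u) - f x - ⟪g x, u⟫ - 1/2 * ⟪A x u, u⟫|
          + |f (x + u) - f x - ⟪g x, u⟫| := by
        have : 1/2 * ⟪A x u, u⟫ = (f (x + u) - f x - ⟪g x, u⟫)
            - (f (x + u) - f x - ⟪g x, u⟫ - 1/2 * ⟪A x u, u⟫) := by ring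
        rw [this]
        calc |_ - _| ≤ |f (x + u) - f x - ⟪g x, u⟫|
            + |f (x + u) - f x - ⟪g x, u⟫ - 1/2 * ⟪A x u, u⟫| := abs_sub _ _
          _ = _ := by ring
      calc |1/2 * ⟪A x u, u⟫| ≤ |f (x + u) - f x - ⟪g x, u⟫ - 1/2 * ⟪A x u, u⟫|
            + |f (x + u) - f x - ⟪g x, u⟫| := htri
        _ ≤ L/2 * ‖u‖^3 + (|f (x + u) - f x| + |⟪g x, u⟫|) := by
            refine add_le_add hT ?_
            exact abs_sub _ _
        _ = |f (x + u) - f x| + |⟪g x, u⟫| + L/2 * ‖u‖^3 := by ring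
    have : |⟪A x u, u⟫| = 2 * |1/2 * ⟪A x u, u⟫| := by
      rw [abs_mul, abs_of_nonneg (by norm_num : (0:ℝ) ≤ (1:ℝ)/2)]; ring
    rw [this]
    calc 2 * |1/2 * ⟪A x u, u⟫| ≤ 2 * (|f (x + u) - f x| + |⟪g x, u⟫| + L/2 * ‖u‖^3) := by
          linarith [h1]
      _ ≤ C0 := by
          rw [hC0]
          have : L/2 * ‖u‖^3 ≤ L/2 * d^3 := by nlinarith [hL.le]
          linarith [hfd, hinner]
  refine ⟨C0 / d^2, by positivity, fun u => ?_⟩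
  rcases eq_or_ne u 0 with rfl | hu0
  · simp [A_zero hL hS hA]
  have hun : 0 < ‖u‖ := norm_pos_iff.2 hu0
  set c : ℝ := d / ‖u‖ with hc
  have hc0 : 0 < c := by positivity
  have hscale : ⟪A x (c • u), c • u⟫ = c^2 * ⟪A x u, u⟫ := by
    rw [A_smul hL hS hA, real_inner_smul_left, real_inner_smul_right]; ring
  have hcu : ‖c • u‖ ≤ d := by
    rw [norm_smul, Real.norm_eq_abs, abs_of_pos hc0, hc]
    rw [div_mul_cancel₀ _ hun.ne']
  have := hsmall (c • u) hcu
  rw [hscale, abs_mul, abs_of_nonneg (by positivity : (0:ℝ) ≤ c^2)] at this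
  have h2 : |⟪A x u, u⟫| = (c^2 * |⟪A x u, u⟫|) * (‖u‖^2/d^2) := by
    rw [hc]; field_simp
  rw [h2]
  calc (c^2 * |⟪A x u, u⟫|) * (‖u‖^2/d^2) ≤ C0 * (‖u‖^2/d^2) :=
        mul_le_mul_of_nonneg_right this (by positivity)
    _ = C0 / d^2 * ‖u‖^2 := by ring

lemma symm_aux (x u v : X) (t : ℝ) (ht : 0 < t) :
    |(f (x + t•v + t•u) - f (x + t•u) - f (x + t•v) + f x) - t^2 * ⟪A x v, u⟫|
      ≤ t^3 * (L * ‖u‖ * (2*‖v‖^2 + ‖u‖^2/2)) := by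
  set cv := ⟪A x v, u⟫ with hcv
  set χ : ℝ → ℝ := fun s => f (x + t•v + s•(t•u)) - f (x + s•(t•u)) - s*(t^2*cv) with hχ
  have hder : ∀ s : ℝ, HasDerivAt χ
      (⟪g (x + t•v + s•(t•u)), t•u⟫ - ⟪g (x + s•(t•u)), t•u⟫ - t^2*cv) s := by
    intro s
    have hlin : HasDerivAt (fun s : ℝ => s*(t^2*cv)) (t^2*cv) s := by
      simpa using (hasDerivAt_id s).mul_const (t^2*cv)
    exact ((lineHasDerivAt hg (x+t•v) (t•u) s).sub (lineHasDerivAt hg x (t•u) s)).sub hlin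
  have hbnd : ∀ s ∈ Set.Ico (0:ℝ) 1,
      ‖⟪g (x + t•v + s•(t•u)), t•u⟫ - ⟪g (x + s•(t•u)), t•u⟫ - t^2*cv‖
        ≤ t^3 * (L * ‖u‖ * (2*‖v‖^2 + ‖u‖^2/2)) := by
    intro s hs
    set z₂ := x + s•(t•u) with hz₂
    have harg : x + t•v + s•(t•u) = z₂ + t•v := by rw [hz₂]; module
    have heq : ⟪g (x + t•v + s•(t•u)), t•u⟫ - ⟪g (x + s•(t•u)), t•u⟫ - t^2*cv
        = ⟪g (z₂ + t•v) - g z₂ - A z₂ (t•v), t•u⟫ + t^2 * (⟪A z₂ v, u⟫ - ⟪A x v, u⟫) := by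
      rw [harg, hcv, A_smul hL hS hA z₂ v t]
      simp only [inner_sub_left, real_inner_smul_left, real_inner_smul_right]
      ring
    rw [heq, Real.norm_eq_abs]
    have h1 : |⟪g (z₂ + t•v) - g z₂ - A z₂ (t•v), t•u⟫| ≤ L/2 * (t^2*‖v‖^2) * (t*‖u‖) := by
      calc |⟪g (z₂ + t•v) - g z₂ - A z₂ (t•v), t•u⟫|
          ≤ ‖g (z₂ + t•v) - g z₂ - A z₂ (t•v)‖ * ‖t•u‖ := abs_real_inner_le_norm _ _
        _ ≤ (L/2 * ‖t•v‖^2) * ‖t•u‖ :=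
            mul_le_mul_of_nonneg_right (A_taylor hL hS hA z₂ (t•v)) (norm_nonneg _)
        _ = L/2 * (t^2*‖v‖^2) * (t*‖u‖) := by
            rw [norm_smul, norm_smul, Real.norm_eq_abs, abs_of_pos ht, mul_pow]; try ring
    have h2 : ‖A z₂ v - A x v‖ ≤ 3*L/2 * (t*‖v‖^2) + L/2 * (t*‖u‖^2) := by
      have := A_vecLip hL hS hA z₂ x v t ht
      have hdist : ‖z₂ - x‖^2 ≤ t^2*‖u‖^2 := by
        rw [hz₂, add_sub_cancel_left, norm_smul, norm_smul, Real.norm_eq_abs,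
          Real.norm_eq_abs, abs_of_nonneg hs.1, abs_of_pos ht, mul_pow, mul_pow]
        have hs2 : s^2 ≤ 1 := by nlinarith [hs.1, hs.2]
        nlinarith [sq_nonneg (t*‖u‖), mul_pos ht ht]
      calc ‖A z₂ v - A x v‖ ≤ 3*L/2 * (t*‖v‖^2) + L/2 * ‖z₂ - x‖^2 / t := this
        _ ≤ 3*L/2 * (t*‖v‖^2) + L/2 * (t*‖u‖^2) := by
            have : L/2 * ‖z₂ - x‖^2 / t ≤ L/2 * (t*‖u‖^2) := by
              rw [div_le_iff₀ ht]
              calc L/2 * ‖z₂ - x‖^2 ≤ L/2 * (t^2*‖u‖^2) :=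
                    mul_le_mul_of_nonneg_left hdist (by positivity)
                _ = L/2 * (t*‖u‖^2) * t := by ring
            linarith
    have h3 : |t^2 * (⟪A z₂ v, u⟫ - ⟪A x v, u⟫)|
        ≤ t^2 * ((3*L/2 * (t*‖v‖^2) + L/2 * (t*‖u‖^2)) * ‖u‖) := by
      rw [abs_mul, abs_of_nonneg (sq_nonneg t), ← inner_sub_left]
      refine mul_le_mul_of_nonneg_left ?_ (sq_nonneg t)
      calc |⟪A z₂ v - A x v, u⟫| ≤ ‖A z₂ v - A x v‖ * ‖u‖ := abs_real_inner_le_norm _ _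
        _ ≤ _ := mul_le_mul_of_nonneg_right h2 (norm_nonneg u)
    calc |_ + _| ≤ _ + _ := abs_add_le _ _
      _ ≤ L/2 * (t^2*‖v‖^2) * (t*‖u‖)
          + t^2 * ((3*L/2 * (t*‖v‖^2) + L/2 * (t*‖u‖^2)) * ‖u‖) := add_le_add h1 h3
      _ = t^3 * (L * ‖u‖ * (2*‖v‖^2 + ‖u‖^2/2)) := by ring
  have hmvt := norm_image_sub_le_of_norm_deriv_le_segment'
    (f := χ) (a := 0) (b := 1)
    (fun s _ => (hder s).hasDerivWithinAt) hbnd 1 (by constructor <;> norm_num)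
  have e0 : χ 0 = f (x + t•v) - f x := by simp [hχ]
  have e1 : χ 1 = f (x + t•v + t•u) - f (x + t•u) - t^2*cv := by
    simp [hχ]
  rw [e0, e1, Real.norm_eq_abs] at hmvt
  calc |(f (x + t•v + t•u) - f (x + t•u) - f (x + t•v) + f x) - t^2 * cv|
      = |f (x + t•v + t•u) - f (x + t•u) - t^2*cv - (f (x + t•v) - f x)| := by ring_nf
    _ ≤ t^3 * (L * ‖u‖ * (2*‖v‖^2 + ‖u‖^2/2)) * (1 - 0) := hmvt
    _ = t^3 * (L * ‖u‖ * (2*‖v‖^2 + ‖u‖^2/2)) := by ring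

lemma A_symm (x u v : X) : ⟪A x u, v⟫ = ⟪A x v, u⟫ := by
  have C1 := L * ‖u‖ * (2*‖v‖^2 + ‖u‖^2/2)
  have key : ∀ t : ℝ, 0 < t → |⟪A x v, u⟫ - ⟪A x u, v⟫|
      ≤ (L * ‖u‖ * (2*‖v‖^2 + ‖u‖^2/2) + L * ‖v‖ * (2*‖u‖^2 + ‖v‖^2/2)) * t := by
    intro t ht
    have h1 := symm_aux hL hS hA hg x u v t ht
    have h2 := symm_aux hL hS hA hg x v u t ht
    have e : x + t•u + t•v = x + t•v + t•u := by module
    rw [e] at h2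
    have e2 : f (x + t•v + t•u) - f (x + t•v) - f (x + t•u) + f x
        = f (x + t•v + t•u) - f (x + t•u) - f (x + t•v) + f x := by ring
    rw [e2] at h2
    have htri : t^2 * |⟪A x v, u⟫ - ⟪A x u, v⟫|
        ≤ t^3 * (L * ‖u‖ * (2*‖v‖^2 + ‖u‖^2/2)) + t^3 * (L * ‖v‖ * (2*‖u‖^2 + ‖v‖^2/2)) := by
      set Δ := f (x + t•v + t•u) - f (x + t•u) - f (x + t•v) + f x with hΔ
      have hdiff : t^2*(⟪A x v, u⟫ - ⟪A x u, v⟫)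
          = (Δ - t^2*⟪A x u, v⟫) - (Δ - t^2*⟪A x v, u⟫) := by ring
      calc t^2 * |⟪A x v, u⟫ - ⟪A x u, v⟫|
          = |t^2 * (⟪A x v, u⟫ - ⟪A x u, v⟫)| := by rw [abs_mul, abs_of_nonneg (sq_nonneg t)]
        _ = |(Δ - t^2*⟪A x u, v⟫) - (Δ - t^2*⟪A x v, u⟫)| := by rw [hdiff]
        _ ≤ |Δ - t^2*⟪A x u, v⟫| + |Δ - t^2*⟪A x v, u⟫| := abs_sub _ _
        _ ≤ _ := by have := add_le_add h2 h1; linarith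
    have ht2 : (0:ℝ) < t^2 := by positivity
    have := le_of_mul_le_mul_left (a := t^2) (by
      calc t^2 * |⟪A x v, u⟫ - ⟪A x u, v⟫| ≤ _ := htri
        _ = t^2 * ((L * ‖u‖ * (2*‖v‖^2 + ‖u‖^2/2) + L * ‖v‖ * (2*‖u‖^2 + ‖v‖^2/2)) * t) := by
          ring) ht2
    exact this
  have := abs_zero_helper _ _ key
  linarith [this]

lemma A_qdiff (x y u : X) : |⟪A x u, u⟫ - ⟪A y u, u⟫| ≤ L * ‖x - y‖ * ‖u‖^2 := by
  have hE : ∀ z : X, ∀ t : ℝ, 0 < t →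
      |f (z + t•u) + f (z - t•u) - 2*f z - t^2*⟪A z u, u⟫| ≤ L * t^3 * ‖u‖^3 := by
    intro z t ht
    have h1 := taylor2 hL hS hA hg z (t•u)
    have h2 := taylor2 hL hS hA hg z (-(t•u))
    have e1 : z + -(t•u) = z - t•u := by module
    rw [e1] at h2
    have ei1 : ⟪g z, t•u⟫ = t * ⟪g z, u⟫ := real_inner_smul_right _ _ _
    have ei2 : ⟪g z, -(t•u)⟫ = -(t * ⟪g z, u⟫) := by
      rw [inner_neg_right, ei1]
    have eA1 : ⟪A z (t•u), t•u⟫ = t^2 * ⟪A z u, u⟫ := by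
      rw [A_smul hL hS hA, real_inner_smul_left, real_inner_smul_right]; ring
    have eA2 : ⟪A z (-(t•u)), -(t•u)⟫ = t^2 * ⟪A z u, u⟫ := by
      rw [A_neg hL hS hA, inner_neg_left, inner_neg_right, eA1]; ring
    have en : ‖-(t•u)‖ = t * ‖u‖ := by
      rw [norm_neg, norm_smul, Real.norm_eq_abs, abs_of_pos ht]
    have en2 : ‖t•u‖ = t * ‖u‖ := by
      rw [norm_smul, Real.norm_eq_abs, abs_of_pos ht]
    rw [ei1, eA1, en2] at h1
    rw [ei2, eA2, en] at h2
    have goal_eq : f (z + t•u) + f (z - t•u) - 2*f z - t^2*⟪A z u, u⟫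
        = (f (z + t•u) - f z - t * ⟪g z, u⟫ - 1/2 * (t^2 * ⟪A z u, u⟫))
          + (f (z - t•u) - f z - -(t * ⟪g z, u⟫) - 1/2 * (t^2 * ⟪A z u, u⟫)) := by ring
    rw [goal_eq]
    calc |_ + _| ≤ _ + _ := abs_add_le _ _
      _ ≤ L/2 * (t*‖u‖)^3 + L/2 * (t*‖u‖)^3 := add_le_add h1 h2
      _ = L * t^3 * ‖u‖^3 := by ring
  have hD : ∀ t : ℝ, 0 < t →
      |(f (x + t•u) + f (x - t•u) - 2*f x) - (f (y + t•u) + f (y - t•u) - 2*f y)|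
        ≤ L * t^2 * ‖u‖^2 * ‖x - y‖ := by
    intro t ht
    set η : ℝ → ℝ := fun s =>
      f ((y + t•u) + s•(x-y)) + f ((y - t•u) + s•(x-y)) - 2*f (y + s•(x-y)) with hη
    have hder : ∀ s : ℝ, HasDerivAt η
        (⟪g ((y + t•u) + s•(x-y)), x-y⟫ + ⟪g ((y - t•u) + s•(x-y)), x-y⟫
          - 2*⟪g (y + s•(x-y)), x-y⟫) s := by
      intro s
      have ha := lineHasDerivAt hg (y + t•u) (x-y) s
      have hb := lineHasDerivAt hg (y - t•u) (x-y) s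
      have hc := (lineHasDerivAt hg y (x-y) s).const_mul 2
      exact (ha.add hb).sub hc
    have hbnd : ∀ s ∈ Set.Ico (0:ℝ) 1,
        ‖⟪g ((y + t•u) + s•(x-y)), x-y⟫ + ⟪g ((y - t•u) + s•(x-y)), x-y⟫
          - 2*⟪g (y + s•(x-y)), x-y⟫‖ ≤ L * t^2 * ‖u‖^2 * ‖x - y‖ := by
      intro s hs
      set w := y + s•(x-y) with hw
      have ea : (y + t•u) + s•(x-y) = w + t•u := by rw [hw]; module
      have eb : (y - t•u) + s•(x-y) = w - t•u := by rw [hw]; module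
      have heq : ⟪g ((y + t•u) + s•(x-y)), x-y⟫ + ⟪g ((y - t•u) + s•(x-y)), x-y⟫
          - 2*⟪g (y + s•(x-y)), x-y⟫ = ⟪g (w + t•u) + g (w - t•u) - g w - g w, x-y⟫ := by
        rw [ea, eb, inner_sub_left, inner_sub_left, inner_add_left]
        ring
      rw [heq, Real.norm_eq_abs]
      calc |⟪g (w + t•u) + g (w - t•u) - g w - g w, x-y⟫|
          ≤ ‖g (w + t•u) + g (w - t•u) - g w - g w‖ * ‖x-y‖ := abs_real_inner_le_norm _ _
        _ ≤ (L * ‖t•u‖^2) * ‖x-y‖ :=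
            mul_le_mul_of_nonneg_right (hS.midpoint w (t•u)) (norm_nonneg _)
        _ = L * t^2 * ‖u‖^2 * ‖x - y‖ := by
            rw [norm_smul, Real.norm_eq_abs, abs_of_pos ht, mul_pow]; ring
    have hmvt := norm_image_sub_le_of_norm_deriv_le_segment'
      (f := η) (a := 0) (b := 1)
      (fun s _ => (hder s).hasDerivWithinAt) hbnd 1 (by constructor <;> norm_num)
    have e0 : η 0 = f (y + t•u) + f (y - t•u) - 2*f y := by simp [hη]
    have e1 : η 1 = f (x + t•u) + f (x - t•u) - 2*f x := by
      have c1 : (y + t•u) + (1:ℝ)•(x-y) = x + t•u := by module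
      have c2 : (y - t•u) + (1:ℝ)•(x-y) = x - t•u := by module
      have c3 : y + (1:ℝ)•(x-y) = x := by module
      rw [hη]; simp only [c1, c2, c3]
    rw [e0, e1, Real.norm_eq_abs] at hmvt
    calc |_| ≤ L * t^2 * ‖u‖^2 * ‖x - y‖ * (1 - 0) := hmvt
      _ = L * t^2 * ‖u‖^2 * ‖x - y‖ := by ring
  refine le_add_helper (C := 2 * L * ‖u‖^3) (by positivity) (fun t ht => ?_)
  have h1 := hE x t ht
  have h2 := hE y t ht
  have h3 := hD t ht
  have ht2 : (0:ℝ) < t^2 := by positivity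
  have key : t^2 * |⟪A x u, u⟫ - ⟪A y u, u⟫|
      ≤ t^2 * (L * ‖x - y‖ * ‖u‖^2 + 2 * L * ‖u‖^3 * t) := by
    set Ex := f (x + t•u) + f (x - t•u) - 2*f x with hEx
    set Ey := f (y + t•u) + f (y - t•u) - 2*f y with hEy
    have expand : t^2 * (⟪A x u, u⟫ - ⟪A y u, u⟫)
        = ((Ex - Ey) - (Ex - t^2*⟪A x u, u⟫)) + (Ey - t^2*⟪A y u, u⟫) := by ring
    calc t^2 * |⟪A x u, u⟫ - ⟪A y u, u⟫| = |t^2 * (⟪A x u, u⟫ - ⟪A y u, u⟫)| := by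
          rw [abs_mul, abs_of_nonneg (sq_nonneg t)]
      _ = |((Ex - Ey) - (Ex - t^2*⟪A x u, u⟫)) + (Ey - t^2*⟪A y u, u⟫)| := by rw [expand]
      _ ≤ |(Ex - Ey) - (Ex - t^2*⟪A x u, u⟫)| + |Ey - t^2*⟪A y u, u⟫| := abs_add_le _ _
      _ ≤ (|Ex - Ey| + |Ex - t^2*⟪A x u, u⟫|) + |Ey - t^2*⟪A y u, u⟫| :=
          add_le_add (abs_sub _ _) le_rfl
      _ ≤ (L * t^2 * ‖u‖^2 * ‖x - y‖ + L * t^3 * ‖u‖^3) + L * t^3 * ‖u‖^3 :=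
          add_le_add (add_le_add h3 h1) h2
      _ = t^2 * (L * ‖x - y‖ * ‖u‖^2 + 2 * L * ‖u‖^3 * t) := by ring
  exact le_of_mul_le_mul_left key ht2

end Flayer

lemma polarize {B : X → X} (hadd : ∀ u v, B (u+v) = B u + B v)
    (hsmul : ∀ (c : ℝ) (u : X), B (c•u) = c • B u)
    (hsym : ∀ u v, ⟪B u, v⟫ = ⟪B v, u⟫) {K : ℝ} (hK : 0 ≤ K)
    (hq : ∀ u, |⟪B u, u⟫| ≤ K * ‖u‖^2) : ∀ u, ‖B u‖ ≤ K * ‖u‖ := by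
  have hB0 : B 0 = 0 := by
    have := hsmul 0 0; simpa using this
  have key : ∀ u v : X, |⟪B u, v⟫| ≤ K/2 * (‖u‖^2 + ‖v‖^2) := by
    intro u v
    have h2 : B (u-v) = B u - B v := by
      have e : u - v = u + (-1:ℝ)•v := by module
      rw [e, hadd, hsmul]; module
    have e : ⟪B u, v⟫ = 1/4 * (⟪B (u+v), u+v⟫ - ⟪B (u-v), u-v⟫) := by
      rw [hadd, h2]
      simp only [inner_add_left, inner_add_right, inner_sub_left, inner_sub_right]
      rw [hsym v u]
      ring
    have par := parallelogram_law_with_norm ℝ u v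
    have b1 := hq (u+v)
    have b2 := hq (u-v)
    have habs := abs_sub (⟪B (u+v), u+v⟫) (⟪B (u-v), u-v⟫)
    rw [e]
    calc |1/4 * (⟪B (u+v), u+v⟫ - ⟪B (u-v), u-v⟫)|
        = 1/4 * |⟪B (u+v), u+v⟫ - ⟪B (u-v), u-v⟫| := by
          rw [abs_mul, abs_of_nonneg (by norm_num : (0:ℝ) ≤ (1:ℝ)/4)]
      _ ≤ 1/4 * (|⟪B (u+v), u+v⟫| + |⟪B (u-v), u-v⟫|) := by linarith
      _ ≤ 1/4 * (K * ‖u+v‖^2 + K * ‖u-v‖^2) := by linarith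
      _ = K/2 * (‖u‖^2 + ‖v‖^2) := by
          simp only [pow_two]; linear_combination (K/4) * par
  have hb : ∀ u v : X, |⟪B u, v⟫| ≤ K * ‖u‖ * ‖v‖ := by
    intro u v
    rcases eq_or_ne u 0 with rfl|hu
    · simp [hB0]
    rcases eq_or_ne v 0 with rfl|hv
    · simp
    have hun : 0 < ‖u‖ := norm_pos_iff.2 hu
    have hvn : 0 < ‖v‖ := norm_pos_iff.2 hv
    set s := Real.sqrt (‖v‖/‖u‖) with hs
    have hs0 : 0 < s := Real.sqrt_pos.2 (by positivity)
    have hs2 : s^2 = ‖v‖/‖u‖ := Real.sq_sqrt (by positivity)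
    have e : ⟪B u, v⟫ = ⟪B (s•u), s⁻¹•v⟫ := by
      rw [hsmul, real_inner_smul_left, real_inner_smul_right, ← mul_assoc,
        mul_inv_cancel₀ hs0.ne', one_mul]
    rw [e]
    have e1 : s^2 * ‖u‖^2 = ‖v‖*‖u‖ := by rw [hs2]; field_simp
    have e2 : (s⁻¹)^2 * ‖v‖^2 = ‖u‖*‖v‖ := by
      rw [inv_pow, hs2]
      field_simp
    calc |⟪B (s•u), s⁻¹•v⟫| ≤ K/2 * (‖s•u‖^2 + ‖s⁻¹•v‖^2) := key _ _
      _ = K * ‖u‖ * ‖v‖ := by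
          rw [norm_smul, norm_smul, Real.norm_eq_abs, Real.norm_eq_abs,
            abs_of_pos hs0, abs_of_pos (inv_pos.2 hs0), mul_pow, mul_pow, e1, e2]
          ring
  intro u
  rcases eq_or_ne (B u) 0 with h0|h0
  · rw [h0]; simp; positivity
  have hBn : 0 < ‖B u‖ := norm_pos_iff.2 h0
  have hbb := hb u (B u)
  rw [real_inner_self_eq_norm_mul_norm, abs_of_nonneg
    (mul_nonneg (norm_nonneg _) (norm_nonneg _))] at hbb
  exact le_of_mul_le_mul_right (by linarith) hBn

end

lemma JS_of_hineq {X : Type*} [NormedAddCommGroup X] [InnerProductSpace ℝ X] [CompleteSpace X]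
    (L : ℝ) (f : X → ℝ)
    (hineq : ∀ (n : ℕ) (x : Fin n → X) (lam : Fin n → ℝ), (∀ i, 0 ≤ lam i) → ∑ i, lam i = 1 →
      ‖gradient f (∑ i, lam i • x i) - ∑ i, lam i • gradient f (x i)‖ ≤
        L / 2 * ∑ i, ∑ j, if i < j then lam i * lam j * ‖x i - x j‖ ^ 2 else 0) :
    JS L (gradient f) := by
  intro a b t ht0 ht1
  have h := hineq 2 ![a, b] ![1-t, t] (by
      intro i; fin_cases i <;> simp [ht0] <;> linarith) (by simp)
  simpa [Fin.sum_univ_two, Fin.sum_univ_succ] using h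




/-- If `f : X → ℝ` (with `X` a real Hilbert space) is Fréchet differentiable and its gradient
satisfies the Jensen-type inequality, then `f` is twice differentiable (its gradient map is
Fréchet differentiable) and the Hessian is `L`-Lipschitz in the operator norm. -/
theorem twice_differentiable_of_gradient_jensen_inequality
    {X : Type*} [NormedAddCommGroup X] [InnerProductSpace ℝ X] [CompleteSpace X]
    (L : ℝ) (hL : 0 < L) (f : X → ℝ) (hf : Differentiable ℝ f)
    (hineq : ∀ (n : ℕ) (x : Fin n → X) (lam : Fin n → ℝ), (∀ i, 0 ≤ lam i) → ∑ i, lam i = 1 →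
      ‖gradient f (∑ i, lam i • x i) - ∑ i, lam i • gradient f (x i)‖ ≤
        L / 2 * ∑ i, ∑ j, if i < j then lam i * lam j * ‖x i - x j‖ ^ 2 else 0) :
    Differentiable ℝ (gradient f) ∧
      ∀ x y : X, ‖fderiv ℝ (gradient f) x - fderiv ℝ (gradient f) y‖ ≤ L * ‖x - y‖ := by
  classical
  set g := gradient f with hgdef
  have hg : ∀ w, HasGradientAt f (g w) w := fun w => (hf w).hasGradientAt
  have hS : JS L g := JS_of_hineq L f hineq
  have keyA : ∀ x h : X, ∃ l : X, ∀ t : ℝ, 0 < t →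
      ‖t⁻¹ • (g (x + t • h) - g x) - l‖ ≤ L/2 * (t * ‖h‖^2) :=
    fun x h => JS.keyA hL.le hS x h
  choose A hA using keyA
  have hKex : ∀ x : X, ∃ K : ℝ, 0 ≤ K ∧ ∀ u, ‖A x u‖ ≤ K * ‖u‖ := by
    intro x
    obtain ⟨K, hK0, hKq⟩ := qbound hL hS hA hg x
    exact ⟨K, hK0, polarize (fun u v => A_add hL hS hA x u v)
      (fun c u => A_smul hL hS hA x u c)
      (fun u v => A_symm hL hS hA hg x u v) hK0 hKq⟩
  have hT : ∀ x : X, ∃ T : X →L[ℝ] X, ∀ u, T u = A x u := by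
    intro x
    obtain ⟨K, hK0, hKb⟩ := hKex x
    exact ⟨LinearMap.mkContinuous
      { toFun := A x
        map_add' := fun u v => A_add hL hS hA x u v
        map_smul' := fun c u => by simpa using A_smul hL hS hA x u c } K (fun u => hKb u),
      fun u => rfl⟩
  choose T hTeq using hT
  have hfd : ∀ x, HasFDerivAt g (T x) x := by
    intro x
    rw [hasFDerivAt_iff_isLittleO_nhds_zero]
    rw [Asymptotics.isLittleO_iff]
    intro c hc
    have hr : 0 < 2*c/L := by positivity
    filter_upwards [Metric.ball_mem_nhds (0:X) hr] with v hv
    rw [mem_ball_zero_iff] at hv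
    have hbig : ‖g (x + v) - g x - T x v‖ ≤ L/2 * ‖v‖ * ‖v‖ := by
      rw [hTeq]
      have := A_taylor hL hS hA x v
      calc ‖g (x + v) - g x - A x v‖ ≤ L/2 * ‖v‖^2 := this
        _ = L/2 * ‖v‖ * ‖v‖ := by ring
    calc ‖g (x + v) - g x - T x v‖ ≤ L/2 * ‖v‖ * ‖v‖ := hbig
      _ ≤ c * ‖v‖ := by
          have : L/2 * ‖v‖ ≤ c := by
            have h1 : L/2 * ‖v‖ ≤ L/2 * (2*c/L) := by
              apply mul_le_mul_of_nonneg_left hv.le (by positivity)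
            have h2 : L/2 * (2*c/L) = c := by field_simp
            linarith
          nlinarith [norm_nonneg v]
  refine ⟨fun x => ⟨T x, hfd x⟩, fun x y => ?_⟩
  rw [(hfd x).fderiv, (hfd y).fderiv]
  refine ContinuousLinearMap.opNorm_le_bound _ (by positivity) (fun u => ?_)
  have happly : (T x - T y) u = A x u - A y u := by
    rw [ContinuousLinearMap.sub_apply, hTeq, hTeq]
  rw [happly]
  have hK0 : (0:ℝ) ≤ L * ‖x - y‖ := by positivity
  refine polarize (B := fun u => A x u - A y u) ?_ ?_ ?_ hK0 ?_ u
  · intro u v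
    show A x (u+v) - A y (u+v) = (A x u - A y u) + (A x v - A y v)
    rw [A_add hL hS hA, A_add hL hS hA]; abel
  · intro c u
    show A x (c•u) - A y (c•u) = c • (A x u - A y u)
    rw [A_smul hL hS hA, A_smul hL hS hA]; module
  · intro u v
    show ⟪A x u - A y u, v⟫ = ⟪A x v - A y v, u⟫
    rw [inner_sub_left, inner_sub_left, A_symm hL hS hA hg x u v, A_symm hL hS hA hg y u v]
  · intro u
    show |⟪A x u - A y u, u⟫| ≤ L * ‖x - y‖ * ‖u‖^2
    have := A_qdiff hL hS hA hg x y u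
    calc |⟪A x u - A y u, u⟫| = |⟪A x u, u⟫ - ⟪A y u, u⟫| := by rw [inner_sub_left]
      _ ≤ L * ‖x - y‖ * ‖u‖^2 := this
end

section
/- Let X be a real Hilbert space, β > 0, and let g : X → ℝ ∪ {+∞} be a proper, convex, lower semicontinuous function. Then the following are equivalent: (i) g takes only real values, g is Fréchet differentiable on X, and its gradient ∇g : X → X is (1/β)-cocoercive, i.e., ⟨∇g(x) − ∇g(y), x − y⟩ ≥ (1/β)‖∇g(x) − ∇g(y)‖² for all x, y ∈ X; (ii) the function x ↦ (β/2)‖x‖² − g(x) is convex. -/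
open RealInnerProductSpace

section BaillonHaddadAux

open Set Filter

variable {X : Type*} [NormedAddCommGroup X] [InnerProductSpace ℝ X] [CompleteSpace X]

/-- Subgradient existence for a continuous convex function, via geometric Hahn–Banach. -/
theorem BH.subgrad {Y : Type*} [NormedAddCommGroup Y] [NormedSpace ℝ Y]
    {f : Y → ℝ} (hf : ConvexOn ℝ Set.univ f) (hc : Continuous f) (x : Y) :
    ∃ L : Y →L[ℝ] ℝ, ∀ v, f x + L v ≤ f (x + v) := by
  set s : Set (Y × ℝ) := {p | f p.1 < p.2} with hs
  have hsopen : IsOpen s := isOpen_lt (hc.comp continuous_fst) continuous_snd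
  have hsconv : Convex ℝ s := by
    rintro ⟨p1, p2⟩ hp ⟨q1, q2⟩ hq a b ha hb hab
    simp only [hs, Set.mem_setOf_eq] at hp hq ⊢
    calc f (a • p1 + b • q1) ≤ a * f p1 + b * f q1 :=
          hf.2 (Set.mem_univ _) (Set.mem_univ _) ha hb hab
      _ < a * p2 + b * q2 := by
          rcases eq_or_lt_of_le ha with h | h
          · simp [← h] at hab ⊢
            nlinarith [hq]
          · rcases eq_or_lt_of_le hb with h' | h'
            · simp [← h'] at hab ⊢
              nlinarith [hp]
            · exact add_lt_add (by nlinarith) (by nlinarith)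
  have hxs : (x, f x) ∉ s := by simp [hs]
  obtain ⟨ℓ, hℓ⟩ := geometric_hahn_banach_open_point hsconv hsopen hxs
  set c : ℝ := ℓ (0, 1) with hcdef
  have hkey : ∀ v : Y, ∀ r : ℝ, f (x + v) < r → ℓ (v, 0) + c * (r - f x) < 0 := by
    intro v r hr
    have := hℓ (x + v, r) (by simpa [hs] using hr)
    have hdecomp : (x + v, r) = (x, f x) + (v, 0) + (r - f x) • ((0 : Y), (1 : ℝ)) := by
      simp [Prod.ext_iff]
    rw [hdecomp] at this
    simp only [map_add, map_smul, smul_eq_mul] at this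
    linarith [this]
  have hc0 : c < 0 := by
    have := hkey 0 (f x + 1) (by simp)
    have h0 : ℓ (0, 0) = 0 := map_zero ℓ
    simpa [h0] using this
  refine ⟨(-c)⁻¹ • (ℓ.comp (ContinuousLinearMap.inl ℝ Y ℝ)), fun v => ?_⟩
  have h2 : ℓ (v, 0) + c * (f (x + v) - f x) ≤ 0 := by
    by_contra h
    push_neg at h
    set a := ℓ (v, 0) + c * (f (x + v) - f x) with hadef
    have hnc : (0:ℝ) < -c := by linarith
    have hε : (0:ℝ) < a / (-2 * c) := div_pos h (by linarith)
    have := hkey v (f (x + v) + a / (-2 * c)) (by linarith)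
    rw [show f (x + v) + a / (-2 * c) - f x = (f (x+v) - f x) + a / (-2*c) by ring] at this
    have hc' : c ≠ 0 := ne_of_lt hc0
    have hca : c * (a / (-2 * c)) = a / (-2) := by
      field_simp
    nlinarith [this]
  simp only [ContinuousLinearMap.smul_apply, ContinuousLinearMap.coe_comp', Function.comp_apply,
    ContinuousLinearMap.inl_apply, smul_eq_mul]
  have hnc : (0:ℝ) < -c := by linarith
  have h3 : ℓ (v, 0) ≤ (f (x + v) - f x) * (-c) := by nlinarith
  have h4 : ℓ (v, 0) / (-c) ≤ f (x + v) - f x := (div_le_iff₀ hnc).2 h3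
  rw [inv_mul_eq_div]
  linarith

/-- A real-valued lower semicontinuous convex function on a Banach space is continuous. -/
theorem BH.cont_of_lsc_convex {Y : Type*} [NormedAddCommGroup Y] [NormedSpace ℝ Y]
    [CompleteSpace Y] {f : Y → ℝ} (hf : ConvexOn ℝ Set.univ f)
    (hlsc : LowerSemicontinuous f) : Continuous f := by
  have hne : Nonempty Y := ⟨0⟩
  set C : ℕ → Set Y := fun n => {x | f x ≤ n} with hC
  have hclosed : ∀ n, IsClosed (C n) := fun n => hlsc.isClosed_preimage n
  obtain ⟨n, x₀, hx₀⟩ := nonempty_interior_of_iUnion_of_closed hclosed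
    (by ext x; simp only [mem_iUnion, mem_univ, iff_true, hC, mem_setOf_eq]
        exact exists_nat_ge (f x))
  have hbdd : ∃ x₀ ∈ univ, (nhds x₀).IsBoundedUnder (· ≤ ·) f := by
    refine ⟨x₀, mem_univ _, ⟨(n:ℝ), ?_⟩⟩
    rw [Filter.eventually_map]
    filter_upwards [isOpen_interior.mem_nhds hx₀] with z hz
    have hz' := interior_subset hz
    simpa [hC] using hz'
  have := (hf.continuousOn_tfae isOpen_univ (univ_nonempty) ).out 3 1
  rw [← continuousOn_univ]
  exact this.1 hbdd

/-- A two-sided quadratic squeeze gives a gradient. -/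
theorem BH.hasGradientAt_of_squeeze {β : ℝ} (hβ : 0 < β) {f : X → ℝ} {x G : X}
    (h1 : ∀ v, f x + ⟪G, v⟫ ≤ f (x + v))
    (h2 : ∀ v, f (x + v) ≤ f x + ⟪G, v⟫ + β / 2 * ‖v‖ ^ 2) :
    HasGradientAt f G x := by
  rw [hasGradientAt_iff_isLittleO]
  rw [Asymptotics.isLittleO_iff]
  intro c hc
  have hball : Metric.ball x (2 * c / β) ∈ nhds x := Metric.ball_mem_nhds x (by positivity)
  filter_upwards [hball] with y hy
  have hv1 := h1 (y - x)
  have hv2 := h2 (y - x)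
  rw [add_sub_cancel] at hv1 hv2
  have habs : |f y - f x - ⟪G, y - x⟫| ≤ β / 2 * ‖y - x‖ ^ 2 := by
    rw [abs_le]
    constructor <;> nlinarith [sq_nonneg ‖y - x‖]
  have hd : ‖y - x‖ < 2 * c / β := by
    rw [Metric.mem_ball, dist_eq_norm] at hy; exact hy
  calc ‖f y - f x - ⟪G, y - x⟫‖ = |f y - f x - ⟪G, y - x⟫| := rfl
    _ ≤ β / 2 * ‖y - x‖ ^ 2 := habs
    _ ≤ c * ‖y - x‖ := by
        have hd' : ‖y - x‖ * β < 2 * c := (lt_div_iff₀ hβ).1 hd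
        nlinarith [norm_nonneg (y - x)]

theorem BH.hasGradientAt_half_norm_sq (β : ℝ) (hβ : 0 < β) (z : X) :
    HasGradientAt (fun w => β / 2 * ‖w‖ ^ 2) (β • z) z := by
  apply BH.hasGradientAt_of_squeeze hβ (f := fun w => β / 2 * ‖w‖ ^ 2)
  · intro v
    have := norm_add_sq_real z v
    rw [real_inner_smul_left]
    nlinarith [sq_nonneg ‖v‖]
  · intro v
    have := norm_add_sq_real z v
    rw [real_inner_smul_left]
    nlinarith [sq_nonneg ‖v‖]

/-- Cocoercivity from the two-sided pointwise bounds. -/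
theorem BH.cocoercive_of_bounds {β : ℝ} (hβ : 0 < β) {f : X → ℝ} {G : X → X}
    (h1 : ∀ x v, f x + ⟪G x, v⟫ ≤ f (x + v))
    (h2 : ∀ x v, f (x + v) ≤ f x + ⟪G x, v⟫ + β / 2 * ‖v‖ ^ 2)
    (x y : X) :
    (1 / β) * ‖G x - G y‖ ^ 2 ≤ ⟪G x - G y, x - y⟫ := by
  have key : ∀ p q : X, f p + ⟪G p, q - p⟫ + 1 / (2 * β) * ‖G q - G p‖ ^ 2 ≤ f q := by
    intro p q
    set d : X := G q - G p with hd
    set z : X := q - (1 / β) • d with hz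
    have hlow := h1 p (z - p)
    rw [add_sub_cancel] at hlow
    have hup := h2 q (z - q)
    rw [add_sub_cancel] at hup
    have hzq : z - q = -((1 / β) • d) := by rw [hz]; abel
    have hnorm : ‖z - q‖ ^ 2 = (1 / β) ^ 2 * ‖d‖ ^ 2 := by
      rw [hzq, norm_neg, norm_smul]
      simp [abs_of_pos (by positivity : (0:ℝ) < 1/β), mul_pow]
    have hdq : ⟪d, z - q⟫ = -((1 / β) * ‖d‖ ^ 2) := by
      rw [hzq, inner_neg_right, real_inner_smul_right, real_inner_self_eq_norm_sq]
      try ring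
    have hsplit : ⟪G q, z - q⟫ - ⟪G p, z - q⟫ = ⟪d, z - q⟫ := by
      rw [hd, inner_sub_left]
    have hiq : ⟪G q, z - q⟫ = -((1 / β) * ‖d‖ ^ 2) + ⟪G p, z - q⟫ := by linarith
    have hip : ⟪G p, z - p⟫ = ⟪G p, q - p⟫ + ⟪G p, z - q⟫ := by
      rw [← inner_add_right]
      congr 1
      abel
    rw [hip] at hlow
    rw [hiq, hnorm] at hup
    have : β / 2 * ((1 / β) ^ 2 * ‖d‖ ^ 2) = 1 / (2 * β) * ‖d‖ ^ 2 := by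
      field_simp
    have h5 : 1 / β * ‖d‖ ^ 2 = 2 * (1 / (2 * β) * ‖d‖ ^ 2) := by
      field_simp
    linarith [hlow, hup]
  have k1 := key x y
  have k2 := key y x
  have hsym : ‖G x - G y‖ = ‖G y - G x‖ := norm_sub_rev _ _
  rw [inner_sub_left, inner_sub_right, inner_sub_right]
  rw [inner_sub_right] at k1 k2
  have h1' : (1 / β) * ‖G x - G y‖ ^ 2
      = 1 / (2*β) * ‖G y - G x‖^2 + 1 / (2*β) * ‖G x - G y‖^2 := by
    rw [← hsym]; field_simp; ring
  rw [h1']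
  linarith [k1, k2]

/-- A convex continuous function whose "β-smoothing" is convex admits the two-sided squeeze. -/
theorem BH.squeeze_exists {β : ℝ} (hβ : 0 < β) {f : X → ℝ}
    (hf : ConvexOn ℝ Set.univ f) (hfc : Continuous f)
    (hq : ConvexOn ℝ Set.univ (fun z => β / 2 * ‖z‖ ^ 2 - f z)) (x : X) :
    ∃ G : X, (∀ v, f x + ⟪G, v⟫ ≤ f (x + v)) ∧
      (∀ v, f (x + v) ≤ f x + ⟪G, v⟫ + β / 2 * ‖v‖ ^ 2) := by
  set h : X → ℝ := fun z => β / 2 * ‖z‖ ^ 2 - f z with hh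
  have hhc : Continuous h := by
    apply Continuous.sub
    · exact (continuous_const.mul ((continuous_norm).pow 2))
    · exact hfc
  obtain ⟨L, hL⟩ := BH.subgrad hf hfc x
  obtain ⟨M, hM⟩ := BH.subgrad hq hhc x
  set G : X := β • x - (InnerProductSpace.toDual ℝ X).symm M with hG
  have hGv : ∀ v, ⟪G, v⟫ = β * ⟪x, v⟫ - M v := by
    intro v
    rw [hG, inner_sub_left, real_inner_smul_left, InnerProductSpace.toDual_symm_apply]
  have hupper : ∀ v, f (x + v) ≤ f x + ⟪G, v⟫ + β / 2 * ‖v‖ ^ 2 := by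
    intro v
    have := hM v
    simp only [hh] at this
    have hn : ‖x + v‖ ^ 2 = ‖x‖ ^ 2 + 2 * ⟪x, v⟫ + ‖v‖ ^ 2 := by
      rw [← real_inner_self_eq_norm_sq, ← real_inner_self_eq_norm_sq,
        ← real_inner_self_eq_norm_sq, inner_add_add_self, real_inner_comm v x]
      ring
    rw [hGv v]
    nlinarith [this]
  have hLK : ∀ v, L v = ⟪G, v⟫ := by
    have key : ∀ v, L v ≤ ⟪G, v⟫ := by
      intro v
      have hstep : ∀ t : ℝ, 0 < t → L v ≤ ⟪G, v⟫ + β / 2 * ‖v‖ ^ 2 * t := by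
        intro t ht
        have h1 := hL (t • v)
        have h2 := hupper (t • v)
        rw [map_smul, smul_eq_mul] at h1
        rw [inner_smul_right] at h2
        have hns : ‖t • v‖ ^ 2 = t ^ 2 * ‖v‖ ^ 2 := by
          rw [norm_smul, mul_pow, Real.norm_eq_abs, sq_abs]
        rw [hns] at h2
        have : t * L v ≤ t * ⟪G, v⟫ + β / 2 * (t ^ 2 * ‖v‖ ^ 2) := by linarith
        nlinarith [this, ht]
      have htend : Tendsto (fun t : ℝ => ⟪G, v⟫ + β / 2 * ‖v‖ ^ 2 * t) (nhdsWithin 0 (Ioi 0))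
          (nhds (⟪G, v⟫ + β / 2 * ‖v‖ ^ 2 * 0)) := by
        apply Tendsto.mono_left _ nhdsWithin_le_nhds
        exact (tendsto_id.const_mul _).const_add _
      rw [mul_zero, add_zero] at htend
      refine ge_of_tendsto htend ?_
      filter_upwards [self_mem_nhdsWithin] with t ht
      exact hstep t ht
    intro v
    have h1 := key v
    have h2 := key (-v)
    rw [map_neg, inner_neg_right] at h2
    linarith
  exact ⟨G, fun v => by rw [← hLK v]; exact hL v, hupper⟩

/-- Forward direction: differentiable with cocoercive gradient implies `β/2‖·‖² - f` convex. -/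
theorem BH.fwd_convex {β : ℝ} (hβ : 0 < β) {f : X → ℝ} (hdiff : Differentiable ℝ f)
    (hco : ∀ x y : X, (1 / β) * ‖gradient f x - gradient f y‖ ^ 2 ≤
      ⟪gradient f x - gradient f y, x - y⟫) :
    ConvexOn ℝ Set.univ (fun z => β / 2 * ‖z‖ ^ 2 - f z) := by
  set h : X → ℝ := fun z => β / 2 * ‖z‖ ^ 2 - f z with hh
  have hgrad : ∀ z : X, HasFDerivAt h
      ((InnerProductSpace.toDual ℝ X) (β • z - gradient f z)) z := by
    intro z
    have h1 : HasFDerivAt (fun w => β / 2 * ‖w‖ ^ 2)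
        ((InnerProductSpace.toDual ℝ X) (β • z)) z :=
      (hasGradientAt_iff_hasFDerivAt.1 (BH.hasGradientAt_half_norm_sq β hβ z))
    have h2 : HasFDerivAt f ((InnerProductSpace.toDual ℝ X) (gradient f z)) z :=
      hasGradientAt_iff_hasFDerivAt.1 (hdiff z).hasGradientAt
    have := h1.sub h2
    rwa [← map_sub] at this
  have key : ∀ x y : X, ∀ a b : ℝ, 0 ≤ a → 0 ≤ b → a + b = 1 →
      h (a • x + b • y) ≤ a * h x + b * h y := by
    intro x y a b ha hb hab
    set v : X := y - x with hv
    set c : ℝ → X := fun t => x + t • v with hc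
    have hcderiv : ∀ t : ℝ, HasDerivAt c v t := by
      intro t
      rw [hc]; simpa using ((hasDerivAt_id t).smul_const v).const_add x
    set φ : ℝ → ℝ := fun t => h (c t) with hφ
    set D : ℝ → ℝ := fun t => β * ⟪c t, v⟫ - ⟪gradient f (c t), v⟫ with hD
    have hφderiv : ∀ t : ℝ, HasDerivAt φ (D t) t := by
      intro t
      have := (hgrad (c t)).comp_hasDerivAt t (hcderiv t)
      refine this.congr_deriv ?_
      rw [hD]
      simp only [InnerProductSpace.toDual_apply_apply, inner_sub_left, real_inner_smul_left]
    have hφdiff : Differentiable ℝ φ := fun t => (hφderiv t).differentiableAt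
    have hDmono : Monotone D := by
      intro s t hst
      rw [hD]
      simp only
      have hcdiff : c t - c s = (t - s) • v := by
        show (x + t • v) - (x + s • v) = (t - s) • v
        rw [sub_smul]; abel
      set w : X := gradient f (c t) - gradient f (c s) with hw
      have hco' := hco (c t) (c s)
      rw [← hw, hcdiff] at hco'
      rw [inner_smul_right] at hco'
      have hCS := real_inner_mul_inner_self_le w v
      rw [real_inner_self_eq_norm_sq, real_inner_self_eq_norm_sq] at hCS
      have hinner : ⟪c t, v⟫ - ⟪c s, v⟫ = (t - s) * ‖v‖ ^ 2 := by
        rw [← inner_sub_left, hcdiff, real_inner_smul_left, real_inner_self_eq_norm_sq]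
      have hwsplit : ⟪gradient f (c t), v⟫ - ⟪gradient f (c s), v⟫ = ⟪w, v⟫ := by
        rw [hw, inner_sub_left]
      have hts : 0 ≤ t - s := by linarith
      have hgoal : ⟪w, v⟫ ≤ β * ((t - s) * ‖v‖ ^ 2) := by
        rcases le_or_gt ⟪w, v⟫ 0 with hneg | hpos
        · have : 0 ≤ β * ((t - s) * ‖v‖ ^ 2) :=
            mul_nonneg hβ.le (mul_nonneg hts (sq_nonneg _))
          linarith
        · have h1' : (1 / β) * ‖w‖ ^ 2 ≤ (t - s) * ⟪w, v⟫ := hco'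
          have hβ' : ‖w‖ ^ 2 ≤ β * ((t - s) * ⟪w, v⟫) := by
            have := mul_le_mul_of_nonneg_left h1' (le_of_lt hβ)
            calc ‖w‖ ^ 2 = β * ((1/β) * ‖w‖ ^ 2) := by field_simp
              _ ≤ β * ((t - s) * ⟪w, v⟫) := this
          nlinarith [hCS, hβ', hpos, sq_nonneg (‖w‖*‖v‖)]
      nlinarith [hgoal, hinner, hwsplit]
    have hφconv : ConvexOn ℝ univ φ := by
      have hder : deriv φ = D := funext fun t => (hφderiv t).deriv
      exact Monotone.convexOn_univ_of_deriv hφdiff (hder ▸ hDmono)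
    have := hφconv.2 (mem_univ (0:ℝ)) (mem_univ (1:ℝ)) ha hb hab
    simp only [hφ, smul_eq_mul, mul_zero, mul_one, zero_add] at this
    have hc0 : c 0 = x := by simp [hc]
    have hc1 : c 1 = y := by simp [hc, hv]
    have hcb : c b = a • x + b • y := by
      rw [hc, hv]
      have : a = 1 - b := by linarith
      rw [this]
      module
    rw [hc0, hc1, hcb] at this
    convert this using 2
  exact ⟨convex_univ, fun x _ y _ a b ha hb hab => key x y a b ha hb hab⟩

end BaillonHaddadAux

/-- **A piece of the Baillon–Haddad theorem.** Let `X` be a real Hilbert space, `β > 0`, and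
`g : X → ℝ ∪ {+∞}` (modelled as `X → EReal` never taking the value `⊥`) a proper, convex,
lower semicontinuous function. Then `g` is real-valued, Fréchet differentiable with
`(1/β)`-cocoercive gradient, if and only if `(β/2)‖·‖² - g` is convex (stated in the
equivalent subtraction-free form
`(β/2)‖(1-t)x+ty‖² + (1-t)·g(x) + t·g(y) ≤ g((1-t)x+ty) + (1-t)·(β/2)‖x‖² + t·(β/2)‖y‖²`). -/
theorem baillon_haddad_piece
    {X : Type*} [NormedAddCommGroup X] [InnerProductSpace ℝ X] [CompleteSpace X]
    (β : ℝ) (hβ : 0 < β) (g : X → EReal)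
    (hbot : ∀ x, g x ≠ ⊥)
    (hproper : ∃ x, g x ≠ ⊤)
    (hconv : ∀ x y : X, ∀ t : ℝ, 0 ≤ t → t ≤ 1 →
      g ((1 - t) • x + t • y) ≤ ((1 - t : ℝ) : EReal) * g x + ((t : ℝ) : EReal) * g y)
    (hlsc : LowerSemicontinuous g) :
    ((∀ x, g x ≠ ⊤) ∧
      Differentiable ℝ (fun x => (g x).toReal) ∧
      ∀ x y : X,
        (1 / β) * ‖gradient (fun z => (g z).toReal) x - gradient (fun z => (g z).toReal) y‖ ^ 2 ≤
          ⟪gradient (fun z => (g z).toReal) x - gradient (fun z => (g z).toReal) y, x - y⟫) ↔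
    (∀ x y : X, ∀ t : ℝ, 0 ≤ t → t ≤ 1 →
      ((β / 2 * ‖(1 - t) • x + t • y‖ ^ 2 : ℝ) : EReal)
          + ((1 - t : ℝ) : EReal) * g x + ((t : ℝ) : EReal) * g y ≤
        g ((1 - t) • x + t • y)
          + (((1 - t) * (β / 2 * ‖x‖ ^ 2) + t * (β / 2 * ‖y‖ ^ 2) : ℝ) : EReal)) := by
  set f : X → ℝ := fun x => (g x).toReal with hf
  constructor
  · rintro ⟨hfin, hdiff, hco⟩ x y t ht0 ht1
    have hgf : ∀ z, g z = ((f z : ℝ) : EReal) := fun z =>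
      (EReal.coe_toReal (hfin z) (hbot z)).symm
    have hconvh := BH.fwd_convex hβ hdiff hco
    have hreal := hconvh.2 (Set.mem_univ x) (Set.mem_univ y)
      (by linarith : (0:ℝ) ≤ 1 - t) ht0 (by ring)
    simp only [smul_eq_mul] at hreal
    rw [hgf x, hgf y, hgf ((1 - t) • x + t • y)]
    rw [← EReal.coe_mul, ← EReal.coe_mul, ← EReal.coe_add, ← EReal.coe_add, ← EReal.coe_add]
    rw [EReal.coe_le_coe_iff]
    linarith [hreal]
  · intro hq
    have hfin : ∀ x, g x ≠ ⊤ := by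
      obtain ⟨y₀, hy₀⟩ := hproper
      intro x hx
      set y : X := (2:ℝ) • y₀ - x with hy
      have hmid : (1 - (1/2 : ℝ)) • x + (1/2 : ℝ) • y = y₀ := by
        rw [hy]; module
      have h12 : ((1/2 : ℝ) : EReal) * g y ≠ ⊥ := by
        by_cases hT : g y = ⊤
        · rw [hT, EReal.coe_mul_top_of_pos (by norm_num)]
          exact top_ne_bot
        · rw [← EReal.coe_toReal hT (hbot y), ← EReal.coe_mul]
          exact EReal.coe_ne_bot _
      have := hq x y (1/2) (by norm_num) (by norm_num)
      rw [hmid] at this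
      rw [hx] at this
      rw [show ((1 - (1/2 : ℝ) : ℝ) : EReal) = ((1/2 : ℝ) : EReal) by norm_num] at this
      rw [EReal.coe_mul_top_of_pos (by norm_num)] at this
      rw [EReal.add_top_of_ne_bot (EReal.coe_ne_bot _)] at this
      rw [EReal.top_add_of_ne_bot h12] at this
      have hlt : g y₀ + (((1 - 1/2) * (β / 2 * ‖x‖ ^ 2) + 1/2 * (β / 2 * ‖y‖ ^ 2) : ℝ) : EReal)
          < ⊤ := EReal.add_lt_top hy₀ (EReal.coe_ne_top _)
      exact absurd (lt_of_le_of_lt this hlt) (lt_irrefl ⊤)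
    have hgf : ∀ z, g z = ((f z : ℝ) : EReal) := fun z =>
      (EReal.coe_toReal (hfin z) (hbot z)).symm
    have hconvf : ConvexOn ℝ Set.univ f := by
      refine ⟨convex_univ, fun x _ y _ a b ha hb hab => ?_⟩
      have ha' : a = 1 - b := by linarith
      subst ha'
      have := hconv x y b hb (by linarith)
      rw [hgf x, hgf y, hgf ((1 - b) • x + b • y)] at this
      rw [← EReal.coe_mul, ← EReal.coe_mul, ← EReal.coe_add, EReal.coe_le_coe_iff] at this
      exact this
    have hlscf : LowerSemicontinuous f := by
      intro x c hc
      have hcg : (c : EReal) < g x := by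
        rw [hgf x]
        exact_mod_cast hc
      filter_upwards [hlsc x (c : EReal) hcg] with z hz
      rw [hgf z] at hz
      exact_mod_cast hz
    have hcont : Continuous f := BH.cont_of_lsc_convex hconvf hlscf
    have hconvh : ConvexOn ℝ Set.univ (fun z => β / 2 * ‖z‖ ^ 2 - f z) := by
      refine ⟨convex_univ, fun x _ y _ a b ha hb hab => ?_⟩
      have ha' : a = 1 - b := by linarith
      subst ha'
      have := hq x y b hb (by linarith)
      rw [hgf x, hgf y, hgf ((1 - b) • x + b • y)] at this
      rw [← EReal.coe_mul, ← EReal.coe_mul, ← EReal.coe_add, ← EReal.coe_add,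
        ← EReal.coe_add, EReal.coe_le_coe_iff] at this
      simp only [smul_eq_mul]
      linarith [this]
    choose G hG1 hG2 using fun x => BH.squeeze_exists hβ hconvf hcont hconvh x
    have hgradAt : ∀ x, HasGradientAt f (G x) x := fun x =>
      BH.hasGradientAt_of_squeeze hβ (hG1 x) (hG2 x)
    refine ⟨hfin, fun x => ((hgradAt x).differentiableAt : DifferentiableAt ℝ f x), ?_⟩
    intro x y
    have hgx : gradient f x = G x := (hgradAt x).gradient
    have hgy : gradient f y = G y := (hgradAt y).gradient
    rw [hgx, hgy]
    exact BH.cocoercive_of_bounds hβ hG1 hG2 x y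
end

section
/- Let X be a real Hilbert space, Y a real Banach space, F : X → Y continuous, and L > 0. Suppose that for any finitely many points x₁,…,xₙ ∈ X and nonnegative weights λ₁,…,λₙ with ∑ᵢ λᵢ = 1, one has ‖F(∑ᵢ λᵢ xᵢ) − ∑ᵢ λᵢ F(xᵢ)‖ ≤ (L/2) · ∑_{1 ≤ i < j ≤ n} λᵢ λⱼ ‖xᵢ − xⱼ‖². Then for every continuous linear functional y* ∈ Y* with ‖y*‖ ≤ 1, the slice φ_{y*} : X → ℝ defined by φ_{y*}(x) = y*(F(x)) is Fréchet differentiable on X and its gradient ∇φ_{y*} : X → X is L-Lipschitz continuous. -/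
open Filter
open scoped Topology RealInnerProductSpace

private lemma eq_of_abs_sub_le_linear {B B' K : ℝ} (h : ∀ t : ℝ, 0 < t → |B - B'| ≤ K * t) :
    B = B' := by
  by_contra hne
  have hd0 : 0 < |B - B'| := abs_pos.mpr (sub_ne_zero.mpr hne)
  have hK : 0 < K := lt_of_lt_of_le hd0 (by simpa using h 1 one_pos)
  have h2 := h (|B - B'| / (2 * K)) (by positivity)
  have h3 : K * (|B - B'| / (2 * K)) = |B - B'| / 2 := by field_simp
  rw [h3] at h2; linarith

private lemma uniq_expand {f : ℝ → ℝ} {B B' C C' : ℝ}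
    (h : ∀ t : ℝ, t ≠ 0 → |f t - t * B| ≤ C * t ^ 2)
    (h' : ∀ t : ℝ, t ≠ 0 → |f t - t * B'| ≤ C' * t ^ 2) : B = B' := by
  apply eq_of_abs_sub_le_linear (K := C + C')
  intro t ht
  have h1 := h t ht.ne'
  have h2 := h' t ht.ne'
  have h3 : |t * B - t * B'| ≤ (C + C') * t ^ 2 := by
    calc |t * B - t * B'| = |(f t - t * B') - (f t - t * B)| := by ring_nf
      _ ≤ |f t - t * B'| + |f t - t * B| := abs_sub _ _
      _ ≤ (C + C') * t ^ 2 := by linarith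
  rw [show t * B - t * B' = t * (B - B') by ring, abs_mul, abs_of_pos ht] at h3
  nlinarith [abs_nonneg (B - B')]

section Slope
variable {X : Type*} [NormedAddCommGroup X] [InnerProductSpace ℝ X]
  (φ : X → ℝ) (L : ℝ)

/-- the two-sided Jensen bound for two points -/
def J2 : Prop := ∀ (a b : X) (l : ℝ), 0 ≤ l → l ≤ 1 →
  |φ ((1 - l) • a + l • b) - ((1 - l) * φ a + l * φ b)| ≤ L / 2 * (l * (1 - l) * ‖a - b‖ ^ 2)

variable {φ L}

lemma slope1 (h2 : J2 φ L) (x h : X) {s t : ℝ} (hs : 0 < s) (hst : s < t) :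
    |(φ (x + t • h) - φ x) / t - (φ (x + s • h) - φ x) / s| ≤ L / 2 * ‖h‖ ^ 2 * |t - s| := by
  have ht : 0 < t := hs.trans hst
  have hl0 : 0 ≤ s / t := by positivity
  have hl1 : s / t ≤ 1 := (div_le_one ht).mpr hst.le
  have key := h2 x (x + t • h) (s / t) hl0 hl1
  have hc : (1 - s / t) • x + (s / t) • (x + t • h) = x + s • h := by
    rw [smul_add, smul_smul, div_mul_cancel₀ _ ht.ne', ← add_assoc, ← add_smul,
      sub_add_cancel, one_smul]
  have hn : ‖x - (x + t • h)‖ ^ 2 = t ^ 2 * ‖h‖ ^ 2 := by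
    have : x - (x + t • h) = (-t) • h := by module
    rw [this, norm_smul, Real.norm_eq_abs, abs_neg, abs_of_pos ht, mul_pow]
  rw [hc, hn] at key
  set S := φ (x + s • h) - φ x with hS
  set T := φ (x + t • h) - φ x with hT
  have e1 : φ (x + s • h) - ((1 - s / t) * φ x + s / t * φ (x + t • h)) = S - (s / t) * T := by
    rw [hS, hT]; field_simp; ring
  rw [e1] at key
  have e2 : T / t - S / s = -((S - (s / t) * T) / s) := by field_simp; ring
  rw [e2, abs_neg, abs_div, abs_of_pos hs, div_le_iff₀ hs, abs_of_pos (by linarith : (0:ℝ) < t - s)]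
  calc |S - s / t * T| ≤ L / 2 * (s / t * (1 - s / t) * (t ^ 2 * ‖h‖ ^ 2)) := key
    _ = L / 2 * ‖h‖ ^ 2 * (t - s) * s := by field_simp

lemma slope2 (h2 : J2 φ L) (x h : X) {s t : ℝ} (hs : s < 0) (ht : 0 < t) :
    |(φ (x + t • h) - φ x) / t - (φ (x + s • h) - φ x) / s| ≤ L / 2 * ‖h‖ ^ 2 * |t - s| := by
  have hts : 0 < t - s := by linarith
  set l := -s / (t - s) with hldef
  have hs' : s ≠ 0 := ne_of_lt hs
  have ht' : t ≠ 0 := ne_of_gt ht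
  have hts' : t - s ≠ 0 := ne_of_gt hts
  have hl0 : 0 ≤ l := div_nonneg (by linarith) hts.le
  have hl1 : l ≤ 1 := by rw [hldef, div_le_one hts]; linarith
  have key := h2 (x + s • h) (x + t • h) l hl0 hl1
  have h1l : 1 - l = t / (t - s) := by rw [hldef]; field_simp; ring
  have hc : (1 - l) • (x + s • h) + l • (x + t • h) = x := by
    rw [h1l, hldef, smul_add, smul_add, smul_smul, smul_smul, add_add_add_comm, ← add_smul,
      ← add_smul]
    have e1 : t / (t - s) + -s / (t - s) = 1 := by field_simp; ring
    have e2 : t / (t - s) * s + -s / (t - s) * t = 0 := by field_simp; ring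
    rw [e1, e2, one_smul, zero_smul, add_zero]
  have hn : ‖(x + s • h) - (x + t • h)‖ ^ 2 = (t - s) ^ 2 * ‖h‖ ^ 2 := by
    have : (x + s • h) - (x + t • h) = (s - t) • h := by module
    rw [this, norm_smul, Real.norm_eq_abs, abs_of_neg (by linarith : s - t < 0), mul_pow]
    ring_nf
  rw [hc, hn, h1l, hldef] at key
  set S := φ (x + s • h) - φ x with hS
  set T := φ (x + t • h) - φ x with hT
  have e1 : φ x - (t / (t - s) * φ (x + s • h) + -s / (t - s) * φ (x + t • h))
      = -((t * S - s * T) / (t - s)) := by rw [hS, hT]; field_simp; ring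
  rw [e1, abs_neg, abs_div, abs_of_pos hts, div_le_iff₀ hts] at key
  have key2 : |t * S - s * T| ≤ L / 2 * ‖h‖ ^ 2 * ((-s) * t * (t - s)) := by
    calc |t * S - s * T| ≤ L / 2 * (-s / (t - s) * (t / (t - s)) * ((t - s) ^ 2 * ‖h‖ ^ 2)) * (t - s) := key
      _ = L / 2 * ‖h‖ ^ 2 * ((-s) * t * (t - s)) := by field_simp
  have e2 : T / t - S / s = (t * S - s * T) / ((-s) * t) := by
    rw [hS, hT]; field_simp; ring
  rw [e2, abs_div, abs_of_pos (by nlinarith : (0:ℝ) < (-s) * t), div_le_iff₀ (by nlinarith : (0:ℝ) < (-s) * t),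
    abs_of_pos hts]
  calc |t * S - s * T| ≤ L / 2 * ‖h‖ ^ 2 * ((-s) * t * (t - s)) := key2
    _ = L / 2 * ‖h‖ ^ 2 * (t - s) * (-s * t) := by ring

lemma slope_all (h2 : J2 φ L) (x h : X) {s t : ℝ} (hs : s ≠ 0) (ht : t ≠ 0) :
    |(φ (x + t • h) - φ x) / t - (φ (x + s • h) - φ x) / s| ≤ L / 2 * ‖h‖ ^ 2 * |t - s| := by
  have neg_case : ∀ {s t : ℝ}, s < t → t < 0 →
      |(φ (x + t • h) - φ x) / t - (φ (x + s • h) - φ x) / s| ≤ L / 2 * ‖h‖ ^ 2 * |t - s| := by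
    intro s t hst ht0
    have := slope1 h2 x (-h) (s := -t) (t := -s) (by linarith) (by linarith)
    have e : ∀ r : ℝ, x + (-r) • (-h) = x + r • h := by intro r; module
    rw [e, e] at this
    have e2 : (φ (x + s • h) - φ x) / (-s) - (φ (x + t • h) - φ x) / (-t)
        = (φ (x + t • h) - φ x) / t - (φ (x + s • h) - φ x) / s := by
      rw [div_neg, div_neg]; ring
    rw [e2, norm_neg, show -s - -t = t - s by ring] at this
    exact this
  rcases lt_trichotomy s t with hst | rfl | hst
  · rcases lt_or_gt_of_ne hs with hs0 | hs0
    · rcases lt_or_gt_of_ne ht with ht0 | ht0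
      · exact neg_case hst ht0
      · exact slope2 h2 x h hs0 ht0
    · exact slope1 h2 x h hs0 hst
  · simp
  · rw [abs_sub_comm, abs_sub_comm t s]
    rcases lt_or_gt_of_ne ht with ht0 | ht0
    · rcases lt_or_gt_of_ne hs with hs0 | hs0
      · exact neg_case hst hs0
      · exact slope2 h2 x h ht0 hs0
    · exact slope1 h2 x h ht0 hst

end Slope
section Deriv
variable {X : Type*} [NormedAddCommGroup X] [InnerProductSpace ℝ X]
  {φ : X → ℝ} {L : ℝ}

lemma exists_A (hL : 0 ≤ L) (h2 : J2 φ L) (x h : X) :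
    ∃ A : ℝ, ∀ t : ℝ, t ≠ 0 → |φ (x + t • h) - φ x - t * A| ≤ L / 2 * ‖h‖ ^ 2 * t ^ 2 := by
  set c := L / 2 * ‖h‖ ^ 2 with hc
  set q : ℝ → ℝ := fun t => (φ (x + t • h) - φ x) / t with hq
  set u : ℕ → ℝ := fun n => q (1 / (n + 1)) with hu
  have hslope : ∀ {s t : ℝ}, s ≠ 0 → t ≠ 0 → |q t - q s| ≤ c * |t - s| :=
    fun hs ht => slope_all h2 x h hs ht
  have hpos : ∀ n : ℕ, (0:ℝ) < 1 / (n + 1) := by intro n; positivity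
  have hcau : CauchySeq u := by
    refine cauchySeq_of_le_tendsto_0 (fun N => c * (1 / (N + 1))) ?_ ?_
    · intro n m N hn hm
      rw [Real.dist_eq]
      refine le_trans (hslope (hpos m).ne' (hpos n).ne') ?_
      have h1 : (1:ℝ) / (n + 1) ≤ 1 / (N + 1) := by
        apply one_div_le_one_div_of_le (by positivity)
        have := (Nat.cast_le (α := ℝ)).mpr hn; linarith
      have h2 : (1:ℝ) / (m + 1) ≤ 1 / (N + 1) := by
        apply one_div_le_one_div_of_le (by positivity)
        have := (Nat.cast_le (α := ℝ)).mpr hm; linarith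
      have hC : 0 ≤ c := by rw [hc]; positivity
      have : |1 / ((n:ℝ) + 1) - 1 / (m + 1)| ≤ 1 / (N + 1) := by
        rw [abs_le]; constructor <;> [linarith [hpos n, hpos m]; linarith [hpos n, hpos m]]
      exact mul_le_mul_of_nonneg_left this hC
    · have : Tendsto (fun N : ℕ => 1 / ((N:ℝ) + 1)) atTop (nhds 0) :=
        tendsto_one_div_add_atTop_nhds_zero_nat
      simpa using this.const_mul c
  obtain ⟨A, hA⟩ := cauchySeq_tendsto_of_complete hcau
  refine ⟨A, fun t ht => ?_⟩
  have hlim : |q t - A| ≤ c * |t| := by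
    have l1 : Tendsto (fun n => |q t - u n|) atTop (nhds |q t - A|) :=
      ((tendsto_const_nhds.sub hA).abs)
    have l2 : Tendsto (fun n : ℕ => c * |t - 1 / (n + 1)|) atTop (nhds (c * |t|)) := by
      have : Tendsto (fun n : ℕ => t - 1 / ((n:ℝ) + 1)) atTop (nhds (t - 0)) :=
        tendsto_const_nhds.sub tendsto_one_div_add_atTop_nhds_zero_nat
      simpa using (this.abs.const_mul c)
    exact le_of_tendsto_of_tendsto' l1 l2 (fun n => hslope (hpos n).ne' ht)
  have e : φ (x + t • h) - φ x - t * A = t * (q t - A) := by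
    rw [hq]; field_simp
  rw [e, abs_mul]
  calc |t| * |q t - A| ≤ |t| * (c * |t|) := by
        exact mul_le_mul_of_nonneg_left hlim (abs_nonneg t)
    _ = c * t ^ 2 := by rw [show |t| * (c * |t|) = c * |t| ^ 2 by ring, sq_abs]
  
end Deriv
section Key
variable {X : Type*} [NormedAddCommGroup X] [InnerProductSpace ℝ X] [CompleteSpace X]

theorem slice_key {φ : X → ℝ} {L : ℝ} (hφ : Continuous φ) (hL : 0 < L) (h2 : J2 φ L) :
    Differentiable ℝ φ ∧ ∀ a b : X, ‖gradient φ a - gradient φ b‖ ≤ L * ‖a - b‖ := by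
  have hL0 : (0:ℝ) ≤ L := hL.le
  choose A hA using fun (x h : X) => exists_A hL0 h2 x h
  have hzero : ∀ x : X, A x 0 = 0 := by
    intro x
    have h0 : |A x 0| ≤ 0 := by simpa using hA x 0 1 one_ne_zero
    exact abs_nonpos_iff.mp h0
  have hsmul : ∀ (x : X) (c : ℝ) (u : X), A x (c • u) = c * A x u := by
    intro x c u
    rcases eq_or_ne c 0 with rfl | hc
    · simp [hzero]
    · refine uniq_expand (f := fun t => φ (x + t • (c • u)) - φ x)
        (C' := L / 2 * ‖u‖ ^ 2 * c ^ 2) (hA x (c • u)) ?_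
      intro t ht
      have h1 := hA x u (t * c) (mul_ne_zero ht hc)
      rw [← smul_smul] at h1
      calc |φ (x + t • c • u) - φ x - t * (c * A x u)|
          = |φ (x + t • c • u) - φ x - t * c * A x u| := by ring_nf
        _ ≤ L / 2 * ‖u‖ ^ 2 * (t * c) ^ 2 := h1
        _ = L / 2 * ‖u‖ ^ 2 * c ^ 2 * t ^ 2 := by ring
  have hadd : ∀ (x u v : X), A x (u + v) = A x u + A x v := by
    intro x u v
    refine uniq_expand (f := fun t => φ (x + t • (u + v)) - φ x)
      (C' := L / 2 * ‖u - v‖ ^ 2 + L * ‖u‖ ^ 2 + L * ‖v‖ ^ 2) (hA x (u + v)) ?_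
    intro t ht
    have h1 := hA x u (2 * t) (mul_ne_zero two_ne_zero ht)
    have hv := hA x v (2 * t) (mul_ne_zero two_ne_zero ht)
    have hm := h2 (x + (2 * t) • u) (x + (2 * t) • v) (1 / 2) (by norm_num) (by norm_num)
    have hc1 : (1 - 1 / 2 : ℝ) • (x + (2 * t) • u) + (1 / 2 : ℝ) • (x + (2 * t) • v)
        = x + t • (u + v) := by
      rw [show (1 - 1/2 : ℝ) = 1/2 by norm_num]; module
    have hn1 : ‖(x + (2 * t) • u) - (x + (2 * t) • v)‖ ^ 2 = 4 * t ^ 2 * ‖u - v‖ ^ 2 := by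
      rw [show (x + (2 * t) • u) - (x + (2 * t) • v) = (2 * t) • (u - v) by module,
        norm_smul, Real.norm_eq_abs, mul_pow, sq_abs]
      ring
    rw [hc1, hn1] at hm
    have key : φ (x + t • (u + v)) - φ x - t * (A x u + A x v)
        = (φ (x + t • (u + v)) - ((1 - 1/2) * φ (x + (2 * t) • u) + 1/2 * φ (x + (2 * t) • v)))
          + (1/2) * (φ (x + (2 * t) • u) - φ x - (2 * t) * A x u)
          + (1/2) * (φ (x + (2 * t) • v) - φ x - (2 * t) * A x v) := by ring
    show |φ (x + t • (u + v)) - φ x - t * (A x u + A x v)|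
        ≤ (L / 2 * ‖u - v‖ ^ 2 + L * ‖u‖ ^ 2 + L * ‖v‖ ^ 2) * t ^ 2
    rw [key]
    refine le_trans (abs_add_le _ _) ?_
    refine le_trans (add_le_add (abs_add_le _ _) le_rfl) ?_
    rw [abs_mul, abs_mul, show |(1/2 : ℝ)| = 1/2 by norm_num]
    nlinarith [hm, h1, hv]
  -- construct the continuous linear derivative
  have hDex : ∀ x : X, ∃ D : X →L[ℝ] ℝ, ∀ u, D u = A x u := by
    intro x
    obtain ⟨δ, hδ, hb⟩ := Metric.continuousAt_iff.mp (hφ.continuousAt (x := x)) 1 one_pos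
    have hbd : ∀ u : X, |A x u| ≤ (1 + L / 2 * δ ^ 2) * (2 / δ) * ‖u‖ := by
      intro u
      rcases eq_or_ne u 0 with rfl | hu
      · simp [hzero]
      · have hun : 0 < ‖u‖ := norm_pos_iff.mpr hu
        set w := (δ / (2 * ‖u‖)) • u with hw
        have hwn : ‖w‖ = δ / 2 := by
          rw [hw, norm_smul, Real.norm_eq_abs, abs_of_pos (by positivity)]
          field_simp
        have h1 := hA x w 1 one_ne_zero
        rw [one_smul, one_mul] at h1
        have hdist : dist (x + w) x < δ := by
          rw [dist_eq_norm, add_sub_cancel_left, hwn]; linarith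
        have h2' : |φ (x + w) - φ x| < 1 := by
          have := hb hdist; rwa [Real.dist_eq] at this
        have hAw : |A x w| ≤ 1 + L / 2 * δ ^ 2 := by
          have htri : |A x w| ≤ |φ (x + w) - φ x| + |φ (x + w) - φ x - A x w| := by
            have hh := abs_sub (φ (x + w) - φ x) (φ (x + w) - φ x - A x w)
            rw [show (φ (x + w) - φ x) - (φ (x + w) - φ x - A x w) = A x w by ring] at hh
            exact hh
          have hq : L / 2 * ‖w‖ ^ 2 * 1 ^ 2 ≤ L / 2 * δ ^ 2 := by
            rw [hwn]; nlinarith [hδ]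
          linarith [h1, h2']
        have hAwu : |A x w| = δ / (2 * ‖u‖) * |A x u| := by
          rw [hw, hsmul, abs_mul, abs_of_pos (by positivity : (0:ℝ) < δ / (2 * ‖u‖))]
        rw [hAwu] at hAw
        rw [div_mul_eq_mul_div, div_le_iff₀ (by positivity : (0:ℝ) < 2 * ‖u‖)] at hAw
        rw [show (1 + L / 2 * δ ^ 2) * (2 / δ) * ‖u‖ = ((1 + L / 2 * δ ^ 2) * (2 * ‖u‖)) / δ by ring,
          le_div_iff₀ hδ]
        linarith [hAw]
    let lm : X →ₗ[ℝ] ℝ :=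
      { toFun := A x, map_add' := hadd x, map_smul' := fun c u => hsmul x c u }
    refine ⟨LinearMap.mkContinuous lm ((1 + L / 2 * δ ^ 2) * (2 / δ))
      (fun u => (Real.norm_eq_abs _).trans_le (hbd u)), fun u => rfl⟩
  choose D hD using hDex
  have hfd : ∀ x : X, HasFDerivAt φ (D x) x := by
    intro x
    rw [hasFDerivAt_iff_isLittleO_nhds_zero, Asymptotics.isLittleO_iff]
    intro c hc
    have hball := Metric.ball_mem_nhds (0 : X) (show (0:ℝ) < 2 * c / L by positivity)
    filter_upwards [hball] with u hu
    rw [Metric.mem_ball, dist_zero_right] at hu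
    rcases eq_or_ne u 0 with rfl | hu0
    · simp
    · have h1 := hA x u 1 one_ne_zero
      rw [one_smul, one_mul] at h1
      rw [Real.norm_eq_abs, hD x u]
      calc |φ (x + u) - φ x - A x u| ≤ L / 2 * ‖u‖ ^ 2 * 1 ^ 2 := h1
        _ ≤ c * ‖u‖ := by
          have h3 : L * ‖u‖ ≤ 2 * c := by
            have h4 := mul_le_mul_of_nonneg_left hu.le hL.le
            rw [show L * (2 * c / L) = 2 * c by field_simp] at h4
            exact h4
          nlinarith [norm_nonneg u]
  have hdiff : Differentiable ℝ φ := fun x => (hfd x).differentiableAt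
  refine ⟨hdiff, ?_⟩
  -- gradient identification
  have hginner : ∀ (x u : X), ⟪gradient φ x, u⟫ = A x u := by
    intro x u
    have hg : gradient φ x = (InnerProductSpace.toDual ℝ X).symm (D x) := by
      refine HasGradientAt.gradient ?_
      rw [hasGradientAt_iff_hasFDerivAt, LinearIsometryEquiv.apply_symm_apply]
      exact hfd x
    rw [hg, InnerProductSpace.toDual_symm_apply]
    exact hD x u
  -- quadratic two-sided expansion
  have E2 : ∀ x y : X, |φ y - φ x - ⟪gradient φ x, y - x⟫| ≤ L / 2 * ‖y - x‖ ^ 2 := by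
    intro x y
    rw [hginner]
    rcases eq_or_ne y x with rfl | hyx
    · simp [hzero]
    · have h1 := hA x (y - x) 1 one_ne_zero
      rw [one_smul, one_mul, add_sub_cancel] at h1
      calc |φ y - φ x - A x (y - x)| ≤ L / 2 * ‖y - x‖ ^ 2 * 1 ^ 2 := h1
        _ = L / 2 * ‖y - x‖ ^ 2 := by ring
  -- lower and upper bounds for g = φ + L/2 ‖·‖²
  have hnormsq : ∀ x y : X, ‖y‖ ^ 2 = ‖x‖ ^ 2 + 2 * ⟪x, y - x⟫ + ‖y - x‖ ^ 2 := by
    intro x y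
    have := norm_add_sq_real x (y - x)
    rwa [add_sub_cancel] at this
  have hGg : ∀ x y : X, ⟪gradient φ x + L • x, y - x⟫
      = ⟪gradient φ x, y - x⟫ + L * ⟪x, y - x⟫ := by
    intro x y; rw [inner_add_left, real_inner_smul_left]
  have glower : ∀ x y : X, φ x + L / 2 * ‖x‖ ^ 2 + ⟪gradient φ x + L • x, y - x⟫
      ≤ φ y + L / 2 * ‖y‖ ^ 2 := by
    intro x y
    have h1 := (abs_le.mp (E2 x y)).1
    have h2' : L / 2 * ‖y‖ ^ 2 = L / 2 * ‖x‖ ^ 2 + L * ⟪x, y - x⟫ + L / 2 * ‖y - x‖ ^ 2 := by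
      rw [hnormsq x y]; ring
    rw [hGg]
    linarith
  have gupper : ∀ x y : X, φ y + L / 2 * ‖y‖ ^ 2
      ≤ φ x + L / 2 * ‖x‖ ^ 2 + ⟪gradient φ x + L • x, y - x⟫ + L * ‖y - x‖ ^ 2 := by
    intro x y
    have h1 := (abs_le.mp (E2 x y)).2
    have h2' : L / 2 * ‖y‖ ^ 2 = L / 2 * ‖x‖ ^ 2 + L * ⟪x, y - x⟫ + L / 2 * ‖y - x‖ ^ 2 := by
      rw [hnormsq x y]; ring
    rw [hGg]
    linarith
  -- cocoercivity step
  have step : ∀ p q : X,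
      φ p + L / 2 * ‖p‖ ^ 2 + ⟪gradient φ p + L • p, q - p⟫
        + (4 * L)⁻¹ * ‖(gradient φ q + L • q) - (gradient φ p + L • p)‖ ^ 2
      ≤ φ q + L / 2 * ‖q‖ ^ 2 := by
    intro p q
    set v := (gradient φ q + L • q) - (gradient φ p + L • p) with hv
    set y := q - (2 * L)⁻¹ • v with hy
    have h1 := glower p y
    have h2' := gupper q y
    have e1 : ⟪gradient φ p + L • p, y - p⟫
        = ⟪gradient φ p + L • p, q - p⟫ - (2 * L)⁻¹ * ⟪gradient φ p + L • p, v⟫ := by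
      rw [show y - p = (q - p) - (2 * L)⁻¹ • v by rw [hy]; module, inner_sub_right,
        real_inner_smul_right]
    have e2 : ⟪gradient φ q + L • q, y - q⟫
        = -((2 * L)⁻¹ * ⟪gradient φ q + L • q, v⟫) := by
      rw [show y - q = -((2 * L)⁻¹ • v) by rw [hy]; module, inner_neg_right,
        real_inner_smul_right]
    have e3 : ‖y - q‖ ^ 2 = (2 * L)⁻¹ ^ 2 * ‖v‖ ^ 2 := by
      rw [show y - q = -((2 * L)⁻¹ • v) by rw [hy]; module, norm_neg, norm_smul,
        Real.norm_eq_abs, abs_of_pos (by positivity : (0:ℝ) < (2 * L)⁻¹), mul_pow]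
    have e4 : ⟪gradient φ q + L • q, v⟫ - ⟪gradient φ p + L • p, v⟫ = ‖v‖ ^ 2 := by
      rw [← inner_sub_left, ← hv, real_inner_self_eq_norm_sq]
    have e5 : (2 * L)⁻¹ * ‖v‖ ^ 2 - L * ((2 * L)⁻¹ ^ 2 * ‖v‖ ^ 2) = (4 * L)⁻¹ * ‖v‖ ^ 2 := by
      field_simp; ring
    rw [e1] at h1
    rw [e2, e3] at h2'
    have e4' : (2 * L)⁻¹ * ⟪gradient φ q + L • q, v⟫ - (2 * L)⁻¹ * ⟪gradient φ p + L • p, v⟫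
        = (2 * L)⁻¹ * ‖v‖ ^ 2 := by rw [← mul_sub, e4]
    linarith [h1, h2', e4', e5]
  -- monotonicity-type inequality
  have mono : ∀ p q : X,
      (2 * L)⁻¹ * ‖(gradient φ q + L • q) - (gradient φ p + L • p)‖ ^ 2
      ≤ ⟪(gradient φ q + L • q) - (gradient φ p + L • p), q - p⟫ := by
    intro p q
    have s1 := step p q
    have s2 := step q p
    have e6 : ⟪gradient φ q + L • q, p - q⟫ = -⟪gradient φ q + L • q, q - p⟫ := by
      rw [← inner_neg_right]; congr 1; abel
    have e7 : ‖(gradient φ p + L • p) - (gradient φ q + L • q)‖ ^ 2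
        = ‖(gradient φ q + L • q) - (gradient φ p + L • p)‖ ^ 2 := by rw [norm_sub_rev]
    have e8 : ⟪(gradient φ q + L • q) - (gradient φ p + L • p), q - p⟫
        = ⟪gradient φ q + L • q, q - p⟫ - ⟪gradient φ p + L • p, q - p⟫ := inner_sub_left _ _ _
    have hL4 : (2 * L)⁻¹ = 2 * (4 * L)⁻¹ := by field_simp; ring
    rw [e8, hL4]
    rw [e6, e7] at s2
    linarith [s1, s2]
  -- conclude
  intro a b
  have hm := mono b a
  have hv2 : (gradient φ a + L • a) - (gradient φ b + L • b)
      = (gradient φ a - gradient φ b) + L • (a - b) := by module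
  set m := gradient φ a - gradient φ b with hmm
  set d := a - b with hdd
  rw [hv2] at hm
  have hnorm : ‖m + L • d‖ ^ 2 = ‖m‖ ^ 2 + 2 * (L * ⟪m, d⟫) + L ^ 2 * ‖d‖ ^ 2 := by
    rw [norm_add_sq_real, real_inner_smul_right, norm_smul, Real.norm_eq_abs,
      abs_of_pos hL, mul_pow]
  have hip : ⟪m + L • d, d⟫ = ⟪m, d⟫ + L * ‖d‖ ^ 2 := by
    rw [inner_add_left, real_inner_smul_left, real_inner_self_eq_norm_sq]
  rw [hnorm, hip] at hm
  have h2L : (0:ℝ) < 2 * L := by positivity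
  have hm' := mul_le_mul_of_nonneg_left hm h2L.le
  rw [← mul_assoc, mul_inv_cancel₀ h2L.ne', one_mul] at hm'
  have h9 : ‖m‖ ^ 2 ≤ (L * ‖d‖) ^ 2 := by
    rw [mul_pow]; linarith [hm']
  have := Real.sqrt_le_sqrt h9
  rwa [Real.sqrt_sq (norm_nonneg m), Real.sqrt_sq (by positivity)] at this

end Key


/-- If `F : X → Y` (with `X` a real Hilbert space and `Y` a real Banach space) is continuous
and satisfies the Jensen-type inequality, then for every `y* ∈ Y*` with `‖y*‖ ≤ 1`, the slice
`φ_{y*} = y* ∘ F` is Fréchet differentiable and its gradient is `L`-Lipschitz. -/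
theorem slice_differentiable_of_jensen_inequality
    {X : Type*} [NormedAddCommGroup X] [InnerProductSpace ℝ X] [CompleteSpace X]
    {Y : Type*} [NormedAddCommGroup Y] [NormedSpace ℝ Y] [CompleteSpace Y]
    (F : X → Y) (hF : Continuous F) (L : ℝ) (hL : 0 < L)
    (hineq : ∀ (n : ℕ) (x : Fin n → X) (lam : Fin n → ℝ), (∀ i, 0 ≤ lam i) → ∑ i, lam i = 1 →
      ‖F (∑ i, lam i • x i) - ∑ i, lam i • F (x i)‖ ≤
        L / 2 * ∑ i, ∑ j, if i < j then lam i * lam j * ‖x i - x j‖ ^ 2 else 0) :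
    ∀ y' : Y →L[ℝ] ℝ, ‖y'‖ ≤ 1 →
      Differentiable ℝ (fun z => y' (F z)) ∧
        ∀ a b : X, ‖gradient (fun z => y' (F z)) a - gradient (fun z => y' (F z)) b‖ ≤
          L * ‖a - b‖ := by
  intro y' hy'
  apply slice_key (φ := fun z => y' (F z)) (y'.continuous.comp hF) hL
  intro a b l hl0 hl1
  have key := hineq 2 ![a, b] ![1 - l, l] (by
      intro i; fin_cases i
      · simpa using by linarith
      · simpa using hl0)
    (by simp [Fin.sum_univ_two])
  have e1 : ∑ i : Fin 2, (![1 - l, l]) i • (![a, b]) i = (1 - l) • a + l • b := by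
    simp [Fin.sum_univ_two]
  have e2 : ∑ i : Fin 2, (![1 - l, l]) i • F ((![a, b]) i) = (1 - l) • F a + l • F b := by
    simp [Fin.sum_univ_two]
  have e3 : (∑ i : Fin 2, ∑ j : Fin 2, if i < j then
      (![1 - l, l]) i * (![1 - l, l]) j * ‖(![a, b]) i - (![a, b]) j‖ ^ 2 else 0)
      = (1 - l) * l * ‖a - b‖ ^ 2 := by
    rw [Fin.sum_univ_two, Fin.sum_univ_two, Fin.sum_univ_two]
    norm_num [show ¬((0 : Fin 2) < 0) from by decide, show ((0 : Fin 2) < 1) from by decide,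
      show ¬((1 : Fin 2) < 0) from by decide, show ¬((1 : Fin 2) < 1) from by decide]
  rw [e1, e2, e3] at key
  have e4 : y' (F ((1 - l) • a + l • b)) - ((1 - l) * y' (F a) + l * y' (F b))
      = y' (F ((1 - l) • a + l • b) - ((1 - l) • F a + l • F b)) := by
    rw [map_sub, map_add, map_smul, map_smul, smul_eq_mul, smul_eq_mul]
  show |y' (F ((1 - l) • a + l • b)) - ((1 - l) * y' (F a) + l * y' (F b))|
      ≤ L / 2 * (l * (1 - l) * ‖a - b‖ ^ 2)
  rw [e4, ← Real.norm_eq_abs]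
  calc ‖y' (F ((1 - l) • a + l • b) - ((1 - l) • F a + l • F b))‖
      ≤ ‖y'‖ * ‖F ((1 - l) • a + l • b) - ((1 - l) • F a + l • F b)‖ := y'.le_opNorm _
    _ ≤ 1 * (L / 2 * ((1 - l) * l * ‖a - b‖ ^ 2)) := by
        apply mul_le_mul hy' key (norm_nonneg _) zero_le_one
    _ = L / 2 * (l * (1 - l) * ‖a - b‖ ^ 2) := by ring
end
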